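/- arXiv:2111.01962 — 5 statements merged into one kernel-verified Lean document; each statement's English description precedes it below -/
import Mathlib

section
/- Let Θ be an n×m phase matrix with m ≥ n, and assume that every (n−1)×m submatrix obtained from Θ by deleting one of its rows has phase rank n−1. Then rank_phase(Θ) = n if and only if for every y ∈ (S¹)^n (i.e., every vector of n complex numbers of modulus 1) there exists a column index j such that the family (y_1·Θ_{1j}, …, y_n·Θ_{nj}) is colopsided. -/
open Finset Set Matrix

/-- The phase rank of a complex matrix `Θ`: the minimum rank over all complex matrices
with nonzero entries whose entrywise phases agree with `Θ`. -/
noncomputable def phaseRank {n m : ℕ} (Θ : Matrix (Fin n) (Fin m) ℂ) : ℕ :=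
  sInf {r | ∃ M : Matrix (Fin n) (Fin m) ℂ,
    (∀ i j, M i j ≠ 0) ∧ (∀ i j, M i j / ‖M i j‖ = Θ i j) ∧ M.rank = r}

/-- A matrix of size `k × m` has rank less than `k` iff its rows admit a nontrivial
linear relation. -/
lemma phaseRankAux_rank_lt_iff {k m : ℕ} (M : Matrix (Fin k) (Fin m) ℂ) :
    M.rank < k ↔ ∃ c : Fin k → ℂ, c ≠ 0 ∧ ∀ j, ∑ i, c i * M i j = 0 := by
  rw [← Matrix.rank_transpose M]
  have hker : ∀ c : Fin k → ℂ, c ∈ LinearMap.ker (Mᵀ.mulVecLin) ↔ ∀ j, ∑ i, c i * M i j = 0 := by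
    intro c
    simp only [LinearMap.mem_ker, Matrix.mulVecLin_apply, funext_iff, Matrix.mulVec,
      dotProduct, Matrix.transpose_apply, Pi.zero_apply]
    constructor
    · intro h j; rw [← h j]; apply Finset.sum_congr rfl; intros; ring
    · intro h j; rw [← h j]; apply Finset.sum_congr rfl; intros; ring
  have hrn := LinearMap.finrank_range_add_finrank_ker (Mᵀ.mulVecLin)
  have hdom : Module.finrank ℂ (Fin k → ℂ) = k := by simp
  rw [hdom] at hrn
  have hrank : Mᵀ.rank = Module.finrank ℂ (LinearMap.range Mᵀ.mulVecLin) := rfl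
  constructor
  · intro h
    have hk : LinearMap.ker (Mᵀ.mulVecLin) ≠ ⊥ := by
      intro hb
      rw [hb] at hrn
      simp only [finrank_bot, add_zero] at hrn
      rw [hrank, hrn] at h
      exact lt_irrefl _ h
    obtain ⟨c, hc, hc0⟩ := Submodule.ne_bot_iff _ |>.mp hk
    exact ⟨c, hc0, (hker c).mp hc⟩
  · rintro ⟨c, hc0, hc⟩
    have hmem : c ∈ LinearMap.ker (Mᵀ.mulVecLin) := (hker c).mpr hc
    have hk : LinearMap.ker (Mᵀ.mulVecLin) ≠ ⊥ := by
      intro hb; rw [hb] at hmem; simp at hmem; exact hc0 hmem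
    have : 0 < Module.finrank ℂ (LinearMap.ker (Mᵀ.mulVecLin)) := by
      rcases Nat.eq_zero_or_pos (Module.finrank ℂ (LinearMap.ker (Mᵀ.mulVecLin))) with h | h
      · exact absurd (Submodule.finrank_eq_zero.mp h) hk
      · exact h
    rw [hrank]
    omega

/-- Membership in the affine span of a family coincides with membership in its linear
span, provided `0` lies in the affine span. -/
lemma phaseRankAux_direction_eq_span {k : ℕ} (z : Fin k → ℂ)
    (h0 : (0:ℂ) ∈ affineSpan ℝ (Set.range z)) :
    ∀ w : ℂ, w ∈ affineSpan ℝ (Set.range z) ↔ w ∈ Submodule.span ℝ (Set.range z) := by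
  have hdir : (affineSpan ℝ (Set.range z)).direction = Submodule.span ℝ (Set.range z) := by
    apply le_antisymm
    · rw [direction_affineSpan, vectorSpan_def]
      apply Submodule.span_le.mpr
      rintro v ⟨a, ha, b, hb, rfl⟩
      exact Submodule.sub_mem _ (Submodule.subset_span ha) (Submodule.subset_span hb)
    · apply Submodule.span_le.mpr
      rintro v ⟨i, rfl⟩
      have hm : z i ∈ affineSpan ℝ (Set.range z) := subset_affineSpan ℝ _ (mem_range_self i)
      have := AffineSubspace.vsub_mem_direction hm h0
      simpa using this
  intro w
  rw [← AffineSubspace.vsub_right_mem_direction_iff_mem h0 w, hdir]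
  simp

/-- If `0` is a positive combination (with total weight 1) of a finite family of points`,
then `0` lies in the intrinsic interior of their convex hull. -/
lemma phaseRankAux_mem_intrinsicInterior' {k : ℕ} (z : Fin k → ℂ) (t : Fin k → ℝ)
    (ht : ∀ i, 0 < t i) (hsum : ∑ i, t i = 1) (hzero : ∑ i, t i • z i = 0) :
    (0:ℂ) ∈ intrinsicInterior ℝ (convexHull ℝ (Set.range z)) := by
  have hk : k ≠ 0 := by rintro rfl; simp at hsum
  have hne : Nonempty (Fin k) := ⟨⟨0, Nat.pos_of_ne_zero hk⟩⟩
  set S := convexHull ℝ (Set.range z) with hS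
  have h0S : (0:ℂ) ∈ S :=
    mem_convexHull_of_exists_fintype t z (fun i => (ht i).le) hsum (fun i => mem_range_self i)
      hzero
  have h0affS : (0:ℂ) ∈ affineSpan ℝ S := mem_affineSpan ℝ h0S
  have h0aff : (0:ℂ) ∈ affineSpan ℝ (Set.range z) := by
    rwa [hS, affineSpan_convexHull] at h0affS
  set L := Submodule.span ℝ (Set.range z) with hL
  let T₀ : (Fin k → ℝ) →ₗ[ℝ] ℂ :=
    { toFun := fun s => ∑ i, s i • z i
      map_add' := by intro a b; simp [add_smul, Finset.sum_add_distrib]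
      map_smul' := by intro r a; simp [mul_smul, Finset.smul_sum] }
  have hT₀apply : ∀ s, T₀ s = ∑ i, s i • z i := fun s => rfl
  have hT₀mem : ∀ s, T₀ s ∈ L := fun s => by
    rw [hT₀apply]
    exact Submodule.sum_mem _ fun i _ =>
      Submodule.smul_mem _ _ (Submodule.subset_span (Set.mem_range_self i))
  let T : (Fin k → ℝ) →ₗ[ℝ] L := T₀.codRestrict L hT₀mem
  have hsurj : Function.Surjective T := by
    rintro ⟨w, hw⟩
    obtain ⟨c, hc⟩ := (Submodule.mem_span_range_iff_exists_fun ℝ).mp hw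
    exact ⟨c, Subtype.ext hc⟩
  let Tc : (Fin k → ℝ) →L[ℝ] L := LinearMap.toContinuousLinearMap T
  set tmin := Finset.univ.inf' (univ_nonempty) t with htmin
  have htminle : ∀ i, tmin ≤ t i := fun i => Finset.inf'_le t (mem_univ i)
  have htminpos : 0 < tmin := by
    obtain ⟨i, _, hi⟩ := Finset.exists_mem_eq_inf' (univ_nonempty) t
    rw [htmin, hi]; exact ht i
  set ρ := tmin / (2 * (k + 1)) with hρ
  have hρpos : 0 < ρ := by positivity
  have htle1 : ∀ i, t i ≤ 1 := by
    intro i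
    rw [← hsum]
    exact Finset.single_le_sum (fun j _ => (ht j).le) (mem_univ i)
  have hkey : ∀ s ∈ Metric.ball t ρ, T₀ s ∈ S := by
    intro s hs
    set σ := ∑ i, s i with hσ
    set a : Fin k → ℝ := fun i => s i + (1 - σ) * t i with ha
    have hdist : ∀ i, |s i - t i| < ρ := by
      intro i
      have h1 : dist (s i) (t i) ≤ dist s t := dist_le_pi_dist s t i
      have h2 : dist s t < ρ := Metric.mem_ball.mp hs
      rw [Real.dist_eq] at h1
      linarith
    have hσ1 : |σ - 1| ≤ k * ρ := by
      have h1 : σ - 1 = ∑ i, (s i - t i) := by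
        rw [Finset.sum_sub_distrib, hσ, hsum]
      rw [h1]
      calc |∑ i, (s i - t i)| ≤ ∑ i, |s i - t i| := Finset.abs_sum_le_sum_abs _ _
        _ ≤ ∑ _i : Fin k, ρ := Finset.sum_le_sum (fun i _ => (hdist i).le)
        _ = k * ρ := by simp [mul_comm]
    have hapos : ∀ i, 0 < a i := by
      intro i
      have h1 : t i - ρ < s i := by
        have := abs_lt.mp (hdist i)
        linarith [this.1]
      have h2 : (1 - σ) * t i ≥ -(k * ρ) := by
        have habs : |(1 - σ) * t i| ≤ (k * ρ) * 1 := by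
          rw [abs_mul, abs_sub_comm]
          apply mul_le_mul hσ1 (by rw [abs_of_pos (ht i)]; exact htle1 i)
            (abs_nonneg _) (by positivity)
        have := abs_le.mp (by linarith [habs] : |(1 - σ) * t i| ≤ k * ρ)
        linarith [this.1]
      have h3 : (k + 1 : ℝ) * ρ = tmin / 2 := by
        rw [hρ]; field_simp
      have h4 : tmin / 2 ≤ t i / 2 := by linarith [htminle i]
      show 0 < s i + (1 - σ) * t i
      linarith [ht i, h1, h2, h3, h4]
    have hsa : ∑ i, a i = 1 := by
      rw [ha]
      simp only
      rw [Finset.sum_add_distrib, ← Finset.mul_sum, hsum, ← hσ]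
      ring
    have hza : ∑ i, a i • z i = T₀ s := by
      rw [ha]
      simp only [add_smul, Finset.sum_add_distrib, mul_smul]
      rw [← Finset.smul_sum, hzero, smul_zero, add_zero]
      rfl
    exact mem_convexHull_of_exists_fintype a z (fun i => (hapos i).le) hsa
      (fun i => mem_range_self i) hza
  have h0L : (0:ℂ) ∈ L := by rw [← hzero]; exact hT₀mem t
  have hopen : IsOpen (T '' Metric.ball t ρ) := by
    have := ContinuousLinearMap.isOpenMap Tc hsurj
    exact this _ Metric.isOpen_ball
  have hmem0 : (⟨0, h0L⟩ : L) ∈ T '' Metric.ball t ρ :=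
    ⟨t, Metric.mem_ball_self hρpos, Subtype.ext hzero⟩
  obtain ⟨ε, hεpos, hball⟩ := Metric.isOpen_iff.mp hopen _ hmem0
  have hclaim : ∀ w : ℂ, w ∈ L → ‖w‖ < ε → w ∈ S := by
    intro w hw hwn
    have : (⟨w, hw⟩ : L) ∈ Metric.ball (⟨0, h0L⟩ : L) ε := by
      rw [Metric.mem_ball, Subtype.dist_eq]
      simpa [dist_eq_norm] using hwn
    obtain ⟨s, hs, hTs⟩ := hball this
    have : T₀ s = w := congrArg Subtype.val hTs
    rw [← this]
    exact hkey s hs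
  refine ⟨⟨0, h0affS⟩, ?_, rfl⟩
  rw [mem_interior]
  refine ⟨Subtype.val ⁻¹' Metric.ball (0:ℂ) ε, ?_, ?_, ?_⟩
  · intro p hp
    have hiff : ∀ x : ℂ, x ∈ affineSpan ℝ S ↔ x ∈ affineSpan ℝ (Set.range z) := fun x => by
      rw [hS, affineSpan_convexHull]
    have hp2 : (p : ℂ) ∈ affineSpan ℝ (Set.range z) := (hiff _).mp p.2
    have hpL : (p : ℂ) ∈ L := (phaseRankAux_direction_eq_span z h0aff (p : ℂ)).mp hp2
    have hpn : ‖(p : ℂ)‖ < ε := by simpa [mem_ball_zero_iff] using hp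
    exact hclaim _ hpL hpn
  · exact Metric.isOpen_ball.preimage continuous_subtype_val
  · simp [hεpos]

/-- If `0` is a positive combination of a finite nonempty family of points, then `0` lies
in the intrinsic interior of their convex hull. -/
lemma phaseRankAux_mem_intrinsicInterior {k : ℕ} (z : Fin k → ℂ) (t : Fin k → ℝ)
    (hne : Nonempty (Fin k)) (ht : ∀ i, 0 < t i) (hzero : ∑ i, t i • z i = 0) :
    (0:ℂ) ∈ intrinsicInterior ℝ (convexHull ℝ (Set.range z)) := by
  have hσ : 0 < ∑ i, t i := Finset.sum_pos (fun i _ => ht i) Finset.univ_nonempty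
  apply phaseRankAux_mem_intrinsicInterior' z (fun i => t i / ∑ j, t j)
  · intro i; exact div_pos (ht i) hσ
  · rw [← Finset.sum_div]
    field_simp
  · have : ∀ i : Fin k, (t i / ∑ j, t j) • z i = (∑ j, t j)⁻¹ • (t i • z i) := by
      intro i
      rw [div_eq_inv_mul, mul_smul]
    rw [Finset.sum_congr rfl (fun i _ => this i), ← Finset.smul_sum, hzero, smul_zero]

/-- Converse: if `0` lies in the intrinsic interior of the convex hull of a finite family,
then `0` is a positive combination of the family. -/
lemma phaseRankAux_of_mem_intrinsicInterior {k : ℕ} (z : Fin k → ℂ)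
    (h : (0:ℂ) ∈ intrinsicInterior ℝ (convexHull ℝ (Set.range z))) :
    ∃ t : Fin k → ℝ, (∀ i, 0 < t i) ∧ ∑ i, t i • z i = 0 := by
  set S := convexHull ℝ (Set.range z) with hS
  obtain ⟨x, hxint, hx0⟩ := h
  have h0S : (0:ℂ) ∈ S := by
    have := interior_subset hxint
    rwa [← hx0]
  have hk : k ≠ 0 := by
    rintro rfl
    rw [hS] at h0S
    simp [Set.range_eq_empty] at h0S
  have hkpos : 0 < k := Nat.pos_of_ne_zero hk
  have hne : Nonempty (Fin k) := ⟨⟨0, hkpos⟩⟩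
  set c : ℂ := ∑ i, ((k : ℝ)⁻¹) • z i with hc
  have hcS : c ∈ S := by
    apply mem_convexHull_of_exists_fintype (fun _ => (k:ℝ)⁻¹) z
    · intro i; positivity
    · rw [Finset.sum_const, card_univ, Fintype.card_fin, nsmul_eq_mul]
      field_simp
    · exact fun i => mem_range_self i
    · rfl
  have hcaff : c ∈ affineSpan ℝ S := mem_affineSpan ℝ hcS
  have h0aff : (0:ℂ) ∈ affineSpan ℝ S := mem_affineSpan ℝ h0S
  have hpath : ∀ δ : ℝ, (-δ) • c ∈ affineSpan ℝ S := by
    intro δ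
    have := AffineSubspace.smul_vsub_vadd_mem (affineSpan ℝ S) (-δ) hcaff h0aff h0aff
    simpa using this
  set F : ℝ → ↥(affineSpan ℝ S) := fun δ => ⟨(-δ) • c, hpath δ⟩ with hF
  have hFcont : Continuous F := by
    apply Continuous.subtype_mk
    exact (continuous_id.neg).smul continuous_const
  have hF0 : F 0 = x := by
    apply Subtype.ext
    simp [hF, hx0]
  have hopen : IsOpen (F ⁻¹' interior ((Subtype.val) ⁻¹' S : Set (affineSpan ℝ S))) :=
    isOpen_interior.preimage hFcont
  have h0mem : (0:ℝ) ∈ F ⁻¹' interior ((Subtype.val) ⁻¹' S : Set (affineSpan ℝ S)) := by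
    simp only [Set.mem_preimage, hF0]
    exact hxint
  obtain ⟨r, hrpos, hball⟩ := Metric.isOpen_iff.mp hopen 0 h0mem
  set δ := r / 2 with hδ
  have hδpos : 0 < δ := by positivity
  have hδmem : F δ ∈ interior ((Subtype.val) ⁻¹' S : Set (affineSpan ℝ S)) := by
    apply hball
    rw [Metric.mem_ball, dist_zero_right, Real.norm_eq_abs, abs_of_pos hδpos]
    linarith
  have hqS : (-δ) • c ∈ S := by
    have := interior_subset hδmem
    simpa [hF] using this
  rw [hS, convexHull_range_eq_exists_affineCombination] at hqS
  obtain ⟨s, w, hw0, hw1, hwc⟩ := hqS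
  rw [Finset.affineCombination_eq_linear_combination s z w hw1] at hwc
  set μ : Fin k → ℝ := fun i => if i ∈ s then w i else 0 with hμ
  have hμ0 : ∀ i, 0 ≤ μ i := by
    intro i
    by_cases h : i ∈ s
    · simp only [hμ, h, if_true]; exact hw0 i h
    · simp [hμ, h]
  have hμ1 : ∑ i, μ i = 1 := by
    simp only [hμ]
    rw [Finset.sum_ite_mem, Finset.univ_inter, hw1]
  have hμz : ∑ i, μ i • z i = (-δ) • c := by
    rw [← hwc]
    calc ∑ i, μ i • z i = ∑ i, (if i ∈ s then w i • z i else 0) := by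
          apply Finset.sum_congr rfl
          intro i _
          by_cases h : i ∈ s <;> simp [hμ, h]
      _ = ∑ i ∈ s, w i • z i := by rw [Finset.sum_ite_mem, Finset.univ_inter]
  refine ⟨fun i => (μ i + δ * (k:ℝ)⁻¹) / (1 + δ), ?_, ?_⟩
  · intro i
    have := hμ0 i
    have : (0:ℝ) < δ * (k:ℝ)⁻¹ := by positivity
    have h1δ : (0:ℝ) < 1 + δ := by linarith
    positivity
  · have expand : ∀ i : Fin k, ((μ i + δ * (k:ℝ)⁻¹) / (1 + δ)) • z i
        = (1 + δ)⁻¹ • (μ i • z i) + (1 + δ)⁻¹ • (δ • (((k:ℝ)⁻¹) • z i)) := by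
      intro i
      simp only [smul_smul]
      rw [← add_smul]
      congr 1
      rw [div_eq_inv_mul]
      ring
    rw [Finset.sum_congr rfl (fun i _ => expand i)]
    rw [Finset.sum_add_distrib, ← Finset.smul_sum, ← Finset.smul_sum, hμz, ← Finset.smul_sum, ← hc]
    rw [← smul_add]
    rw [neg_smul, neg_add_cancel, smul_zero]

/-- Let `Θ` be an `(n+1) × m` phase matrix with `m ≥ n+1` such that each submatrix obtained
by deleting one row has maximal phase rank `n`. Then `Θ` has maximal phase rank `n+1` iff
every unimodular scaling of its rows makes some column colopsided (i.e., `0` not in the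
relative interior of the convex hull of the scaled column entries). -/
theorem phaseRank_eq_max_iff_every_scaling_has_colopsided_column {n m : ℕ}
    (hnm : n + 1 ≤ m)
    (Θ : Matrix (Fin (n + 1)) (Fin m) ℂ) (hphase : ∀ i j, ‖Θ i j‖ = 1)
    (hrows : ∀ r : Fin (n + 1), phaseRank (Θ.submatrix r.succAbove id) = n) :
    phaseRank Θ = n + 1 ↔
      ∀ y : Fin (n + 1) → ℂ, (∀ i, ‖y i‖ = 1) →
        ∃ j, (0 : ℂ) ∉ intrinsicInterior ℝ
          (convexHull ℝ (Set.range fun i => y i * Θ i j)) := by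
  constructor
  · -- if the phase rank is maximal, every scaling has a colopsided column
    intro hrank y hy
    by_contra hcon
    push_neg at hcon
    choose t ht hzero using fun j => phaseRankAux_of_mem_intrinsicInterior
      (fun i => y i * Θ i j) (hcon j)
    set M : Matrix (Fin (n + 1)) (Fin m) ℂ := fun i j => ((t j i : ℝ) : ℂ) * Θ i j with hM
    have hΘ0 : ∀ i j, Θ i j ≠ 0 := by
      intro i j h
      have := hphase i j
      rw [h] at this
      simp at this
    have hM0 : ∀ i j, M i j ≠ 0 := by
      intro i j
      apply mul_ne_zero _ (hΘ0 i j)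
      exact_mod_cast ne_of_gt (ht j i)
    have habs : ∀ i j, ‖M i j‖ = t j i := by
      intro i j
      rw [hM]
      simp only [norm_mul, Complex.norm_real, Real.norm_eq_abs, hphase i j, mul_one]
      exact abs_of_pos (ht j i)
    have hMphase : ∀ i j, M i j / ‖M i j‖ = Θ i j := by
      intro i j
      rw [habs i j]
      show (((t j i : ℝ) : ℂ) * Θ i j) / ((t j i : ℝ) : ℂ) = Θ i j
      rw [mul_comm, mul_div_assoc, div_self (by exact_mod_cast ne_of_gt (ht j i)), mul_one]
    have hy0 : y ≠ 0 := by
      intro h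
      have := hy 0
      rw [h] at this
      simp at this
    have hyc : ∀ j, ∑ i, y i * M i j = 0 := by
      intro j
      have h0 := hzero j
      rw [← h0]
      apply Finset.sum_congr rfl
      intro i _
      rw [Complex.real_smul, hM]
      ring
    have hMrank : M.rank < n + 1 := (phaseRankAux_rank_lt_iff M).mpr ⟨y, hy0, hyc⟩
    have hle : phaseRank Θ ≤ M.rank := by
      unfold phaseRank
      exact Nat.sInf_le ⟨M, hM0, hMphase, rfl⟩
    omega
  · -- if every scaling has a colopsided column, the phase rank is maximal
    intro hcol
    have hub : ∀ r ∈ {r | ∃ M : Matrix (Fin (n + 1)) (Fin m) ℂ,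
        (∀ i j, M i j ≠ 0) ∧ (∀ i j, M i j / ‖M i j‖ = Θ i j) ∧ M.rank = r},
        n + 1 ≤ r := by
      rintro r ⟨M, hM0, hMphase, rfl⟩
      by_contra hlt
      push_neg at hlt
      have hlt' : M.rank < n + 1 := by
        have := Matrix.rank_le_height M
        omega
      obtain ⟨c, hc0, hc⟩ := (phaseRankAux_rank_lt_iff M).mp hlt'
      -- every coefficient of the linear relation is nonzero
      have hci : ∀ i, c i ≠ 0 := by
        intro r0 hr0
        have hmemsub : (M.submatrix r0.succAbove id).rank ∈
            {r | ∃ M' : Matrix (Fin n) (Fin m) ℂ, (∀ i j, M' i j ≠ 0) ∧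
              (∀ i j, M' i j / ‖M' i j‖ = (Θ.submatrix r0.succAbove id) i j) ∧
              M'.rank = r} :=
          ⟨M.submatrix r0.succAbove id, fun i j => hM0 _ _, fun i j => hMphase _ _, rfl⟩
        have hge : phaseRank (Θ.submatrix r0.succAbove id) ≤
            (M.submatrix r0.succAbove id).rank := Nat.sInf_le hmemsub
        rw [hrows r0] at hge
        have hlt2 : (M.submatrix r0.succAbove id).rank < n := by
          apply (phaseRankAux_rank_lt_iff _).mpr
          obtain ⟨i0, hi0⟩ : ∃ i, c i ≠ 0 := by
            by_contra hall
            push_neg at hall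
            exact hc0 (funext hall)
          have hner : i0 ≠ r0 := by rintro rfl; exact hi0 hr0
          obtain ⟨i0', hi0'⟩ := Fin.exists_succAbove_eq hner
          refine ⟨c ∘ r0.succAbove, ?_, ?_⟩
          · intro h
            apply hi0
            rw [← hi0']
            exact congrFun h i0'
          · intro j
            have h2 := hc j
            rw [Fin.sum_univ_succAbove (fun i => c i * M i j) r0, hr0, zero_mul, zero_add] at h2
            simpa [Matrix.submatrix_apply, Function.comp] using h2
        omega
      -- scale the rows by the phases of c
      set y : Fin (n + 1) → ℂ := fun i => c i / (‖c i‖ : ℂ) with hy'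
      have hy : ∀ i, ‖y i‖ = 1 := by
        intro i
        have hca : ‖c i‖ ≠ 0 := norm_ne_zero_iff.mpr (hci i)
        rw [hy']
        simp only
        rw [norm_div, Complex.norm_real, norm_norm, div_self hca]
      obtain ⟨j, hj⟩ := hcol y hy
      apply hj
      apply phaseRankAux_mem_intrinsicInterior _
        (fun i => ‖c i‖ * ‖M i j‖) inferInstance
      · intro i
        exact mul_pos (norm_pos_iff.mpr (hci i)) (norm_pos_iff.mpr (hM0 i j))
      · rw [← hc j]
        apply Finset.sum_congr rfl
        intro i _
        have hca : (‖c i‖ : ℂ) ≠ 0 := by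
          exact_mod_cast norm_ne_zero_iff.mpr (hci i)
        have hMa : (‖M i j‖ : ℂ) ≠ 0 := by
          exact_mod_cast norm_ne_zero_iff.mpr (hM0 i j)
        have h1 : (‖c i‖ : ℂ) * y i = c i := by
          rw [hy']
          simp only
          rw [mul_comm, div_mul_cancel₀ _ hca]
        have h2 : (‖M i j‖ : ℂ) * Θ i j = M i j := by
          rw [← hMphase i j, mul_comm, div_mul_cancel₀ _ hMa]
        rw [Complex.real_smul]
        push_cast
        calc (‖c i‖ : ℂ) * (‖M i j‖ : ℂ) * (y i * Θ i j)
            = ((‖c i‖ : ℂ) * y i) * ((‖M i j‖ : ℂ) * Θ i j) := by ring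
          _ = c i * M i j := by rw [h1, h2]
    -- `Θ` itself realizes the bound
    have hΘ0 : ∀ i j, Θ i j ≠ 0 := by
      intro i j h
      have := hphase i j
      rw [h] at this
      simp at this
    have hΘmem : Θ.rank ∈ {r | ∃ M : Matrix (Fin (n + 1)) (Fin m) ℂ,
        (∀ i j, M i j ≠ 0) ∧ (∀ i j, M i j / ‖M i j‖ = Θ i j) ∧ M.rank = r} :=
      ⟨Θ, hΘ0, fun i j => by rw [hphase i j]; simp, rfl⟩
    have h1 : Θ.rank ≤ n + 1 := Matrix.rank_le_height Θ
    have h2 : n + 1 ≤ Θ.rank := hub _ hΘmem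
    have h3 : Θ.rank = n + 1 := le_antisymm h1 h2
    unfold phaseRank
    apply le_antisymm
    · exact le_trans (Nat.sInf_le hΘmem) (le_of_eq h3)
    · exact le_csInf ⟨_, hΘmem⟩ hub
end

section
/- If n ≤ m and m < 2^{n−1}/n, then every n×m phase matrix Θ satisfies rank_phase(Θ) < n; that is, for every such Θ there exists a complex n×m matrix M of rank less than n with all entries nonzero and M_ij/|M_ij| = Θ_ij for all i,j. -/
open scoped Real Classical

section Aux

lemma unit_eq_exp {z : ℂ} (hz : ‖z‖ = 1) :
    z = Complex.exp (z.arg * Complex.I) := by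
  conv_lhs => rw [← Complex.norm_mul_exp_arg_mul_I z]
  rw [hz, Complex.ofReal_one, one_mul]

lemma exp_mul_conj_exp (a b : ℝ) :
    Complex.exp (a * Complex.I) * (starRingEnd ℂ) (Complex.exp (b * Complex.I))
      = Complex.exp ((a - b : ℝ) * Complex.I) := by
  rw [← Complex.exp_conj, ← Complex.exp_add]
  congr 1
  simp [Complex.ofReal_sub]
  ring

def SW {n : ℕ} (θ : Fin n → ℝ) (p : Fin n → Bool) (ψ : ℝ) : Prop :=
  ∀ i, if p i then 0 < Real.cos (ψ - θ i) else Real.cos (ψ - θ i) < 0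

lemma card_bad_le {n : ℕ} (hn : 0 < n) (θ : Fin n → ℝ)
    (hθ : ∀ i k, i ≠ k → ∀ ℓ : ℤ, θ i - θ k ≠ ℓ * π) :
    (Finset.univ.filter fun p : Fin n → Bool => ∃ ψ, SW θ p ψ).card ≤ 2 * n := by
  classical
  have hπ : (0:ℝ) < π := Real.pi_pos
  haveI : NeZero n := ⟨hn.ne'⟩
  set S := Finset.univ.filter fun p : Fin n → Bool => ∃ ψ, SW θ p ψ with hS
  set ψf : (Fin n → Bool) → ℝ := fun p => if h : ∃ ψ, SW θ p ψ then h.choose else 0 with hψf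
  have hSW : ∀ p ∈ S, SW θ p (ψf p) := by
    intro p hp
    rw [hS, Finset.mem_filter] at hp
    show SW θ p (if h : ∃ ψ, SW θ p ψ then h.choose else 0)
    rw [dif_pos hp.2]
    exact hp.2.choose_spec
  set mf : (Fin n → Bool) → Fin n → ℤ := fun p i => toIocDiv hπ 0 (θ i + π/2 - ψf p) with hmf
  set δf : (Fin n → Bool) → Fin n → ℝ := fun p i => toIocMod hπ 0 (θ i + π/2 - ψf p) with hδf
  have hδx : ∀ p i, θ i + π/2 - ψf p = δf p i + mf p i * π := by
    intro p i
    show _ = toIocMod hπ 0 (θ i + π/2 - ψf p) + toIocDiv hπ 0 (θ i + π/2 - ψf p) * π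
    rw [toIocMod, zsmul_eq_mul]
    ring
  have hδIoc : ∀ p i, 0 < δf p i ∧ δf p i ≤ π := by
    intro p i
    have h := toIocMod_mem_Ioc hπ 0 (θ i + π/2 - ψf p)
    rw [Set.mem_Ioc, zero_add] at h
    exact h
  have hkex : ∀ p : Fin n → Bool, ∃ b ∈ Finset.univ, ∀ b' ∈ Finset.univ, δf p b ≤ δf p b' :=
    fun p => Finset.exists_min_image Finset.univ (δf p) Finset.univ_nonempty
  set kf : (Fin n → Bool) → Fin n := fun p => (hkex p).choose with hkf
  have hkmin : ∀ p i, δf p (kf p) ≤ δf p i := by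
    intro p i
    exact (hkex p).choose_spec.2 i (Finset.mem_univ i)
  have hcossin : ∀ p i, Real.cos (ψf p - θ i) = (-1) ^ (mf p i) * Real.sin (δf p i) := by
    intro p i
    have h1 : ψf p - θ i = π/2 - (θ i + π/2 - ψf p) := by ring
    rw [h1, Real.cos_pi_div_two_sub, hδx p i, Real.sin_add_int_mul_pi]
  have hsinδ : ∀ p ∈ S, ∀ i, 0 < Real.sin (δf p i) ∧ δf p i < π := by
    intro p hp i
    have hsw := hSW p hp i
    have hne : Real.cos (ψf p - θ i) ≠ 0 := by
      by_cases hpi : p i = true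
      · rw [if_pos hpi] at hsw; exact ne_of_gt hsw
      · rw [if_neg hpi] at hsw; exact ne_of_lt hsw
    rw [hcossin p i] at hne
    have hsne : Real.sin (δf p i) ≠ 0 := by
      intro h0
      rw [h0, mul_zero] at hne
      exact hne rfl
    have hlt : δf p i < π := by
      rcases lt_or_eq_of_le (hδIoc p i).2 with h | h
      · exact h
      · exact absurd (h ▸ Real.sin_pi) hsne
    exact ⟨Real.sin_pos_of_pos_of_lt_pi (hδIoc p i).1 hlt, hlt⟩
  have hA : ∀ p ∈ S, ∀ i, (p i = true ↔ Even (mf p i)) := by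
    intro p hp i
    have hsw := hSW p hp i
    have hsp := (hsinδ p hp i).1
    rw [hcossin p i] at hsw
    rcases Int.even_or_odd (mf p i) with he | ho
    · rw [he.neg_one_zpow, one_mul] at hsw
      by_cases hpi : p i = true
      · simp [hpi, he]
      · rw [if_neg hpi] at hsw
        linarith
    · rw [Odd.neg_one_zpow ho, neg_one_mul] at hsw
      by_cases hpi : p i = true
      · rw [if_pos hpi] at hsw
        linarith
      · simp [hpi, Int.not_even_iff_odd.mpr ho]
  have hB : ∀ p ∈ S, ∀ i, i ≠ kf p → δf p (kf p) < δf p i := by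
    intro p hp i hik
    rcases lt_or_eq_of_le (hkmin p i) with h | h
    · exact h
    · exfalso
      apply hθ i (kf p) hik (mf p i - mf p (kf p))
      have h1 := hδx p i
      have h2 := hδx p (kf p)
      push_cast
      rw [sub_mul]
      linarith
  have hC : ∀ p ∈ S, ∀ i, i ≠ kf p →
      (p i = true ↔ 0 < Real.cos ((θ (kf p) + π/2 - mf p (kf p) * π) - θ i)) := by
    intro p hp i hik
    have hw : (θ (kf p) + π/2 - mf p (kf p) * π) - θ i
        = π/2 - ((δf p i - δf p (kf p)) + mf p i * π) := by
      have h1 := hδx p i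
      have h2 := hδx p (kf p)
      linarith
    rw [hw, Real.cos_pi_div_two_sub, Real.sin_add_int_mul_pi]
    have hsd : 0 < Real.sin (δf p i - δf p (kf p)) := by
      apply Real.sin_pos_of_pos_of_lt_pi
      · linarith [hB p hp i hik]
      · linarith [(hsinδ p hp i).2, (hδIoc p (kf p)).1]
    rw [hA p hp i]
    rcases Int.even_or_odd (mf p i) with he | ho
    · rw [he.neg_one_zpow, one_mul]
      simp [he, hsd]
    · rw [Odd.neg_one_zpow ho, neg_one_mul]
      constructor
      · intro h'; exact absurd h' (Int.not_even_iff_odd.mpr ho)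
      · intro h'; linarith
  have hinj : Set.InjOn (fun p => (kf p, p (kf p))) S := by
    intro p hp q hq heq
    have hk : kf p = kf q := (Prod.ext_iff.mp heq).1
    have hpk : p (kf p) = q (kf q) := (Prod.ext_iff.mp heq).2
    rw [← hk] at hpk
    have hiff : Even (mf p (kf p)) ↔ Even (mf q (kf p)) := by
      rw [← hA p hp (kf p)]
      rw [hpk, hA q hq (kf p)]
    obtain ⟨ℓ, hℓ⟩ := Int.even_sub.mpr hiff
    have hz : mf p (kf p) - mf q (kf p) = 2 * ℓ := by omega
    have hzr : ((mf p (kf p) : ℝ)) - mf q (kf p) = 2 * (ℓ:ℝ) := by exact_mod_cast hz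
    funext i
    by_cases hik : i = kf p
    · rw [hik]; exact hpk
    · have hik' : i ≠ kf q := by rw [← hk]; exact hik
      have hCp := hC p hp i hik
      have hCq := hC q hq i hik'
      rw [← hk] at hCq
      have harg : (θ (kf p) + π/2 - mf p (kf p) * π) - θ i
          = ((θ (kf p) + π/2 - mf q (kf p) * π) - θ i) + ((-ℓ : ℤ) : ℝ) * (2 * π) := by
        push_cast
        linear_combination (-π) * hzr
      have hcoseq : Real.cos ((θ (kf p) + π/2 - mf p (kf p) * π) - θ i)
          = Real.cos ((θ (kf p) + π/2 - mf q (kf p) * π) - θ i) := by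
        rw [harg, Real.cos_add_int_mul_two_pi]
      rw [Bool.eq_iff_iff, hCp, hCq, hcoseq]
  have hle := Finset.card_le_card_of_injOn (fun p => (kf p, p (kf p)))
      (fun p _ => Finset.mem_univ _) hinj
  calc S.card ≤ (Finset.univ : Finset (Fin n × Bool)).card := hle
    _ = 2 * n := by
        simp [Finset.card_univ, mul_comm]

lemma exists_strict_of_weak {n : ℕ} (hn : 2 ≤ n) (v : Fin n → ℂ)
    (hnz : ∀ i, v i ≠ 0)
    (hnpar : ∀ i k, i ≠ k → (v i * (starRingEnd ℂ) (v k)).im ≠ 0)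
    {u : ℂ} (hu : u ≠ 0) (hw : ∀ i, 0 ≤ (v i * (starRingEnd ℂ) u).re) :
    ∃ u' : ℂ, ∀ i, 0 < (v i * (starRingEnd ℂ) u').re := by
  classical
  by_cases hstrict : ∀ i, 0 < (v i * (starRingEnd ℂ) u).re
  · exact ⟨u, hstrict⟩
  push_neg at hstrict
  obtain ⟨k, hk⟩ := hstrict
  have hk0 : (v k * (starRingEnd ℂ) u).re = 0 := le_antisymm hk (hw k)
  have hpos : ∀ i, i ≠ k → 0 < (v i * (starRingEnd ℂ) u).re := by
    intro i hik
    rcases lt_or_eq_of_le (hw i) with h | h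
    · exact h
    exfalso
    apply hnpar i k hik
    have ha : (v i * (starRingEnd ℂ) u).re = 0 := h.symm
    have h1 : ((v i * (starRingEnd ℂ) u) * (starRingEnd ℂ) (v k * (starRingEnd ℂ) u)).im = 0 := by
      rw [Complex.mul_im, ha, Complex.conj_re, hk0]
      ring
    have h2 : (v i * (starRingEnd ℂ) u) * (starRingEnd ℂ) (v k * (starRingEnd ℂ) u)
        = (v i * (starRingEnd ℂ) (v k)) * (u * (starRingEnd ℂ) u) := by
      rw [map_mul, Complex.conj_conj]; ring
    rw [h2, Complex.mul_conj, Complex.mul_im] at h1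
    simp only [Complex.ofReal_re, Complex.ofReal_im, mul_zero, zero_add] at h1
    rcases mul_eq_zero.mp h1 with h' | h'
    · exact h'
    · exact absurd h' (fun h'' => hu (Complex.normSq_eq_zero.mp h'))
  -- v k * conj u is purely imaginary and nonzero
  have hbne : (v k * (starRingEnd ℂ) u).im ≠ 0 := by
    intro h0
    have : v k * (starRingEnd ℂ) u = 0 := Complex.ext hk0 h0
    rcases mul_eq_zero.mp this with h' | h'
    · exact hnz k h'
    · exact hu (by simpa using congrArg (starRingEnd ℂ) h')
  -- the minimum margin
  have hNne : (Finset.univ.erase k).Nonempty := by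
    rw [← Finset.card_pos, Finset.card_erase_of_mem (Finset.mem_univ k), Finset.card_univ,
      Fintype.card_fin]
    omega
  set η : ℝ := (Finset.univ.erase k).inf' hNne
      (fun i => (v i * (starRingEnd ℂ) u).re / (1 + |(v i * (starRingEnd ℂ) u).im|)) with hη
  have hηpos : 0 < η := by
    rw [hη, Finset.lt_inf'_iff]
    intro i hi
    have hik : i ≠ k := Finset.ne_of_mem_erase hi
    exact div_pos (hpos i hik) (by positivity)
  set σ : ℝ := if 0 < (v k * (starRingEnd ℂ) u).im then 1 else -1 with hσ
  set τ : ℝ := σ * η with hτ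
  have hτk : 0 < τ * (v k * (starRingEnd ℂ) u).im := by
    rcases lt_or_gt_of_ne hbne with hneg | hposk
    · have : σ = -1 := by rw [hσ, if_neg (by exact not_lt.mpr hneg.le)]
      rw [hτ, this]
      nlinarith
    · have : σ = 1 := by rw [hσ, if_pos hposk]
      rw [hτ, this]
      nlinarith
  have hτabs : |τ| = η := by
    rw [hτ, abs_mul, hσ]
    rcases ite_eq_or_eq (0 < (v k * (starRingEnd ℂ) u).im) (1:ℝ) (-1) with h' | h' <;>
      rw [h'] <;> simp [abs_of_pos hηpos]
  refine ⟨u + (τ:ℂ) * (Complex.I * u), ?_⟩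
  have hcalc : ∀ z : ℂ, (z * (starRingEnd ℂ) (u + (τ:ℂ) * (Complex.I * u))).re
      = (z * (starRingEnd ℂ) u).re + τ * (z * (starRingEnd ℂ) u).im := by
    intro z
    have hconj : (starRingEnd ℂ) (u + (τ:ℂ) * (Complex.I * u))
        = (starRingEnd ℂ) u - (τ:ℂ) * (Complex.I * (starRingEnd ℂ) u) := by
      simp only [map_add, map_mul, Complex.conj_I, Complex.conj_ofReal]
      ring
    rw [hconj]
    have hexp : z * ((starRingEnd ℂ) u - (τ:ℂ) * (Complex.I * (starRingEnd ℂ) u))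
        = (z * (starRingEnd ℂ) u) - (τ:ℂ) * (Complex.I * (z * (starRingEnd ℂ) u)) := by
      ring
    rw [hexp]
    simp only [Complex.sub_re, Complex.mul_re, Complex.mul_im, Complex.ofReal_re,
      Complex.ofReal_im, Complex.I_re, Complex.I_im]
    ring
  intro i
  rw [hcalc]
  by_cases hik : i = k
  · rw [hik, hk0, zero_add]
    exact hτk
  · have hAi : 0 < (v i * (starRingEnd ℂ) u).re := hpos i hik
    have hile : η ≤ (v i * (starRingEnd ℂ) u).re / (1 + |(v i * (starRingEnd ℂ) u).im|) :=
      Finset.inf'_le _ (Finset.mem_erase.mpr ⟨hik, Finset.mem_univ i⟩)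
    have h1 : η * (1 + |(v i * (starRingEnd ℂ) u).im|) ≤ (v i * (starRingEnd ℂ) u).re := by
      rw [← le_div_iff₀ (by positivity)]
      exact hile
    have h2 : |τ * (v i * (starRingEnd ℂ) u).im| ≤ η * |(v i * (starRingEnd ℂ) u).im| := by
      rw [abs_mul, hτabs]
    have h3 : -(η * |(v i * (starRingEnd ℂ) u).im|) ≤ τ * (v i * (starRingEnd ℂ) u).im := by
      have := neg_abs_le (τ * (v i * (starRingEnd ℂ) u).im)
      linarith
    linarith

lemma exists_weak_or_combo {n : ℕ} (hn : 0 < n) (v : Fin n → ℂ) :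
    (∃ r : Fin n → ℝ, (∀ i, 0 < r i) ∧ ∑ i, (r i : ℂ) * v i = 0)
    ∨ ∃ u : ℂ, u ≠ 0 ∧ ∀ i, 0 ≤ (v i * (starRingEnd ℂ) u).re := by
  classical
  have hi0 : Nonempty (Fin n) := ⟨⟨0, hn⟩⟩
  let L : (Fin n → ℝ) →ₗ[ℝ] ℂ :=
    { toFun := fun w => ∑ i, w i • v i
      map_add' := fun x y => by simp [add_smul, Finset.sum_add_distrib]
      map_smul' := fun a x => by simp [Finset.smul_sum, smul_smul, mul_assoc] }
  set K : Set ℂ := L '' stdSimplex ℝ (Fin n) with hK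
  have hKconv : Convex ℝ K := (convex_stdSimplex ℝ (Fin n)).linear_image L
  have hKcomp : IsCompact K :=
    (isCompact_stdSimplex ℝ (Fin n)).image L.continuous_of_finiteDimensional
  have hvK : ∀ i, v i ∈ K := by
    intro i
    refine ⟨(Pi.single i 1 : Fin n → ℝ), single_mem_stdSimplex ℝ i, ?_⟩
    have hLs : L (Pi.single i 1) = ∑ j, (Pi.single i 1 : Fin n → ℝ) j • v j := rfl
    rw [hLs, Finset.sum_eq_single i]
    · simp
    · intro b _ hb
      simp [Pi.single_apply, hb]
    · simp
  by_cases hint : (0:ℂ) ∈ interior K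
  · left
    obtain ⟨ε, hε, hball⟩ := Metric.isOpen_iff.mp isOpen_interior 0 hint
    set s : ℂ := ∑ i, v i with hs
    by_cases hs0 : s = 0
    · exact ⟨fun _ => 1, fun _ => one_pos, by
        rw [← hs0]
        simp [hs]⟩
    · set cst : ℝ := (ε / 2) / ‖s‖ with hcst
      have habs : 0 < ‖s‖ := by
        simpa [norm_pos_iff] using hs0
      have hcstpos : 0 < cst := div_pos (half_pos hε) habs
      have hy : ((-cst : ℝ) • s : ℂ) ∈ K := by
        apply interior_subset
        apply hball
        rw [Metric.mem_ball, dist_zero_right, norm_smul]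
        simp only [norm_neg, Real.norm_eq_abs, abs_of_pos hcstpos]
        rw [hcst]
        rw [div_mul_cancel₀ _ habs.ne']
        linarith
      obtain ⟨w, hwmem, hweq⟩ := hy
      refine ⟨fun i => w i + cst, fun i => by dsimp only; have := hwmem.1 i; linarith, ?_⟩
      have hsplit : (∑ i, ((w i + cst : ℝ) : ℂ) * v i)
          = (∑ i, w i • v i) + (cst : ℝ) • s := by
        rw [hs, Finset.smul_sum, ← Finset.sum_add_distrib]
        congr 1
        funext i
        push_cast
        rw [add_mul, Complex.real_smul, Complex.real_smul]
      rw [hsplit]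
      have : (∑ i, w i • v i) = (-cst : ℝ) • s := hweq
      rw [this, ← add_smul]
      simp
  · right
    have h0cl : (0:ℂ) ∈ closure Kᶜ := by
      rw [closure_compl]
      exact hint
    obtain ⟨z, hzK, hzlim⟩ := mem_closure_iff_seq_limit.mp h0cl
    have hsep : ∀ t : ℕ, ∃ w : ℂ, ‖w‖ = 1 ∧
        ∀ a ∈ K, (a * (starRingEnd ℂ) w).re < (z t * (starRingEnd ℂ) w).re := by
      intro t
      obtain ⟨f, b, hfK, hfz⟩ :=
        geometric_hahn_banach_closed_point hKconv hKcomp.isClosed (hzK t)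
      set uf : ℂ := Complex.mk (f 1) (f Complex.I) with huf
      have hfeval : ∀ x : ℂ, f x = (x * (starRingEnd ℂ) uf).re := by
        intro x
        have hx : x = x.re • (1:ℂ) + x.im • Complex.I := by
          simp [Complex.real_smul, Complex.re_add_im]
        calc f x = f (x.re • (1:ℂ) + x.im • Complex.I) := by rw [← hx]
          _ = x.re * f 1 + x.im * f Complex.I := by
              rw [map_add, map_smul, map_smul]; simp
          _ = (x * (starRingEnd ℂ) uf).re := by
              rw [Complex.mul_re, Complex.conj_re, Complex.conj_im, huf]
              simp
              try ring
      have hufne : uf ≠ 0 := by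
        intro h0
        have h1 := hfK (v ⟨0, hn⟩) (hvK _)
        rw [hfeval, h0] at h1
        rw [hfeval, h0] at hfz
        simp at h1 hfz
        linarith
      have habsuf : 0 < ‖uf‖ := by
        simpa [norm_pos_iff] using hufne
      refine ⟨((‖uf‖)⁻¹ : ℝ) • uf, ?_, ?_⟩
      · rw [Complex.real_smul, norm_mul, Complex.norm_real, Real.norm_eq_abs,
          abs_of_pos (inv_pos.mpr habsuf)]
        exact inv_mul_cancel₀ habsuf.ne'
      · intro a ha
        have h1 : f a < b := hfK a ha
        have h2 : b < f (z t) := hfz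
        have h3 : (a * (starRingEnd ℂ) uf).re < (z t * (starRingEnd ℂ) uf).re := by
          rw [← hfeval, ← hfeval]; linarith
        have hrw : ∀ x : ℂ, (x * (starRingEnd ℂ) (((‖uf‖)⁻¹ : ℝ) • uf)).re
            = (‖uf‖)⁻¹ * (x * (starRingEnd ℂ) uf).re := by
          intro x
          rw [Complex.real_smul, map_mul, Complex.conj_ofReal]
          rw [show x * ((((‖uf‖)⁻¹ : ℝ) : ℂ) * (starRingEnd ℂ) uf)
              = (((‖uf‖)⁻¹ : ℝ) : ℂ) * (x * (starRingEnd ℂ) uf) by ring]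
          rw [Complex.re_ofReal_mul]
        rw [hrw, hrw]
        have hpos : 0 < (‖uf‖)⁻¹ := inv_pos.mpr habsuf
        exact (mul_lt_mul_iff_right₀ hpos).mpr h3
    choose w hw1 hw2 using hsep
    have hwsphere : ∀ t, w t ∈ Metric.sphere (0:ℂ) 1 := by
      intro t
      rw [mem_sphere_zero_iff_norm]
      exact hw1 t
    obtain ⟨wL, hwLmem, φ, hφ, hconv⟩ :=
      (isCompact_sphere (0:ℂ) 1).tendsto_subseq hwsphere
    have hwLne : wL ≠ 0 := by
      intro h0
      rw [h0] at hwLmem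
      simp at hwLmem
    refine ⟨-wL, neg_ne_zero.mpr hwLne, ?_⟩
    intro i
    have hle0 : (v i * (starRingEnd ℂ) wL).re ≤ 0 := by
      have hterm : ∀ t, (v i * (starRingEnd ℂ) (w (φ t))).re ≤ ‖z (φ t)‖ := by
        intro t
        have h1 := hw2 (φ t) (v i) (hvK i)
        have h2 : (z (φ t) * (starRingEnd ℂ) (w (φ t))).re
            ≤ ‖z (φ t)‖ := by
          calc (z (φ t) * (starRingEnd ℂ) (w (φ t))).re
              ≤ ‖z (φ t) * (starRingEnd ℂ) (w (φ t))‖ := Complex.re_le_norm _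
            _ = ‖z (φ t)‖ := by
                rw [norm_mul, Complex.norm_conj, hw1, mul_one]
        linarith
      have hlhs : Filter.Tendsto (fun t => (v i * (starRingEnd ℂ) (w (φ t))).re)
          Filter.atTop (nhds ((v i * (starRingEnd ℂ) wL).re)) := by
        have hc : Continuous fun x : ℂ => (v i * (starRingEnd ℂ) x).re := by
          fun_prop
        exact (hc.tendsto wL).comp hconv
      have hrhs : Filter.Tendsto (fun t => ‖z (φ t)‖)
          Filter.atTop (nhds 0) := by
        have : Filter.Tendsto (fun t => ‖z t‖) Filter.atTop (nhds 0) := by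
          have := (continuous_norm.tendsto 0).comp hzlim
          simpa [Function.comp_def] using this
        exact this.comp (hφ.tendsto_atTop)
      exact le_of_tendsto_of_tendsto' hlhs hrhs hterm
    rw [map_neg, mul_neg, Complex.neg_re]
    linarith

lemma countable_im_exp_zero {z : ℂ} (hz : z ≠ 0) :
    {t : ℝ | (Complex.exp (t * Complex.I) * z).im = 0}.Countable := by
  have habs : ‖z‖ ≠ 0 := by simpa using hz
  apply Set.Countable.mono _ (Set.countable_range fun ℓ : ℤ => (ℓ : ℝ) * π - z.arg)
  intro t ht
  simp only [Set.mem_setOf_eq] at ht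
  have hzeq : z = (‖z‖ : ℂ) * Complex.exp (z.arg * Complex.I) :=
    (Complex.norm_mul_exp_arg_mul_I z).symm
  have hkey : (Complex.exp (t * Complex.I) * z).im
      = ‖z‖ * Real.sin (t + z.arg) := by
    have hstep : Complex.exp (↑t * Complex.I) * z
        = (‖z‖ : ℂ) * Complex.exp ((↑(t + z.arg) : ℝ) * Complex.I) := by
      conv_lhs => rw [hzeq]
      push_cast
      rw [add_mul, Complex.exp_add]
      ring
    rw [hstep, Complex.mul_im, Complex.exp_ofReal_mul_I_im]
    simp
  rw [hkey] at ht
  have hsin : Real.sin (t + z.arg) = 0 := by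
    rcases mul_eq_zero.mp ht with h | h
    · exact absurd h habs
    · exact h
  obtain ⟨ℓ, hℓ⟩ := Real.sin_eq_zero_iff.mp hsin
  exact ⟨ℓ, by show (ℓ:ℝ) * π - z.arg = t; linarith⟩

lemma exists_avoid {n : ℕ} (B : Fin n → Fin n → Set ℝ) (hB : ∀ i k, (B i k).Countable) :
    ∃ φ : Fin n → ℝ, ∀ i k, i ≠ k → φ i - φ k ∉ B i k := by
  induction n with
  | zero => exact ⟨Fin.elim0, fun i => i.elim0⟩
  | succ n ih =>
    obtain ⟨φ', hφ'⟩ := ih (fun i k => B i.castSucc k.castSucc) (fun i k => hB _ _)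
    set bad : Set ℝ := (⋃ k : Fin n, ((fun t => t - φ' k) ⁻¹' B (Fin.last n) k.castSucc)) ∪
        (⋃ k : Fin n, ((fun t => φ' k - t) ⁻¹' B k.castSucc (Fin.last n))) with hbad
    have hc : bad.Countable := by
      apply Set.Countable.union <;> apply Set.countable_iUnion <;> intro k
      · exact (hB _ _).preimage (fun a b hab => by simpa using hab)
      · exact (hB _ _).preimage (fun a b hab => by
          have : φ' k - a = φ' k - b := hab
          linarith)
    obtain ⟨t, ht⟩ := (Set.ne_univ_iff_exists_notMem bad).mp
      (fun h => Set.not_countable_univ (h ▸ hc))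
    refine ⟨Fin.snoc φ' t, ?_⟩
    intro i k hik
    induction i using Fin.lastCases with
    | last =>
      induction k using Fin.lastCases with
      | last => exact absurd rfl hik
      | cast k =>
        simp only [Fin.snoc_last, Fin.snoc_castSucc]
        intro hmem
        exact ht (Set.mem_union_left _ (Set.mem_iUnion.mpr ⟨k, hmem⟩))
    | cast i =>
      induction k using Fin.lastCases with
      | last =>
        simp only [Fin.snoc_last, Fin.snoc_castSucc]
        intro hmem
        exact ht (Set.mem_union_right _ (Set.mem_iUnion.mpr ⟨i, hmem⟩))
      | cast k =>
        simp only [Fin.snoc_castSucc]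
        exact hφ' i k (fun h => hik (by rw [h]))

lemma rank_lt_of_left_kernel {n m : ℕ} (hn : 0 < n) (M : Matrix (Fin n) (Fin m) ℂ)
    (c : Fin n → ℂ) (hc : ∃ i, c i ≠ 0) (h : ∀ j, ∑ i, c i * M i j = 0) :
    M.rank < n := by
  classical
  let f : (Fin n → ℂ) →ₗ[ℂ] ℂ :=
    { toFun := fun x => ∑ i, c i * x i
      map_add' := fun x y => by simp [mul_add, Finset.sum_add_distrib]
      map_smul' := fun a x => by simp [Finset.mul_sum, mul_left_comm] }
  have hrange : LinearMap.range M.mulVecLin ≤ LinearMap.ker f := by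
    rintro x ⟨y, rfl⟩
    have : f (M.mulVec y) = 0 := by
      show (∑ i, c i * ∑ j, M i j * y j) = 0
      calc (∑ i, c i * ∑ j, M i j * y j) = ∑ i, ∑ j, c i * M i j * y j := by
            simp [Finset.mul_sum, mul_assoc]
        _ = ∑ j, ∑ i, c i * M i j * y j := Finset.sum_comm
        _ = ∑ j, (∑ i, c i * M i j) * y j := by simp [Finset.sum_mul]
        _ = 0 := by simp [h]
    simpa [Matrix.mulVecLin_apply, Matrix.mulVec, dotProduct] using this
  have hker : LinearMap.ker f ≠ ⊤ := by
    obtain ⟨i, hi⟩ := hc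
    intro hT
    have h0 : f (Pi.single i 1) = 0 := by
      have : Pi.single i 1 ∈ LinearMap.ker f := hT ▸ Submodule.mem_top
      simpa using this
    have heval : (∑ k, c k * (Pi.single i 1 : Fin n → ℂ) k) = c i := by
      simp [Pi.single_apply]
    rw [show f (Pi.single i 1) = ∑ k, c k * (Pi.single i 1 : Fin n → ℂ) k from rfl, heval] at h0
    exact hi h0
  have h1 : M.rank ≤ Module.finrank ℂ (LinearMap.ker f) := by
    rw [Matrix.rank]
    exact Submodule.finrank_mono hrange
  have h2 : Module.finrank ℂ (LinearMap.ker f) < Module.finrank ℂ (Fin n → ℂ) :=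
    Submodule.finrank_lt hker
  have h3 : Module.finrank ℂ (Fin n → ℂ) = n := by simp
  omega


lemma column_combo {n : ℕ} (hn : 2 ≤ n) (v : Fin n → ℂ)
    (hnz : ∀ i, v i ≠ 0)
    (hnpar : ∀ i k, i ≠ k → (v i * (starRingEnd ℂ) (v k)).im ≠ 0)
    (hno : ¬ ∃ u' : ℂ, ∀ i, 0 < (v i * (starRingEnd ℂ) u').re) :
    ∃ r : Fin n → ℝ, (∀ i, 0 < r i) ∧ ∑ i, (r i : ℂ) * v i = 0 := by
  rcases exists_weak_or_combo (by omega) v with h | ⟨u, hu, hw⟩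
  · exact h
  · exact absurd (exists_strict_of_weak hn v hnz hnpar hu hw) hno

end Aux

/-- If `n ≤ m < 2^{n-1}/n`, then every `n × m` phase matrix has nonmaximal phase rank:
there is a complex matrix of rank less than `n` with all entries nonzero and the same
entrywise phases. -/
theorem phaseRank_lt_of_lt_two_pow {n m : ℕ} (hnm : n ≤ m)
    (hm : (m : ℝ) < 2 ^ (n - 1) / n)
    (Θ : Matrix (Fin n) (Fin m) ℂ) (hphase : ∀ i j, ‖Θ i j‖ = 1) :
    phaseRank Θ < n ∧
      ∃ M : Matrix (Fin n) (Fin m) ℂ, M.rank < n ∧ (∀ i j, M i j ≠ 0) ∧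
        (∀ i j, M i j / ‖M i j‖ = Θ i j) := by
  classical
  -- basic size facts
  have hn2 : 2 ≤ n := by
    rcases Nat.lt_or_ge n 2 with h | h
    · exfalso
      interval_cases n
      · rw [Nat.cast_zero, div_zero] at hm
        exact (Nat.cast_nonneg m).not_gt hm
      · norm_num at hm
        omega
    · exact h
  have hn0 : 0 < n := by omega
  have hnm2 : m * n < 2 ^ (n - 1) := by
    have h1 : (m : ℝ) * n < 2 ^ (n - 1) :=
      (lt_div_iff₀ (by exact_mod_cast hn0)).mp hm
    have h2 : ((m * n : ℕ) : ℝ) < ((2 ^ (n - 1) : ℕ) : ℝ) := by push_cast; exact h1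
    exact Nat.cast_lt.mp h2
  have hcount : m * (2 * n) < 2 ^ n := by
    have h2n : 2 ^ n = 2 * 2 ^ (n - 1) := by
      rw [← pow_succ']
      congr 1
      omega
    have hmm : m * (2 * n) = 2 * (m * n) := by ring
    omega
  -- generic phases
  set Bset : Fin n → Fin n → Set ℝ := fun i k =>
    ⋃ j : Fin m, {t : ℝ | (Complex.exp (t * Complex.I) * (Θ i j * (starRingEnd ℂ) (Θ k j))).im = 0}
    with hBset
  have hBc : ∀ i k, (Bset i k).Countable := by
    intro i k
    apply Set.countable_iUnion
    intro j
    apply countable_im_exp_zero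
    intro h0
    have : ‖Θ i j * (starRingEnd ℂ) (Θ k j)‖ = 1 := by
      rw [norm_mul, Complex.norm_conj, hphase, hphase, mul_one]
    rw [h0] at this
    simp at this
  obtain ⟨φ, hφ⟩ := exists_avoid Bset hBc
  set c : Fin n → ℂ := fun i => Complex.exp (φ i * Complex.I) with hc
  have hcabs : ∀ i, ‖c i‖ = 1 := fun i => Complex.norm_exp_ofReal_mul_I (φ i)
  set w : Fin m → Fin n → ℂ := fun j i => c i * Θ i j with hw
  have hwabs : ∀ j i, ‖w j i‖ = 1 := by
    intro j i
    show ‖c i * Θ i j‖ = 1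
    rw [norm_mul, hcabs, hphase, mul_one]
  have hwnpar : ∀ j, ∀ i k, i ≠ k → (w j i * (starRingEnd ℂ) (w j k)).im ≠ 0 := by
    intro j i k hik h0
    apply hφ i k hik
    refine Set.mem_iUnion.mpr ⟨j, ?_⟩
    show (Complex.exp (((φ i - φ k : ℝ)) * Complex.I) * (Θ i j * (starRingEnd ℂ) (Θ k j))).im = 0
    rw [← exp_mul_conj_exp]
    rw [show Complex.exp (↑(φ i) * Complex.I) * (starRingEnd ℂ) (Complex.exp (↑(φ k) * Complex.I))
        * (Θ i j * (starRingEnd ℂ) (Θ k j))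
        = (Complex.exp (↑(φ i) * Complex.I) * Θ i j) *
          ((starRingEnd ℂ) (Complex.exp (↑(φ k) * Complex.I)) * (starRingEnd ℂ) (Θ k j)) from by
      ring]
    rw [← map_mul]
    exact h0
  -- the angles of each column
  set θc : Fin m → Fin n → ℝ := fun j i => (w j i).arg with hθcdef
  have hθc : ∀ j, ∀ i k, i ≠ k → ∀ ℓ : ℤ, θc j i - θc j k ≠ ℓ * π := by
    intro j i k hik ℓ heq
    apply hwnpar j i k hik
    rw [unit_eq_exp (hwabs j i), unit_eq_exp (hwabs j k), exp_mul_conj_exp]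
    show (Complex.exp (((θc j i - θc j k : ℝ)) * Complex.I)).im = 0
    rw [heq, Complex.exp_ofReal_mul_I_im]
    exact Real.sin_int_mul_pi ℓ
  -- bad pattern sets
  set Bad : Fin m → Finset (Fin n → Bool) := fun j =>
    Finset.univ.filter fun p => ∃ ψ, SW (θc j) p ψ with hBad
  have hBadcard : ∀ j, (Bad j).card ≤ 2 * n := fun j => card_bad_le hn0 (θc j) (hθc j)
  -- a good pattern exists
  have hex : ∃ p : Fin n → Bool, ∀ j, p ∉ Bad j := by
    by_contra hno
    push_neg at hno
    have hsub : (Finset.univ : Finset (Fin n → Bool)) ⊆ Finset.univ.biUnion Bad := by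
      intro p _
      obtain ⟨j, hj⟩ := hno p
      exact Finset.mem_biUnion.mpr ⟨j, Finset.mem_univ j, hj⟩
    have hcard1 : 2 ^ n ≤ (Finset.univ.biUnion Bad).card := by
      calc 2 ^ n = (Finset.univ : Finset (Fin n → Bool)).card := by simp
        _ ≤ _ := Finset.card_le_card hsub
    have hcard2 : (Finset.univ.biUnion Bad).card ≤ ∑ j, (Bad j).card :=
      Finset.card_biUnion_le
    have hcard3 : ∑ j, (Bad j).card ≤ m * (2 * n) := by
      calc ∑ j, (Bad j).card ≤ ∑ _j : Fin m, 2 * n :=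
            Finset.sum_le_sum (fun j _ => hBadcard j)
        _ = m * (2 * n) := by simp [Finset.sum_const, mul_comm]
    omega
  obtain ⟨p, hgood⟩ := hex
  set ε : Fin n → ℝ := fun i => if p i then 1 else -1 with hε
  have hεne : ∀ i, ε i ≠ 0 := by
    intro i
    rw [hε]
    dsimp only
    split <;> norm_num
  set vv : Fin m → Fin n → ℂ := fun j i => (ε i : ℂ) * w j i with hvv
  have hvvnz : ∀ j i, vv j i ≠ 0 := by
    intro j i
    apply mul_ne_zero
    · exact_mod_cast hεne i
    · intro h0
      have := hwabs j i
      rw [h0] at this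
      simp at this
  have hnostrict : ∀ j, ¬ ∃ u : ℂ, ∀ i, 0 < (vv j i * (starRingEnd ℂ) u).re := by
    rintro j ⟨u, hu⟩
    apply hgood j
    have hune : u ≠ 0 := by
      intro h0
      have := hu ⟨0, hn0⟩
      rw [h0] at this
      simp at this
    have habsu : 0 < ‖u‖ := by simpa [norm_pos_iff] using hune
    have hident : ∀ i : Fin n, (w j i * (starRingEnd ℂ) u).re
        = ‖u‖ * Real.cos (u.arg - θc j i) := by
      intro i
      conv_lhs => rw [unit_eq_exp (hwabs j i)]
      conv_lhs => rw [← Complex.norm_mul_exp_arg_mul_I u]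
      rw [map_mul, Complex.conj_ofReal]
      rw [show Complex.exp (↑(w j i).arg * Complex.I) *
          ((↑(‖u‖) : ℂ) * (starRingEnd ℂ) (Complex.exp (↑u.arg * Complex.I)))
          = (↑(‖u‖) : ℂ) * (Complex.exp (↑(w j i).arg * Complex.I) *
            (starRingEnd ℂ) (Complex.exp (↑u.arg * Complex.I))) from by ring]
      rw [exp_mul_conj_exp, Complex.re_ofReal_mul, Complex.exp_ofReal_mul_I_re]
      rw [← Real.cos_neg]
      show ‖u‖ * Real.cos (-((w j i).arg - u.arg)) = _
      rw [neg_sub]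
    rw [hBad]
    refine Finset.mem_filter.mpr ⟨Finset.mem_univ _, u.arg, ?_⟩
    intro i
    have h1 := hu i
    have h2 : (vv j i * (starRingEnd ℂ) u).re
        = ε i * ((w j i * (starRingEnd ℂ) u).re) := by
      show (((ε i : ℂ) * w j i) * (starRingEnd ℂ) u).re = _
      rw [mul_assoc, Complex.re_ofReal_mul]
    rw [h2, hident i] at h1
    by_cases hpi : p i = true
    · rw [if_pos hpi]
      have hεi : ε i = 1 := by rw [hε]; simp [hpi]
      rw [hεi, one_mul] at h1
      nlinarith
    · rw [if_neg hpi]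
      have hεi : ε i = -1 := by rw [hε]; simp [hpi]
      rw [hεi] at h1
      nlinarith
  have hcol : ∀ j, ∃ r : Fin n → ℝ, (∀ i, 0 < r i) ∧ ∑ i, (r i : ℂ) * vv j i = 0 := by
    intro j
    apply column_combo hn2 (vv j) (hvvnz j) _ (hnostrict j)
    intro i k hik
    have hexp : vv j i * (starRingEnd ℂ) (vv j k)
        = ((ε i * ε k : ℝ) : ℂ) * (w j i * (starRingEnd ℂ) (w j k)) := by
      show ((ε i : ℂ) * w j i) * (starRingEnd ℂ) ((ε k : ℂ) * w j k) = _
      rw [map_mul, Complex.conj_ofReal]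
      push_cast
      ring
    rw [hexp, Complex.im_ofReal_mul]
    apply mul_ne_zero
    · exact mul_ne_zero (hεne i) (hεne k)
    · exact hwnpar j i k hik
  choose r hrpos hrsum using hcol
  set M : Matrix (Fin n) (Fin m) ℂ :=
    Matrix.of fun i j => ((r j i : ℝ) : ℂ) * Θ i j with hM
  have hMnz : ∀ i j, M i j ≠ 0 := by
    intro i j
    apply mul_ne_zero
    · exact_mod_cast (hrpos j i).ne'
    · intro h0
      have := hphase i j
      rw [h0] at this
      simp at this
  have hMabs : ∀ i j, ‖M i j‖ = r j i := by
    intro i j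
    show ‖((r j i : ℝ) : ℂ) * Θ i j‖ = r j i
    rw [norm_mul, Complex.norm_real, Real.norm_eq_abs, hphase, mul_one, abs_of_pos (hrpos j i)]
  have hMphase : ∀ i j, M i j / ‖M i j‖ = Θ i j := by
    intro i j
    rw [hMabs]
    show ((r j i : ℝ) : ℂ) * Θ i j / ((r j i : ℝ) : ℂ) = Θ i j
    rw [mul_comm, mul_div_assoc, div_self (by exact_mod_cast (hrpos j i).ne'), mul_one]
  have hMrank : M.rank < n := by
    apply rank_lt_of_left_kernel hn0 M (fun i => (ε i : ℂ) * c i)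
    · refine ⟨⟨0, hn0⟩, ?_⟩
      apply mul_ne_zero
      · exact_mod_cast hεne _
      · exact Complex.exp_ne_zero _
    · intro j
      rw [← hrsum j]
      apply Finset.sum_congr rfl
      intro i _
      show ((ε i : ℂ) * c i) * (((r j i : ℝ) : ℂ) * Θ i j)
          = ((r j i : ℝ) : ℂ) * ((ε i : ℂ) * (c i * Θ i j))
      ring
  constructor
  · exact lt_of_le_of_lt (Nat.sInf_le ⟨M, hMnz, hMphase, rfl⟩) hMrank
  · exact ⟨M, hMrank, hMnz, hMphase⟩
end

section
/- For every n ≥ 7 and every n×n phase matrix Θ, rank_phase(Θ) < n; equivalently, for every n×n phase matrix with n ≥ 7 there exists a singular complex n×n matrix with all entries nonzero whose entrywise phases equal Θ. -/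
noncomputable section
namespace PhaseRankAux
open Real MeasureTheory Set

/-- unit complex number at angle `x` -/
def ee (x : ℝ) : ℂ := Complex.exp (x * Complex.I)

lemma ee_add (x y : ℝ) : ee (x + y) = ee x * ee y := by
  rw [ee, ee, ee, ← Complex.exp_add]
  push_cast
  ring_nf

lemma ee_ne_zero (x : ℝ) : ee x ≠ 0 := Complex.exp_ne_zero _

lemma ee_re (x : ℝ) : (ee x).re = Real.cos x := Complex.exp_ofReal_mul_I_re x

lemma ee_im (x : ℝ) : (ee x).im = Real.sin x := Complex.exp_ofReal_mul_I_im x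

lemma ee_zero : ee 0 = 1 := by simp [ee]

lemma ee_pi : ee π = -1 := by
  rw [ee]; exact_mod_cast Complex.exp_pi_mul_I

lemma ee_add_int_mul_two_pi (x : ℝ) (k : ℤ) : ee (x + k * (2 * π)) = ee x := by
  have h1 : ee ((k : ℝ) * (2 * π)) = 1 := by
    rw [ee]
    have : (((k : ℝ) * (2 * π) : ℝ) : ℂ) * Complex.I = (k : ℂ) * (2 * π * Complex.I) := by
      push_cast; ring
    rw [this, Complex.exp_int_mul_two_pi_mul_I]
  rw [ee_add, h1, mul_one]

lemma sin_neg_of_gt_pi {x : ℝ} (h1 : π < x) (h2 : x < 2 * π) : Real.sin x < 0 := by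
  have : Real.sin (x - 2 * π) = Real.sin x := Real.sin_sub_two_pi x
  rw [← this]
  apply Real.sin_neg_of_neg_of_neg_pi_lt <;> linarith

/-- `toIcoMod` into `[0, 2π)`. -/
def nrm (x : ℝ) : ℝ := toIcoMod Real.two_pi_pos 0 x

lemma nrm_mem (x : ℝ) : nrm x ∈ Ico 0 (2 * π) := by
  have := toIcoMod_mem_Ico Real.two_pi_pos 0 x
  simpa [nrm] using this

lemma nrm_sub_int (x : ℝ) : ∃ k : ℤ, x - nrm x = k * (2 * π) := by
  refine ⟨toIcoDiv Real.two_pi_pos 0 x, ?_⟩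
  have := self_sub_toIcoMod Real.two_pi_pos 0 x
  rw [zsmul_eq_mul] at this
  simpa [nrm] using this

lemma sin_nrm (x : ℝ) : Real.sin (nrm x) = Real.sin x := by
  obtain ⟨k, hk⟩ := nrm_sub_int x
  have : x = nrm x + k * (2 * π) := by linarith
  conv_rhs => rw [this]
  rw [Real.sin_add_int_mul_two_pi]

lemma ee_nrm (x : ℝ) : ee (nrm x) = ee x := by
  obtain ⟨k, hk⟩ := nrm_sub_int x
  have : x = nrm x + k * (2 * π) := by linarith
  conv_rhs => rw [this]
  rw [ee_add_int_mul_two_pi]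

lemma sin_sub_nrm (x u w : ℝ) : Real.sin (x - (u + w)) = Real.sin (nrm (x - u) - w) := by
  obtain ⟨k, hk⟩ := nrm_sub_int (x - u)
  have : x - (u + w) = (nrm (x - u) - w) + k * (2 * π) := by linarith
  rw [this, Real.sin_add_int_mul_two_pi]

lemma sin_sub_nrm2 (x y u : ℝ) : Real.sin (x - y) = Real.sin (nrm (x - u) - nrm (y - u)) := by
  obtain ⟨k, hk⟩ := nrm_sub_int (x - u)
  obtain ⟨l, hl⟩ := nrm_sub_int (y - u)
  have : x - y = (nrm (x - u) - nrm (y - u)) + ((k - l : ℤ) : ℝ) * (2 * π) := by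
    push_cast; linarith
  rw [this, Real.sin_add_int_mul_two_pi]

lemma nrm_le_pi_of_sin_nonneg {x : ℝ} (hx : 0 ≤ Real.sin x) : nrm x ≤ π := by
  by_contra h
  push_neg at h
  have h2 := (nrm_mem x).2
  have : Real.sin (nrm x) < 0 := sin_neg_of_gt_pi h h2
  rw [sin_nrm] at this
  linarith

lemma nh {m : ℕ} (hm : 0 < m) (θ : Fin m → ℝ)
    (H : ∀ p, ∃ q, Real.sin (θ q - θ p) < 0) (u : ℝ) :
    ∃ q, Real.sin (θ q - u) < 0 := by
  by_contra h
  push_neg at h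
  set γ : Fin m → ℝ := fun q => nrm (θ q - u) with hγ
  have hγq : ∀ r, nrm (θ r - u) = γ r := fun _ => rfl
  have hmem : ∀ q, γ q ∈ Icc 0 π := by
    intro q
    rw [← hγq q]
    exact ⟨(nrm_mem _).1, nrm_le_pi_of_sin_nonneg (h q)⟩
  obtain ⟨p, -, hp⟩ := Finset.exists_min_image Finset.univ γ ⟨⟨0, hm⟩, Finset.mem_univ _⟩
  obtain ⟨q, hq⟩ := H p
  refine absurd hq (not_lt.mpr ?_)
  rw [sin_sub_nrm2 (θ q) (θ p) u, hγq q, hγq p]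
  exact Real.sin_nonneg_of_nonneg_of_le_pi
    (sub_nonneg.2 (hp q (Finset.mem_univ q)))
    (by have h1 := (hmem q).2; have h2 := (hmem p).1; linarith)

lemma cone {m : ℕ} (hm : 0 < m) (θ : Fin m → ℝ)
    (H : ∀ p, ∃ q, Real.sin (θ q - θ p) < 0) (u : ℝ) :
    ∃ s : Fin m → ℝ, (∀ q, 0 ≤ s q) ∧ ∑ q, (s q : ℂ) * ee (θ q) = ee u := by
  set γ : Fin m → ℝ := fun q => nrm (θ q - u) with hγ
  have hγq : ∀ r, nrm (θ r - u) = γ r := fun _ => rfl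
  have key : ∀ q, ee (θ q) = ee u * ee (γ q) := by
    intro q
    rw [← ee_add]
    obtain ⟨k, hk⟩ := nrm_sub_int (θ q - u)
    rw [hγq] at hk
    have h2 : θ q = (u + γ q) + k * (2 * π) := by linarith
    conv_lhs => rw [h2]
    rw [ee_add_int_mul_two_pi]
  have hγmem : ∀ q, γ q ∈ Ico 0 (2 * π) := by
    intro q; rw [← hγq q]; exact nrm_mem _
  by_cases hzero : ∃ r, γ r = 0
  · obtain ⟨r, hr⟩ := hzero
    refine ⟨Pi.single r 1, ?_, ?_⟩
    · intro q
      by_cases h : q = r <;> simp [h, Pi.single_apply]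
    · rw [Finset.sum_eq_single r]
      · simp [key r, hr, ee_zero]
      · intro q _ hq; simp [Pi.single_eq_of_ne hq]
      · intro habs; exact absurd (Finset.mem_univ r) habs
  · push_neg at hzero
    have hA : ∃ a, γ a < π := by
      by_contra hcon
      push_neg at hcon
      obtain ⟨q, hq⟩ := nh hm θ H (u + π)
      refine absurd hq (not_lt.2 ?_)
      rw [sin_sub_nrm (θ q) u π, hγq q]
      exact Real.sin_nonneg_of_nonneg_of_le_pi (by have := hcon q; linarith)
        (by have := (hγmem q).2; linarith)
    have hB : ∃ b, π < γ b := by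
      by_contra hcon
      push_neg at hcon
      obtain ⟨q, hq⟩ := nh hm θ H u
      refine absurd hq (not_lt.2 ?_)
      have h3 : Real.sin (θ q - u) = Real.sin (γ q) := by rw [← hγq q, sin_nrm]
      rw [h3]
      exact Real.sin_nonneg_of_nonneg_of_le_pi ((hγmem q).1) (hcon q)
    obtain ⟨a0, hA0⟩ := hA
    obtain ⟨b0, hB0⟩ := hB
    obtain ⟨a, ha, hamin⟩ := Finset.exists_min_image
      (Finset.univ.filter fun r => γ r < π) γ
      ⟨a0, Finset.mem_filter.mpr ⟨Finset.mem_univ _, hA0⟩⟩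
    obtain ⟨b, hb, hbmax⟩ := Finset.exists_max_image
      (Finset.univ.filter fun r => π < γ r) γ
      ⟨b0, Finset.mem_filter.mpr ⟨Finset.mem_univ _, hB0⟩⟩
    rw [Finset.mem_filter] at ha hb
    replace ha := ha.2
    replace hb := hb.2
    by_cases hgap : γ b - γ a ≤ π
    · exfalso
      obtain ⟨q, hq⟩ := nh hm θ H (u + γ a)
      refine absurd hq (not_lt.2 ?_)
      rw [sin_sub_nrm (θ q) u (γ a), hγq q]
      apply Real.sin_nonneg_of_nonneg_of_le_pi
      · rcases lt_or_ge (γ q) π with h | h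
        · exact sub_nonneg.2 (hamin q (Finset.mem_filter.mpr ⟨Finset.mem_univ _, h⟩))
        · exact sub_nonneg.2 (le_trans (le_of_lt ha) h)
      · rcases le_or_gt (γ q) π with h | h
        · have := (hγmem a).1; linarith
        · have := hbmax q (Finset.mem_filter.mpr ⟨Finset.mem_univ _, h⟩); linarith
    · push_neg at hgap
      have ha0' : 0 < γ a := lt_of_le_of_ne (hγmem a).1 (Ne.symm (hzero a))
      have hb2 : γ b < 2 * π := (hγmem b).2
      set D := Real.sin (γ a - γ b) with hD
      have hDpos : 0 < D := by
        have h1 : Real.sin ((γ a - γ b) + ((1:ℤ) : ℝ) * (2 * π)) = Real.sin (γ a - γ b) :=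
          Real.sin_add_int_mul_two_pi _ 1
        rw [hD, ← h1]
        apply Real.sin_pos_of_pos_of_lt_pi
        · push_cast; linarith
        · push_cast; linarith
      have hsa : 0 < Real.sin (γ a) := Real.sin_pos_of_pos_of_lt_pi ha0' ha
      have hsb : Real.sin (γ b) < 0 := sin_neg_of_gt_pi hb hb2
      have hab : a ≠ b := by
        intro h
        rw [h] at ha
        linarith
      set x : ℝ := -Real.sin (γ b) / D with hx
      set y : ℝ := Real.sin (γ a) / D with hy
      have hxpos : 0 ≤ x := by
        apply div_nonneg _ (le_of_lt hDpos); linarith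
      have hypos : 0 ≤ y := by
        apply div_nonneg _ (le_of_lt hDpos); linarith
      refine ⟨(Pi.single a x : Fin m → ℝ) + (Pi.single b y : Fin m → ℝ), ?_, ?_⟩
      · intro q
        have h1 : (0:ℝ) ≤ (Pi.single a x : Fin m → ℝ) q := by
          by_cases h : q = a <;> simp [h, Pi.single_apply, hxpos]
        have h2 : (0:ℝ) ≤ (Pi.single b y : Fin m → ℝ) q := by
          by_cases h : q = b <;> simp [h, Pi.single_apply, hypos]
        exact add_nonneg h1 h2
      · have hsplit : ∑ q, ((((Pi.single a x : Fin m → ℝ) + (Pi.single b y : Fin m → ℝ)) q : ℝ) : ℂ) * ee (θ q)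
            = (x : ℂ) * ee (θ a) + (y : ℂ) * ee (θ b) := by
          have hc : ∀ q ∈ Finset.univ, ((((Pi.single a x : Fin m → ℝ) + (Pi.single b y : Fin m → ℝ)) q : ℝ) : ℂ) * ee (θ q)
              = (((Pi.single a x : Fin m → ℝ) q : ℝ) : ℂ) * ee (θ q) + (((Pi.single b y : Fin m → ℝ) q : ℝ) : ℂ) * ee (θ q) := by
            intro q _
            push_cast [Pi.add_apply]
            ring
          rw [Finset.sum_congr rfl hc, Finset.sum_add_distrib]
          congr 1
          · rw [Finset.sum_eq_single a]
            · simp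
            · intro q _ hq; simp [Pi.single_eq_of_ne hq]
            · intro habs; exact absurd (Finset.mem_univ a) habs
          · rw [Finset.sum_eq_single b]
            · simp
            · intro q _ hq; simp [Pi.single_eq_of_ne hq]
            · intro habs; exact absurd (Finset.mem_univ b) habs
        rw [hsplit, key a, key b]
        have hinner : (x : ℂ) * ee (γ a) + (y : ℂ) * ee (γ b) = 1 := by
          apply Complex.ext
          · simp only [Complex.add_re, Complex.mul_re, Complex.ofReal_re, Complex.ofReal_im,
              ee_re, ee_im, Complex.one_re]
            rw [hx, hy]
            field_simp
            rw [hD, Real.sin_sub]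
            ring
          · simp only [Complex.add_im, Complex.mul_im, Complex.ofReal_re, Complex.ofReal_im,
              ee_re, ee_im, Complex.one_im]
            rw [hx, hy]
            field_simp
            ring
        calc (x : ℂ) * (ee u * ee (γ a)) + (y : ℂ) * (ee u * ee (γ b))
            = ee u * ((x : ℂ) * ee (γ a) + (y : ℂ) * ee (γ b)) := by ring
          _ = ee u := by rw [hinner, mul_one]

lemma exists_pos_combo {m : ℕ} (hm : 0 < m) (θ : Fin m → ℝ)
    (H : ∀ p, ∃ q, Real.sin (θ q - θ p) < 0) :
    ∃ t : Fin m → ℝ, (∀ q, 0 < t q) ∧ ∑ q, (t q : ℂ) * ee (θ q) = 0 := by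
  choose s hs0 hssum using fun p => cone hm θ H (θ p + π)
  refine ⟨fun q => 1 + ∑ p, s p q, ?_, ?_⟩
  · intro q
    show (0:ℝ) < 1 + ∑ p, s p q
    have : 0 ≤ ∑ p, s p q := Finset.sum_nonneg fun p _ => hs0 p q
    linarith
  · have hneg : ∀ p, ee (θ p + π) = -ee (θ p) := by
      intro p; rw [ee_add, ee_pi]; ring
    calc ∑ q, ((1 + ∑ p, s p q : ℝ) : ℂ) * ee (θ q)
        = ∑ q, (ee (θ q) + ∑ p, (s p q : ℂ) * ee (θ q)) := by
          apply Finset.sum_congr rfl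
          intro q _
          push_cast
          rw [add_mul, one_mul, Finset.sum_mul]
      _ = ∑ q, ee (θ q) + ∑ q, ∑ p, (s p q : ℂ) * ee (θ q) := Finset.sum_add_distrib
      _ = ∑ q, ee (θ q) + ∑ p, ∑ q, (s p q : ℂ) * ee (θ q) := by rw [Finset.sum_comm]
      _ = ∑ q, ee (θ q) + ∑ p, -ee (θ p) := by
          congr 1
          exact Finset.sum_congr rfl fun p _ => by rw [hssum p, hneg p]
      _ = 0 := by
          rw [Finset.sum_neg_distrib]
          ring

lemma sq_lt_two_pow : ∀ m : ℕ, 6 ≤ m → (m + 1) ^ 2 < 2 ^ m := by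
  intro m hm
  induction m with
  | zero => omega
  | succ k ih =>
    rcases Nat.lt_or_ge k 6 with h | h
    · interval_cases k <;> first | omega | norm_num
    · have h1 := ih h
      have h2 : (k + 2) ^ 2 < 2 * (k + 1) ^ 2 := by nlinarith
      calc (k + 1 + 1) ^ 2 = (k + 2) ^ 2 := by ring
        _ < 2 * (k + 1) ^ 2 := h2
        _ < 2 * 2 ^ k := by omega
        _ = 2 ^ (k + 1) := by ring

/-- The one-dimensional event `{x | 0 ≤ sin (x + c)}` has measure at most `π`
in the uniform measure on `[0, 2π)`. -/
lemma per_coord (c : ℝ) :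
    (volume.restrict (Ico (0:ℝ) (2 * π))) {x | 0 ≤ Real.sin (x + c)} ≤ ENNReal.ofReal π := by
  set b : ℝ := nrm (-c) with hb
  have hbmem : b ∈ Ico 0 (2 * π) := nrm_mem _
  have hsub : {x | 0 ≤ Real.sin (x + c)} ∩ Ico 0 (2 * π)
      ⊆ Icc b (min (b + π) (2 * π)) ∪ Icc 0 (b - π) := by
    rintro x ⟨hs, hx0, hx2⟩
    have hz := nrm_le_pi_of_sin_nonneg hs
    have hz0 := (nrm_mem (x + c)).1
    obtain ⟨k, hk⟩ := nrm_sub_int (x + c)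
    obtain ⟨l, hl⟩ := nrm_sub_int (-c)
    set z : ℝ := nrm (x + c) with hzd
    -- x - z - b = (k + l) * (2π)
    have hkey : x - z - b = ((k + l : ℤ) : ℝ) * (2 * π) := by push_cast; linarith
    have hpi := Real.pi_pos
    have hj : (k + l : ℤ) = 0 ∨ (k + l : ℤ) = -1 := by
      have hlb : -(3 * π) < ((k + l : ℤ) : ℝ) * (2 * π) := by
        rw [← hkey]; have := hbmem.2; linarith
      have hub : ((k + l : ℤ) : ℝ) * (2 * π) < 2 * π := by
        rw [← hkey]; have := hbmem.1; linarith
      have h1 : (k + l : ℤ) < 1 := by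
        by_contra hcon
        push_neg at hcon
        have : (1 : ℝ) ≤ ((k + l : ℤ) : ℝ) := by exact_mod_cast hcon
        nlinarith
      have h2 : (-2 : ℤ) < k + l := by
        by_contra hcon
        push_neg at hcon
        have : ((k + l : ℤ) : ℝ) ≤ -2 := by exact_mod_cast hcon
        nlinarith
      omega
    rcases hj with hj | hj
    · left
      rw [hj] at hkey
      push_cast at hkey
      have hpi2 : x ≤ min (b + π) (2 * π) := le_min (by linarith) (by linarith)
      exact ⟨by linarith, hpi2⟩
    · right
      rw [hj] at hkey
      push_cast at hkey
      constructor <;> linarith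
  have hmeas : MeasurableSet {x : ℝ | 0 ≤ Real.sin (x + c)} :=
    measurableSet_le measurable_const (Real.measurable_sin.comp (measurable_add_const c))
  rw [Measure.restrict_apply hmeas]
  have hpi := Real.pi_pos
  calc volume ({x | 0 ≤ Real.sin (x + c)} ∩ Ico 0 (2 * π))
      ≤ volume (Icc b (min (b + π) (2 * π)) ∪ Icc 0 (b - π)) := measure_mono hsub
    _ ≤ volume (Icc b (min (b + π) (2 * π))) + volume (Icc 0 (b - π)) := measure_union_le _ _
    _ ≤ ENNReal.ofReal π := by
        rw [Real.volume_Icc, Real.volume_Icc]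
        rcases le_or_gt b π with h | h
        · have h2 : ENNReal.ofReal (b - π - 0) = 0 := by
            apply ENNReal.ofReal_eq_zero.mpr; linarith
          rw [h2, add_zero]
          apply ENNReal.ofReal_le_ofReal
          have : min (b + π) (2 * π) ≤ b + π := min_le_left _ _
          linarith
        · have hmin : min (b + π) (2 * π) = 2 * π := by
            apply min_eq_right; linarith
          rw [hmin, ← ENNReal.ofReal_add (by linarith [hbmem.2]) (by linarith)]
          apply ENNReal.ofReal_le_ofReal
          linarith

lemma measure_pivot_le {m : ℕ} (g : Fin (m + 1) → ℝ) (p : Fin (m + 1)) :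
    Measure.pi (fun _ : Fin (m + 1) => volume.restrict (Ico (0:ℝ) (2 * π)))
      {ψ | ∀ q, q ≠ p → 0 ≤ Real.sin (g q + ψ q - ψ p)}
      ≤ ENNReal.ofReal (2 * π) * ENNReal.ofReal π ^ m := by
  set ν : Measure ℝ := volume.restrict (Ico (0:ℝ) (2 * π)) with hν
  haveI hfin : IsFiniteMeasure ν := by
    constructor
    rw [hν, Measure.restrict_apply_univ]
    exact measure_Ico_lt_top
  set S : Set (ℝ × (Fin m → ℝ)) :=
    {xy | ∀ j, 0 ≤ Real.sin (g (p.succAbove j) + xy.2 j - xy.1)} with hS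
  have hSm : MeasurableSet S := by
    have hrw : S = ⋂ j, {xy : ℝ × (Fin m → ℝ) |
        0 ≤ Real.sin (g (p.succAbove j) + xy.2 j - xy.1)} := by
      ext xy; simp [hS]
    rw [hrw]
    refine MeasurableSet.iInter fun j => ?_
    exact measurableSet_le measurable_const
      (Real.measurable_sin.comp
        ((measurable_const.add ((measurable_pi_apply j).comp measurable_snd)).sub
          measurable_fst))
  have hpre : {ψ : Fin (m + 1) → ℝ | ∀ q, q ≠ p → 0 ≤ Real.sin (g q + ψ q - ψ p)}
      = (MeasurableEquiv.piFinSuccAbove (fun _ => ℝ) p) ⁻¹' S := by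
    ext ψ
    constructor
    · intro hψ j
      exact hψ (p.succAbove j) (Fin.succAbove_ne p j)
    · intro hψ q hq
      obtain ⟨j, rfl⟩ := Fin.exists_succAbove_eq hq
      exact hψ j
  rw [hpre,
    (MeasureTheory.measurePreserving_piFinSuccAbove (fun _ : Fin (m + 1) => ν) p).measure_preimage
      hSm.nullMeasurableSet]
  rw [Measure.prod_apply hSm]
  have hsec : ∀ x : ℝ, (Prod.mk x ⁻¹' S)
      = Set.pi Set.univ (fun j => {v : ℝ | 0 ≤ Real.sin (v + (g (p.succAbove j) - x))}) := by
    intro x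
    ext y
    simp only [hS, Set.mem_preimage, Set.mem_setOf_eq, Set.mem_pi, Set.mem_univ, true_implies]
    constructor
    · intro h j
      have h1 := h j
      have harg : g (p.succAbove j) + y j - x = y j + (g (p.succAbove j) - x) := by ring
      rwa [harg] at h1
    · intro h j
      have h1 := h j
      have harg : y j + (g (p.succAbove j) - x) = g (p.succAbove j) + y j - x := by ring
      rwa [harg] at h1
  calc ∫⁻ x, (Measure.pi fun _ : Fin m => ν) (Prod.mk x ⁻¹' S) ∂ν
      ≤ ∫⁻ _, ENNReal.ofReal π ^ m ∂ν := by
        apply lintegral_mono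
        intro x
        dsimp only
        rw [hsec x, Measure.pi_pi]
        calc ∏ j, ν {v : ℝ | 0 ≤ Real.sin (v + (g (p.succAbove j) - x))}
            ≤ ∏ _j : Fin m, ENNReal.ofReal π :=
              Finset.prod_le_prod' fun j _ => per_coord _
          _ = ENNReal.ofReal π ^ m := by
              rw [Finset.prod_const, Finset.card_univ, Fintype.card_fin]
    _ = ENNReal.ofReal π ^ m * ν Set.univ := lintegral_const _
    _ = ENNReal.ofReal (2 * π) * ENNReal.ofReal π ^ m := by
        rw [hν, Measure.restrict_apply_univ, Real.volume_Ico, mul_comm]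
        norm_num

lemma exists_good {n : ℕ} (hn : 7 ≤ n) (c : Fin n → Fin n → ℝ) :
    ∃ ψ : Fin n → ℝ, ∀ j p : Fin n, ∃ q, Real.sin (c q j + ψ q - (c p j + ψ p)) < 0 := by
  obtain ⟨m, rfl⟩ : ∃ m, n = m + 1 := ⟨n - 1, by omega⟩
  by_contra hcon
  push_neg at hcon
  set ν : Measure ℝ := volume.restrict (Ico (0:ℝ) (2 * π)) with hν
  haveI hfin : IsFiniteMeasure ν := by
    constructor
    rw [hν, Measure.restrict_apply_univ]
    exact measure_Ico_lt_top
  set μ : Measure (Fin (m + 1) → ℝ) := Measure.pi fun _ => ν with hμ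
  set E : Fin (m + 1) → Fin (m + 1) → Set (Fin (m + 1) → ℝ) := fun j p =>
    {ψ | ∀ q, q ≠ p → 0 ≤ Real.sin ((c q j - c p j) + ψ q - ψ p)} with hE
  have hcover : (Set.univ : Set (Fin (m + 1) → ℝ)) ⊆ ⋃ j, ⋃ p, E j p := by
    intro ψ _
    obtain ⟨j, p, hjp⟩ := hcon ψ
    refine Set.mem_iUnion.2 ⟨j, Set.mem_iUnion.2 ⟨p, ?_⟩⟩
    intro q _
    have h1 := hjp q
    have harg : c q j + ψ q - (c p j + ψ p) = c q j - c p j + ψ q - ψ p := by ring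
    rwa [harg] at h1
  have hμuniv : μ Set.univ = ENNReal.ofReal (2 * π) ^ (m + 1) := by
    rw [hμ, Measure.pi_univ]
    have : ν Set.univ = ENNReal.ofReal (2 * π) := by
      rw [hν, Measure.restrict_apply_univ, Real.volume_Ico]; norm_num
    rw [this, Finset.prod_const, Finset.card_univ, Fintype.card_fin]
  have hbound : μ Set.univ ≤ ((m + 1 : ℕ) : ENNReal) * (((m + 1 : ℕ) : ENNReal) *
      (ENNReal.ofReal (2 * π) * ENNReal.ofReal π ^ m)) := by
    calc μ Set.univ ≤ μ (⋃ j, ⋃ p, E j p) := measure_mono hcover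
      _ ≤ ∑' j : Fin (m + 1), μ (⋃ p, E j p) := measure_iUnion_le _
      _ ≤ ∑' j : Fin (m + 1), ∑' p : Fin (m + 1), μ (E j p) :=
          ENNReal.tsum_le_tsum fun j => measure_iUnion_le _
      _ ≤ ∑' j : Fin (m + 1), ∑' _p : Fin (m + 1),
            (ENNReal.ofReal (2 * π) * ENNReal.ofReal π ^ m) := by
          refine ENNReal.tsum_le_tsum fun j => ENNReal.tsum_le_tsum fun p => ?_
          exact measure_pivot_le (fun q => c q j - c p j) p
      _ = ((m + 1 : ℕ) : ENNReal) * (((m + 1 : ℕ) : ENNReal) *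
            (ENNReal.ofReal (2 * π) * ENNReal.ofReal π ^ m)) := by
          simp [tsum_fintype, Finset.sum_const, Finset.card_univ, nsmul_eq_mul, mul_assoc]
  have hpi := Real.pi_pos
  have hmain : ((m + 1 : ℕ) : ℝ) * (((m + 1 : ℕ) : ℝ) * (2 * π * π ^ m)) < (2 * π) ^ (m + 1) := by
    have h2 : ((m + 1) ^ 2 : ℕ) < 2 ^ m := sq_lt_two_pow m (by omega)
    have h2' : ((m + 1 : ℕ) : ℝ) * ((m + 1 : ℕ) : ℝ) < (2 : ℝ) ^ m := by
      calc ((m + 1 : ℕ) : ℝ) * ((m + 1 : ℕ) : ℝ) = (((m + 1) ^ 2 : ℕ) : ℝ) := by push_cast; ring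
        _ < (((2 : ℕ) ^ m : ℕ) : ℝ) := by exact_mod_cast h2
        _ = (2 : ℝ) ^ m := by push_cast; ring
    have hppos : (0 : ℝ) < 2 * π * π ^ m := by positivity
    calc ((m + 1 : ℕ) : ℝ) * (((m + 1 : ℕ) : ℝ) * (2 * π * π ^ m))
        = ((m + 1 : ℕ) : ℝ) * ((m + 1 : ℕ) : ℝ) * (2 * π * π ^ m) := by ring
      _ < (2 : ℝ) ^ m * (2 * π * π ^ m) := mul_lt_mul_of_pos_right h2' hppos
      _ = (2 * π) ^ (m + 1) := by rw [mul_pow]; ring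
  have hlt : ((m + 1 : ℕ) : ENNReal) * (((m + 1 : ℕ) : ENNReal) *
      (ENNReal.ofReal (2 * π) * ENNReal.ofReal π ^ m)) < ENNReal.ofReal (2 * π) ^ (m + 1) := by
    have e1 : ((m + 1 : ℕ) : ENNReal) = ENNReal.ofReal ((m + 1 : ℕ) : ℝ) :=
      (ENNReal.ofReal_natCast _).symm
    have e2 : ENNReal.ofReal π ^ m = ENNReal.ofReal (π ^ m) :=
      (ENNReal.ofReal_pow (le_of_lt hpi) m).symm
    have e3 : ENNReal.ofReal (2 * π) ^ (m + 1) = ENNReal.ofReal ((2 * π) ^ (m + 1)) :=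
      (ENNReal.ofReal_pow (by positivity) (m + 1)).symm
    rw [e1, e2, e3, ← ENNReal.ofReal_mul (by positivity),
      ← ENNReal.ofReal_mul (by positivity), ← ENNReal.ofReal_mul (by positivity)]
    exact (ENNReal.ofReal_lt_ofReal_iff (by positivity)).mpr hmain
  rw [hμuniv] at hbound
  exact absurd hbound (not_le.mpr hlt)

end PhaseRankAux

open PhaseRankAux in
/-- For `n ≥ 7`, every `n × n` phase matrix has nonmaximal phase rank; equivalently,
there is a singular complex matrix with all entries nonzero and the same phases. -/
theorem phaseRank_lt_of_seven_le {n : ℕ} (hn : 7 ≤ n)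
    (Θ : Matrix (Fin n) (Fin n) ℂ) (hphase : ∀ i j, ‖Θ i j‖ = 1) :
    phaseRank Θ < n ∧
      ∃ M : Matrix (Fin n) (Fin n) ℂ, M.det = 0 ∧ (∀ i j, M i j ≠ 0) ∧
        (∀ i j, M i j / ‖M i j‖ = Θ i j) := by
  have hn0 : 0 < n := by omega
  set i0 : Fin n := ⟨0, hn0⟩ with hi0
  set c : Fin n → Fin n → ℝ :=
    fun q j => Complex.arg (Θ q j) + (if q = i0 then Real.pi else 0) with hc
  obtain ⟨ψ, hψ⟩ := PhaseRankAux.exists_good hn c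
  have hΘne : ∀ i j, Θ i j ≠ 0 := by
    intro i j h
    have := hphase i j
    rw [h] at this
    simp at this
  have hΘe : ∀ q j, ee (Complex.arg (Θ q j)) = Θ q j := by
    intro q j
    have h1 := Complex.norm_mul_exp_arg_mul_I (Θ q j)
    rw [hphase, Complex.ofReal_one, one_mul] at h1
    exact h1
  have hee : ∀ q j, ee (c q j) = (if q = i0 then -1 else 1) * Θ q j := by
    intro q j
    by_cases h : q = i0
    · rw [if_pos h]
      have h2 : c q j = Complex.arg (Θ q j) + Real.pi := by simp only [hc, h, if_pos]
      rw [h2, ee_add, ee_pi, hΘe]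
      ring
    · rw [if_neg h]
      have h2 : c q j = Complex.arg (Θ q j) := by simp only [hc, if_neg h, add_zero]
      rw [h2, hΘe, one_mul]
  have key : ∀ j : Fin n, ∃ t : Fin n → ℝ, (∀ q, 0 < t q) ∧
      ∑ q, (t q : ℂ) * ee (c q j + ψ q) = 0 := by
    intro j
    exact PhaseRankAux.exists_pos_combo hn0 (fun q => c q j + ψ q) (fun p => hψ j p)
  choose t ht0 htsum using key
  set M : Matrix (Fin n) (Fin n) ℂ := fun i j => (t j i : ℂ) * Θ i j with hM
  have htC : ∀ j i, ((t j i : ℝ) : ℂ) ≠ 0 :=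
    fun j i => Complex.ofReal_ne_zero.mpr (ne_of_gt (ht0 j i))
  have hMne : ∀ i j, M i j ≠ 0 := fun i j => mul_ne_zero (htC j i) (hΘne i j)
  have hMph : ∀ i j, M i j / ‖M i j‖ = Θ i j := by
    intro i j
    have habs : ‖M i j‖ = t j i := by
      show ‖(t j i : ℂ) * Θ i j‖ = t j i
      rw [norm_mul, Complex.norm_real, Real.norm_eq_abs, hphase i j, mul_one, abs_of_pos (ht0 j i)]
    rw [habs]
    show ((t j i : ℂ) * Θ i j) / (t j i : ℂ) = Θ i j
    rw [mul_comm, mul_div_assoc, div_self (htC j i), mul_one]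
  have hdet : M.det = 0 := by
    rw [← Matrix.exists_vecMul_eq_zero_iff]
    refine ⟨fun q => (if q = i0 then -1 else 1) * ee (ψ q), ?_, ?_⟩
    · intro h0
      have h1 := congrFun h0 i0
      simp only [if_pos rfl, Pi.zero_apply] at h1
      exact ee_ne_zero (ψ i0) (by
        have : (-1 : ℂ) * ee (ψ i0) = 0 := h1
        field_simp at this
        exact neg_eq_zero.mp this)
    · funext j
      show ∑ q, ((if q = i0 then (-1:ℂ) else 1) * ee (ψ q)) * M q j = 0
      rw [← htsum j]
      apply Finset.sum_congr rfl
      intro q _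
      show ((if q = i0 then (-1:ℂ) else 1) * ee (ψ q)) * ((t j q : ℂ) * Θ q j)
          = (t j q : ℂ) * ee (c q j + ψ q)
      rw [ee_add, hee q j]
      ring
  have hrank : M.rank < n := by
    obtain ⟨w, hw0, hw⟩ := Matrix.exists_mulVec_eq_zero_iff.mpr hdet
    have hmem : w ∈ LinearMap.ker M.mulVecLin := by
      rw [LinearMap.mem_ker, Matrix.mulVecLin_apply, hw]
    have hnt : Nontrivial (LinearMap.ker M.mulVecLin) :=
      ⟨⟨⟨w, hmem⟩, 0, by simp [Subtype.ext_iff, hw0]⟩⟩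
    have hker : 0 < Module.finrank ℂ (LinearMap.ker M.mulVecLin) :=
      Module.finrank_pos_iff.mpr hnt
    have hsum := LinearMap.finrank_range_add_finrank_ker M.mulVecLin
    rw [Module.finrank_fintype_fun_eq_card, Fintype.card_fin] at hsum
    have hr : M.rank = Module.finrank ℂ (LinearMap.range M.mulVecLin) := rfl
    omega
  have hmem : M.rank ∈ {r | ∃ M' : Matrix (Fin n) (Fin n) ℂ,
      (∀ i j, M' i j ≠ 0) ∧ (∀ i j, M' i j / ‖M' i j‖ = Θ i j) ∧ M'.rank = r} :=
    ⟨M, hMne, hMph, rfl⟩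
  exact ⟨lt_of_le_of_lt (Nat.sInf_le hmem) hrank, M, hdet, hMne, hMph⟩


end
end

section
/- Let Θ be an n×m phase matrix and let N be any complex n×m matrix satisfying N_ij/|N_ij| = Θ_ij and |N_ij| ≥ 1 for all i,j. Then rank_phase(Θ) ≥ √(nm)/‖N‖, where ‖N‖ is the spectral norm of N. (Taking the infimum over such N gives the bound rank_phase(Θ) ≥ √(nm)/‖Θ‖*, which improves the bound with the spectral norm of Θ itself.) -/
set_option maxHeartbeats 1000000

/-- The spectral norm (ℓ² → ℓ² operator norm) of a complex matrix. -/
noncomputable def matSpectralNorm {n m : ℕ} (A : Matrix (Fin n) (Fin m) ℂ) : ℝ :=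
  ‖LinearMap.toContinuousLinearMap (Matrix.toEuclideanLin A)‖

lemma matSpectralNorm_nonneg {n m : ℕ} (A : Matrix (Fin n) (Fin m) ℂ) : 0 ≤ matSpectralNorm A :=
  norm_nonneg _

open Finset in
lemma sqrt_helper {a b c : ℝ} (ha : 0 ≤ a) (hb : 0 ≤ b) (hc : 0 ≤ c)
    (h : Real.sqrt a ≤ c * Real.sqrt b) : a ≤ c^2 * b := by
  nlinarith [Real.sq_sqrt ha, Real.sq_sqrt hb, Real.sqrt_nonneg a, Real.sqrt_nonneg b,
    mul_self_le_mul_self (Real.sqrt_nonneg a) h]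

open Finset in
lemma opBound {n m : ℕ} (A : Matrix (Fin n) (Fin m) ℂ) (y : Fin m → ℂ) :
    ∑ i, ‖∑ j, A i j * y j‖^2 ≤ (matSpectralNorm A)^2 * ∑ j, ‖y j‖^2 := by
  have h := (LinearMap.toContinuousLinearMap (Matrix.toEuclideanLin A)).le_opNorm
    ((WithLp.equiv 2 (Fin m → ℂ)).symm y)
  rw [LinearMap.coe_toContinuousLinearMap'] at h
  rw [WithLp.equiv_symm_apply, Matrix.toEuclideanLin_apply_piLp_toLp] at h
  rw [EuclideanSpace.norm_eq, EuclideanSpace.norm_eq] at h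
  have h2 : ∀ i, ((WithLp.equiv 2 (Fin n → ℂ)).symm (A.mulVec y)) i = ∑ j, A i j * y j := by
    intro i; simp [Matrix.mulVec, dotProduct]
  have h3 : ∀ j, ((WithLp.equiv 2 (Fin m → ℂ)).symm y) j = y j := fun j => rfl
  simp only [h2, h3] at h
  exact sqrt_helper (by positivity) (by positivity) (norm_nonneg _) h

open Finset Complex in
lemma adjBound {n m : ℕ} (A : Matrix (Fin n) (Fin m) ℂ) (w : Fin n → ℂ) :
    ∑ j, ‖∑ i, (starRingEnd ℂ) (A i j) * w i‖^2 ≤ (matSpectralNorm A)^2 * ∑ i, ‖w i‖^2 := by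
  set g : Fin m → ℂ := fun j => ∑ i, (starRingEnd ℂ) (A i j) * w i with hg
  set G : ℝ := ∑ j, ‖g j‖^2 with hG
  set W : ℝ := ∑ i, ‖w i‖^2 with hW
  have hGnn : 0 ≤ G := by positivity
  have hWnn : 0 ≤ W := by positivity
  -- key identity
  have key : (G : ℂ) = ∑ i, (starRingEnd ℂ) (w i) * (∑ j, A i j * g j) := by
    have step : ∀ j, (starRingEnd ℂ) (g j) = ∑ i, (starRingEnd ℂ) (w i) * A i j := by
      intro j
      rw [hg, map_sum]
      refine Finset.sum_congr rfl fun i _ => ?_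
      simp [mul_comm]
    calc (G : ℂ) = ∑ j, (starRingEnd ℂ) (g j) * g j := by
          rw [hG]
          push_cast
          refine Finset.sum_congr rfl fun j _ => ?_
          rw [← Complex.normSq_eq_conj_mul_self]
          simp [Complex.normSq_eq_norm_sq]
      _ = ∑ j, (∑ i, (starRingEnd ℂ) (w i) * A i j) * g j := by
          refine Finset.sum_congr rfl fun j _ => ?_; rw [step]
      _ = ∑ j, ∑ i, (starRingEnd ℂ) (w i) * (A i j * g j) := by
          refine Finset.sum_congr rfl fun j _ => ?_
          rw [Finset.sum_mul]; exact Finset.sum_congr rfl fun i _ => by ring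
      _ = ∑ i, (starRingEnd ℂ) (w i) * (∑ j, A i j * g j) := by
          rw [Finset.sum_comm]
          refine Finset.sum_congr rfl fun i _ => ?_
          rw [Finset.mul_sum]
  -- bound
  have h1 : G ≤ ∑ i, ‖w i‖ * ‖∑ j, A i j * g j‖ := by
    calc G = ‖(G : ℂ)‖ := by
          rw [Complex.norm_real, Real.norm_eq_abs, _root_.abs_of_nonneg hGnn]
      _ = ‖(∑ i, (starRingEnd ℂ) (w i) * (∑ j, A i j * g j))‖ := by rw [key]
      _ ≤ ∑ i, ‖w i‖ * ‖∑ j, A i j * g j‖ := by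
          refine (norm_sum_le _ _).trans (le_of_eq ?_)
          refine Finset.sum_congr rfl fun i _ => ?_
          rw [norm_mul, RingHomIsometric.norm_map]
  have h2 : ∑ i, ‖w i‖ * ‖∑ j, A i j * g j‖
      ≤ Real.sqrt W * Real.sqrt (∑ i, ‖∑ j, A i j * g j‖^2) :=
    Real.sum_mul_le_sqrt_mul_sqrt _ _ _
  have h3 : Real.sqrt (∑ i, ‖∑ j, A i j * g j‖^2) ≤ matSpectralNorm A * Real.sqrt G := by
    have := opBound A g
    calc Real.sqrt (∑ i, ‖∑ j, A i j * g j‖^2) ≤ Real.sqrt ((matSpectralNorm A)^2 * G) :=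
          Real.sqrt_le_sqrt this
      _ = matSpectralNorm A * Real.sqrt G := by
          rw [Real.sqrt_mul (by positivity), Real.sqrt_sq (matSpectralNorm_nonneg A)]
  have h4 : G ≤ (Real.sqrt W * matSpectralNorm A) * Real.sqrt G := by
    calc G ≤ ∑ i, ‖w i‖ * ‖∑ j, A i j * g j‖ := h1
      _ ≤ Real.sqrt W * Real.sqrt (∑ i, ‖∑ j, A i j * g j‖^2) := h2
      _ ≤ Real.sqrt W * (matSpectralNorm A * Real.sqrt G) :=
          mul_le_mul_of_nonneg_left h3 (Real.sqrt_nonneg W)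
      _ = (Real.sqrt W * matSpectralNorm A) * Real.sqrt G := by ring
  nlinarith [Real.sq_sqrt hGnn, Real.sq_sqrt hWnn, Real.sqrt_nonneg G, Real.sqrt_nonneg W,
    matSpectralNorm_nonneg A, mul_self_nonneg (Real.sqrt G - Real.sqrt W * matSpectralNorm A)]

open Finset in
lemma schurBound {n m : ℕ} (A : Matrix (Fin n) (Fin m) ℂ) {ρ₁ ρ₂ : ℝ}
    (hρ₁ : 0 ≤ ρ₁) (hρ₂ : 0 ≤ ρ₂)
    (hrow : ∀ i, ∑ j, ‖A i j‖ ≤ ρ₁) (hcol : ∀ j, ∑ i, ‖A i j‖ ≤ ρ₂) :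
    matSpectralNorm A ≤ Real.sqrt (ρ₁ * ρ₂) := by
  apply ContinuousLinearMap.opNorm_le_bound _ (Real.sqrt_nonneg _)
  intro x
  rw [LinearMap.coe_toContinuousLinearMap']
  have hx : Matrix.toEuclideanLin A x
      = (WithLp.equiv 2 (Fin n → ℂ)).symm (A.mulVec ((WithLp.equiv 2 (Fin m → ℂ)) x)) := rfl
  rw [hx, EuclideanSpace.norm_eq, EuclideanSpace.norm_eq]
  set y : Fin m → ℂ := (WithLp.equiv 2 (Fin m → ℂ)) x with hy
  have hyx : ∀ j, ‖x j‖ = ‖y j‖ := fun j => rfl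
  have hmv : ∀ i, ((WithLp.equiv 2 (Fin n → ℂ)).symm (A.mulVec y)) i = ∑ j, A i j * y j := by
    intro i; simp [Matrix.mulVec, dotProduct]
  simp only [hmv, hyx]
  have main : ∑ i, ‖∑ j, A i j * y j‖^2 ≤ (ρ₁ * ρ₂) * ∑ j, ‖y j‖^2 := by
    have pointwise : ∀ i, ‖∑ j, A i j * y j‖^2 ≤ ρ₁ * ∑ j, ‖A i j‖ * ‖y j‖^2 := by
      intro i
      have h1 : ‖∑ j, A i j * y j‖ ≤ ∑ j, ‖A i j‖ * ‖y j‖ := by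
        refine (norm_sum_le _ _).trans (le_of_eq ?_)
        exact Finset.sum_congr rfl fun j _ => norm_mul _ _
      have h2 : (∑ j, ‖A i j‖ * ‖y j‖)^2
          ≤ (∑ j, ‖A i j‖) * (∑ j, ‖A i j‖ * ‖y j‖^2) := by
        have := Finset.sum_mul_sq_le_sq_mul_sq (univ : Finset (Fin m))
          (fun j => Real.sqrt ‖A i j‖) (fun j => Real.sqrt ‖A i j‖ * ‖y j‖)
        calc (∑ j, ‖A i j‖ * ‖y j‖)^2
            = (∑ j, Real.sqrt ‖A i j‖ * (Real.sqrt ‖A i j‖ * ‖y j‖))^2 := by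
              congr 1; refine Finset.sum_congr rfl fun j _ => ?_
              rw [← mul_assoc, Real.mul_self_sqrt (norm_nonneg _)]
          _ ≤ (∑ j, Real.sqrt ‖A i j‖ ^2) * (∑ j, (Real.sqrt ‖A i j‖ * ‖y j‖)^2) := this
          _ = (∑ j, ‖A i j‖) * (∑ j, ‖A i j‖ * ‖y j‖^2) := by
              congr 1
              · exact Finset.sum_congr rfl fun j _ => Real.sq_sqrt (norm_nonneg _)
              · refine Finset.sum_congr rfl fun j _ => ?_
                rw [mul_pow, Real.sq_sqrt (norm_nonneg _)]
      calc ‖∑ j, A i j * y j‖^2 ≤ (∑ j, ‖A i j‖ * ‖y j‖)^2 := by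
            apply pow_le_pow_left₀ (norm_nonneg _) h1
        _ ≤ (∑ j, ‖A i j‖) * (∑ j, ‖A i j‖ * ‖y j‖^2) := h2
        _ ≤ ρ₁ * ∑ j, ‖A i j‖ * ‖y j‖^2 := by
            apply mul_le_mul_of_nonneg_right (hrow i)
            positivity
    calc ∑ i, ‖∑ j, A i j * y j‖^2 ≤ ∑ i, ρ₁ * ∑ j, ‖A i j‖ * ‖y j‖^2 :=
          Finset.sum_le_sum fun i _ => pointwise i
      _ = ρ₁ * ∑ j, (∑ i, ‖A i j‖) * ‖y j‖^2 := by
          rw [← Finset.mul_sum, Finset.sum_comm]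
          congr 1
          refine Finset.sum_congr rfl fun j _ => ?_
          rw [Finset.sum_mul]
      _ ≤ ρ₁ * ∑ j, ρ₂ * ‖y j‖^2 := by
          apply mul_le_mul_of_nonneg_left _ hρ₁
          exact Finset.sum_le_sum fun j _ =>
            mul_le_mul_of_nonneg_right (hcol j) (by positivity)
      _ = (ρ₁ * ρ₂) * ∑ j, ‖y j‖^2 := by rw [← Finset.mul_sum]; ring
  calc Real.sqrt (∑ i, ‖∑ j, A i j * y j‖^2) ≤ Real.sqrt ((ρ₁*ρ₂) * ∑ j, ‖y j‖^2) :=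
        Real.sqrt_le_sqrt main
    _ = Real.sqrt (ρ₁*ρ₂) * Real.sqrt (∑ j, ‖y j‖^2) := Real.sqrt_mul (by positivity) _

open Finset in
lemma onb_expansion {E : Type*} [NormedAddCommGroup E] [InnerProductSpace ℂ E]
    (W : Submodule ℂ E) [FiniteDimensional ℂ W] (x : E) (hx : x ∈ W) :
    x = ∑ k : Fin (Module.finrank ℂ W),
      (inner ℂ ((stdOrthonormalBasis ℂ W) k : E) x : ℂ) • ((stdOrthonormalBasis ℂ W) k : E) := by
  have h := (stdOrthonormalBasis ℂ W).sum_repr' (⟨x, hx⟩ : W)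
  have h2 := congrArg (Subtype.val) h
  rw [AddSubmonoidClass.coe_finset_sum] at h2
  refine h2.symm.trans ?_
  refine Finset.sum_congr rfl fun k _ => ?_
  rw [Submodule.coe_smul]
  congr 1

lemma onb_coe_norm_one {E : Type*} [NormedAddCommGroup E] [InnerProductSpace ℂ E]
    (W : Submodule ℂ E) [FiniteDimensional ℂ W] (k : Fin (Module.finrank ℂ W)) :
    ‖((stdOrthonormalBasis ℂ W) k : E)‖ = 1 := by
  rw [Submodule.norm_coe]
  exact (stdOrthonormalBasis ℂ W).orthonormal.1 k

open Finset in
lemma key_ineq {n m : ℕ} (hn : 0 < n) (hm : 0 < m)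
    (R N : Matrix (Fin n) (Fin m) ℂ) (r : ℕ) (hrank : R.rank ≤ r)
    (hrow : ∀ i, ∑ j, ‖R i j‖ = (m:ℝ))
    (hcol : ∀ j, ∑ i, ‖R i j‖ = (n:ℝ))
    (hNR : ∀ i j, (starRingEnd ℂ) (N i j) * R i j = ((‖N i j‖ * ‖R i j‖ : ℝ) : ℂ))
    (hN1 : ∀ i j, 1 ≤ ‖N i j‖) :
    Real.sqrt ((n : ℝ) * m) ≤ (r : ℝ) * matSpectralNorm N := by
  classical
  set e := (WithLp.linearEquiv 2 ℂ (Fin n → ℂ)).symm with he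
  set W : Submodule ℂ (EuclideanSpace ℂ (Fin n)) :=
    (LinearMap.range R.mulVecLin).map e.toLinearMap with hW
  set d := Module.finrank ℂ W with hd
  -- d ≤ r
  have hdr : d ≤ r := by
    have h1 : d = Module.finrank ℂ (LinearMap.range R.mulVecLin) :=
      LinearEquiv.finrank_map_eq e _
    have h2 : Module.finrank ℂ (LinearMap.range R.mulVecLin) = R.rank := rfl
    omega
  -- columns of R lie in W
  have hcolW : ∀ j, e (fun i => R i j) ∈ W := by
    intro j
    refine Submodule.mem_map_of_mem ?_
    refine ⟨Pi.single j 1, ?_⟩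
    ext i
    simp [Matrix.mulVecLin_apply, Matrix.mulVec, dotProduct, Pi.single_apply,
      mul_ite]
  set b := stdOrthonormalBasis ℂ W with hb
  set w : Fin d → EuclideanSpace ℂ (Fin n) := fun k => (b k : EuclideanSpace ℂ (Fin n))
    with hw
  set c : Fin d → Fin m → ℂ := fun k j => (inner ℂ (w k) (e (fun i => R i j)) : ℂ) with hc
  -- entry expansion
  have hexp : ∀ j i, R i j = ∑ k, c k j * w k i := by
    intro j i
    have h := onb_expansion W (e (fun i => R i j)) (hcolW j)
    have h' := congrArg e.symm h
    rw [map_sum] at h'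
    simp only [map_smul] at h'
    rw [LinearEquiv.symm_apply_apply] at h'
    have h2 := congrFun h' i
    rw [Finset.sum_apply] at h2
    simp only [Pi.smul_apply, smul_eq_mul] at h2
    exact h2
  -- coefficient formulas
  have hcf : ∀ k j, c k j = ∑ i, (starRingEnd ℂ) (w k i) * R i j := by
    intro k j
    rw [hc]
    simp only [PiLp.inner_apply, RCLike.inner_apply']
    rfl
  have hwnorm : ∀ k, ∑ i, ‖w k i‖^2 = 1 := by
    intro k
    have h1 : ‖w k‖ = 1 := onb_coe_norm_one W k
    rw [EuclideanSpace.norm_eq] at h1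
    have := Real.sqrt_eq_one.mp h1
    exact this
  set g : Fin d → Fin m → ℂ := fun k j => ∑ i, (starRingEnd ℂ) (N i j) * w k i with hg
  set T : ℂ := ∑ i, ∑ j, (starRingEnd ℂ) (N i j) * R i j with hT
  -- T as a double sum over k, j
  have hT1 : T = ∑ k, ∑ j, c k j * g k j := by
    rw [hT]
    calc ∑ i, ∑ j, (starRingEnd ℂ) (N i j) * R i j
        = ∑ i, ∑ j, ∑ k, (starRingEnd ℂ) (N i j) * (c k j * w k i) := by
          refine Finset.sum_congr rfl fun i _ => Finset.sum_congr rfl fun j _ => ?_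
          rw [hexp j i, Finset.mul_sum]
      _ = ∑ i, ∑ k, ∑ j, (starRingEnd ℂ) (N i j) * (c k j * w k i) := by
          refine Finset.sum_congr rfl fun i _ => Finset.sum_comm
      _ = ∑ k, ∑ i, ∑ j, (starRingEnd ℂ) (N i j) * (c k j * w k i) := Finset.sum_comm
      _ = ∑ k, ∑ j, ∑ i, (starRingEnd ℂ) (N i j) * (c k j * w k i) :=
          Finset.sum_congr rfl fun k _ => Finset.sum_comm
      _ = ∑ k, ∑ j, c k j * g k j := by
          refine Finset.sum_congr rfl fun k _ => Finset.sum_congr rfl fun j _ => ?_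
          rw [hg, Finset.mul_sum]
          exact Finset.sum_congr rfl fun i _ => by ring
  -- T is a nonnegative real
  set S : ℝ := ∑ i, ∑ j, ‖N i j‖ * ‖R i j‖ with hS
  have hT2 : T = (S : ℂ) := by
    rw [hT, hS]
    push_cast
    refine Finset.sum_congr rfl fun i _ => Finset.sum_congr rfl fun j _ => ?_
    rw [hNR i j]
    push_cast
    ring
  have hSnm : ((n : ℝ) * m) ≤ S := by
    have h1 : ((n:ℝ) * m) = ∑ i : Fin n, ∑ j : Fin m, ‖R i j‖ := by
      rw [Finset.sum_congr rfl fun (i : Fin n) _ => hrow i]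
      simp [mul_comm]
    rw [h1, hS]
    refine Finset.sum_le_sum fun i _ => Finset.sum_le_sum fun j _ => ?_
    nth_rewrite 1 [← one_mul ‖R i j‖]
    exact mul_le_mul_of_nonneg_right (hN1 i j) (norm_nonneg _)
  -- Cauchy-Schwarz
  have habsT : ‖T‖ ≤
      Real.sqrt (∑ k, ∑ j, ‖c k j‖^2) * Real.sqrt (∑ k, ∑ j, ‖g k j‖^2) := by
    rw [hT1]
    have h1 : ‖∑ k, ∑ j, c k j * g k j‖ ≤ ∑ k, ∑ j, ‖c k j‖ * ‖g k j‖ := by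
      refine (norm_sum_le _ _).trans ?_
      refine Finset.sum_le_sum fun k _ => ?_
      refine (norm_sum_le _ _).trans (le_of_eq ?_)
      exact Finset.sum_congr rfl fun j _ => norm_mul _ _
    refine h1.trans ?_
    have h2 := Real.sum_mul_le_sqrt_mul_sqrt (univ : Finset (Fin d × Fin m))
      (fun p => ‖c p.1 p.2‖) (fun p => ‖g p.1 p.2‖)
    rw [← Finset.univ_product_univ, Finset.sum_product, Finset.sum_product,
      Finset.sum_product] at h2
    exact h2
  -- bounds on the two sums
  have hRnorm : matSpectralNorm R ≤ Real.sqrt ((m : ℝ) * n) :=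
    schurBound R (by positivity) (by positivity)
      (fun i => le_of_eq (hrow i)) (fun j => le_of_eq (hcol j))
  have hRsq : (matSpectralNorm R)^2 ≤ (m : ℝ) * n := by
    have h0 := matSpectralNorm_nonneg R
    nlinarith [Real.sq_sqrt (by positivity : (0:ℝ) ≤ (m:ℝ) * n), Real.sqrt_nonneg ((m:ℝ)*n)]
  have hSc : ∑ k, ∑ j, ‖c k j‖^2 ≤ (d : ℝ) * ((n:ℝ) * m) := by
    have hk : ∀ k, ∑ j, ‖c k j‖^2 ≤ (n:ℝ) * m := by
      intro k
      have h1 : ∀ j, ‖c k j‖ = ‖∑ i, (starRingEnd ℂ) (R i j) * w k i‖ := by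
        intro j
        rw [hcf]
        rw [← RCLike.norm_conj]
        congr 1
        rw [map_sum]
        refine Finset.sum_congr rfl fun i _ => ?_
        rw [map_mul, Complex.conj_conj]
        ring
      calc ∑ j, ‖c k j‖^2 = ∑ j, ‖∑ i, (starRingEnd ℂ) (R i j) * w k i‖^2 := by
            exact Finset.sum_congr rfl fun j _ => by rw [h1]
        _ ≤ (matSpectralNorm R)^2 * ∑ i, ‖w k i‖^2 := adjBound R (w k)
        _ = (matSpectralNorm R)^2 := by rw [hwnorm k, mul_one]
        _ ≤ (m:ℝ) * n := hRsq
        _ = (n:ℝ) * m := by ring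
    calc ∑ k, ∑ j, ‖c k j‖^2 ≤ ∑ k : Fin d, ((n:ℝ) * m) := Finset.sum_le_sum fun k _ => hk k
      _ = (d : ℝ) * ((n:ℝ) * m) := by simp [mul_comm]
  have hSg : ∑ k, ∑ j, ‖g k j‖^2 ≤ (d : ℝ) * (matSpectralNorm N)^2 := by
    have hk : ∀ k, ∑ j, ‖g k j‖^2 ≤ (matSpectralNorm N)^2 := by
      intro k
      calc ∑ j, ‖g k j‖^2 ≤ (matSpectralNorm N)^2 * ∑ i, ‖w k i‖^2 := adjBound N (w k)
        _ = (matSpectralNorm N)^2 := by rw [hwnorm k, mul_one]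
    calc ∑ k, ∑ j, ‖g k j‖^2 ≤ ∑ k : Fin d, (matSpectralNorm N)^2 :=
          Finset.sum_le_sum fun k _ => hk k
      _ = (d:ℝ) * (matSpectralNorm N)^2 := by simp [mul_comm]
  -- combine
  have hfinal : ((n:ℝ) * m) ≤ (d : ℝ) * Real.sqrt ((n:ℝ)*m) * matSpectralNorm N := by
    have h0 : ‖T‖ = S := by
      rw [hT2, Complex.norm_real, Real.norm_eq_abs, _root_.abs_of_nonneg]
      exact le_trans (by positivity) hSnm
    have h1 : ((n:ℝ)*m) ≤ ‖T‖ := by rw [h0]; exact hSnm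
    have h2 : Real.sqrt (∑ k, ∑ j, ‖c k j‖^2) ≤ Real.sqrt ((d:ℝ) * ((n:ℝ)*m)) :=
      Real.sqrt_le_sqrt hSc
    have h3 : Real.sqrt (∑ k, ∑ j, ‖g k j‖^2) ≤ Real.sqrt ((d:ℝ) * (matSpectralNorm N)^2) :=
      Real.sqrt_le_sqrt hSg
    have h4 : Real.sqrt ((d:ℝ) * ((n:ℝ)*m)) * Real.sqrt ((d:ℝ) * (matSpectralNorm N)^2)
        = (d:ℝ) * Real.sqrt ((n:ℝ)*m) * matSpectralNorm N := by
      have e1 : Real.sqrt ((d:ℝ) * ((n:ℝ)*m))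
          = Real.sqrt (d:ℝ) * Real.sqrt ((n:ℝ)*m) := Real.sqrt_mul (by positivity) _
      have e2 : Real.sqrt ((d:ℝ) * (matSpectralNorm N)^2)
          = Real.sqrt (d:ℝ) * matSpectralNorm N := by
        rw [Real.sqrt_mul (by positivity), Real.sqrt_sq (matSpectralNorm_nonneg N)]
      have e3 : Real.sqrt (d:ℝ) * Real.sqrt (d:ℝ) = (d:ℝ) :=
        Real.mul_self_sqrt (by positivity)
      rw [e1, e2]
      linear_combination (Real.sqrt ((n:ℝ)*m) * matSpectralNorm N) * e3
    calc ((n:ℝ)*m) ≤ ‖T‖ := h1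
      _ ≤ Real.sqrt (∑ k, ∑ j, ‖c k j‖^2) * Real.sqrt (∑ k, ∑ j, ‖g k j‖^2) := habsT
      _ ≤ Real.sqrt ((d:ℝ) * ((n:ℝ)*m)) * Real.sqrt ((d:ℝ) * (matSpectralNorm N)^2) := by
          apply mul_le_mul h2 h3 (Real.sqrt_nonneg _) (Real.sqrt_nonneg _)
      _ = (d:ℝ) * Real.sqrt ((n:ℝ)*m) * matSpectralNorm N := h4
  -- cancel √(nm)
  have hnm : (0:ℝ) < (n:ℝ) * m := by positivity
  have hsq : Real.sqrt ((n:ℝ)*m) * Real.sqrt ((n:ℝ)*m) = (n:ℝ)*m :=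
    Real.mul_self_sqrt (le_of_lt hnm)
  have hsqpos : 0 < Real.sqrt ((n:ℝ)*m) := Real.sqrt_pos.mpr hnm
  have hcancel : Real.sqrt ((n:ℝ)*m) ≤ (d:ℝ) * matSpectralNorm N := by
    have h5 : Real.sqrt ((n:ℝ)*m) * Real.sqrt ((n:ℝ)*m)
        ≤ ((d:ℝ) * matSpectralNorm N) * Real.sqrt ((n:ℝ)*m) := by
      rw [hsq]
      calc ((n:ℝ)*m) ≤ (d:ℝ) * Real.sqrt ((n:ℝ)*m) * matSpectralNorm N := hfinal
        _ = ((d:ℝ) * matSpectralNorm N) * Real.sqrt ((n:ℝ)*m) := by ring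
    exact le_of_mul_le_mul_right h5 hsqpos
  refine hcancel.trans ?_
  apply mul_le_mul_of_nonneg_right _ (matSpectralNorm_nonneg N)
  exact_mod_cast hdr

lemma sum_const_fin {κ : ℕ} (c : ℝ) : ∑ _x : Fin κ, c = (κ:ℝ) * c := by
  rw [Finset.sum_const, Finset.card_univ, Fintype.card_fin, nsmul_eq_mul]

-- Coercivity of the Sinkhorn functional
lemma sinkhorn_coercive {n m : ℕ} (hn : 0 < n) (hm : 0 < m)
    (a : Fin n → Fin m → ℝ) (ha : ∀ i j, 0 < a i j) :
    ∃ ρ : ℝ, 0 ≤ ρ ∧ ∀ u : Fin n → ℝ, ∀ v : Fin m → ℝ,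
      (∑ i, ∑ j, a i j * Real.exp (u i + v j)) - m * (∑ i, u i) - n * (∑ j, v j)
          + (∑ i, u i)^2 ≤ (∑ i, ∑ j, a i j) →
      (∀ i, |u i| ≤ ρ) ∧ (∀ j, |v j| ≤ ρ) := by
  classical
  have hmn0 : (0:ℝ) < (m:ℝ) + n := by positivity
  have hn0 : (0:ℝ) < (n:ℝ) := by exact_mod_cast hn
  have hm0 : (0:ℝ) < (m:ℝ) := by exact_mod_cast hm
  have hne : (Finset.univ : Finset (Fin n × Fin m)).Nonempty :=
    ⟨⟨⟨0, hn⟩, ⟨0, hm⟩⟩, Finset.mem_univ _⟩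
  obtain ⟨α, hαdef⟩ : ∃ x : ℝ, x = Finset.univ.inf' hne (fun p : Fin n × Fin m => a p.1 p.2) :=
    ⟨_, rfl⟩
  have hα0 : 0 < α := by
    rw [hαdef]
    exact (Finset.lt_inf'_iff hne).mpr fun p _ => ha p.1 p.2
  have hαle : ∀ i j, α ≤ a i j := fun i j => by
    rw [hαdef]; exact Finset.inf'_le _ (Finset.mem_univ (⟨i, j⟩ : Fin n × Fin m))
  obtain ⟨A, hAdef⟩ : ∃ x : ℝ, x = ∑ i, ∑ j, a i j := ⟨_, rfl⟩
  have hA0 : 0 < A := by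
    rw [hAdef]
    apply Finset.sum_pos _ ⟨⟨0, hn⟩, Finset.mem_univ _⟩
    intro i _
    exact Finset.sum_pos (fun j _ => ha i j) ⟨⟨0, hm⟩, Finset.mem_univ _⟩
  obtain ⟨K, hKdef⟩ : ∃ x : ℝ, x = ((m:ℝ) + n + 1)/α := ⟨_, rfl⟩
  have hK0 : 0 < K := by rw [hKdef]; positivity
  have htan : ∀ x : ℝ, ((m:ℝ) + n + 1) * x + ((m:ℝ)+n+1)*(1 - Real.log K)
      ≤ α * Real.exp x := by
    intro x
    have h1 : (x - Real.log K) + 1 ≤ Real.exp (x - Real.log K) := Real.add_one_le_exp _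
    have h2 : Real.exp (x - Real.log K) = Real.exp x / K := by
      rw [Real.exp_sub, Real.exp_log hK0]
    rw [h2] at h1
    have h3 : K * ((x - Real.log K) + 1) ≤ Real.exp x := by
      rw [mul_comm]
      exact (le_div_iff₀ hK0).mp h1
    have h4 : α * (K * ((x - Real.log K) + 1)) ≤ α * Real.exp x :=
      mul_le_mul_of_nonneg_left h3 (le_of_lt hα0)
    have h5 : α * K = (m:ℝ) + n + 1 := by
      rw [hKdef]; field_simp
    have h6 : ((m:ℝ)+n+1) * x + ((m:ℝ)+n+1)*(1 - Real.log K)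
        = α * (K * ((x - Real.log K) + 1)) := by rw [← h5]; ring
    rw [h6]
    exact h4
  obtain ⟨D, hDdef⟩ : ∃ x : ℝ, x = ((m:ℝ)+n+1)*((n:ℝ)*m)*(1 - Real.log K) := ⟨_, rfl⟩
  obtain ⟨C₃, hC₃def⟩ : ∃ x : ℝ, x = A - D + ((m:ℝ)+(n:ℝ))*A := ⟨_, rfl⟩
  obtain ⟨C₄, hC₄def⟩ : ∃ x : ℝ, x = A + (A-D)/((m:ℝ)+(n:ℝ)) := ⟨_, rfl⟩
  obtain ⟨L, hLdef⟩ : ∃ x : ℝ, x = Real.log (C₄/α) := ⟨_, rfl⟩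
  obtain ⟨Tlow, hTdef⟩ : ∃ x : ℝ, x = (-(A) - (m:ℝ)*Real.sqrt C₃)/(n:ℝ) := ⟨_, rfl⟩
  obtain ⟨Uplus, hUdef⟩ : ∃ x : ℝ, x = ((m:ℝ)*L - Tlow)/(m:ℝ) := ⟨_, rfl⟩
  obtain ⟨Vplus, hVdef⟩ : ∃ x : ℝ, x = ((n:ℝ)*L + Real.sqrt C₃)/(n:ℝ) := ⟨_, rfl⟩
  refine ⟨(Real.sqrt C₃ + (n:ℝ)*max Uplus 0) + max Uplus 0
    + ((|Tlow| + (m:ℝ)*max Vplus 0) + max Vplus 0), by positivity, ?_⟩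
  intro u v hF
  obtain ⟨s, hsdef⟩ : ∃ x : ℝ, x = ∑ i, u i := ⟨_, rfl⟩
  obtain ⟨t, htdef⟩ : ∃ x : ℝ, x = ∑ j, v j := ⟨_, rfl⟩
  obtain ⟨E, hEdef⟩ : ∃ x : ℝ, x = ∑ i, ∑ j, a i j * Real.exp (u i + v j) := ⟨_, rfl⟩
  rw [← hsdef, ← htdef, ← hEdef, ← hAdef] at hF
  obtain ⟨X, hXdef⟩ : ∃ x : ℝ, x = (m:ℝ)*s + (n:ℝ)*t := ⟨_, rfl⟩
  have hE0 : 0 < E := by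
    rw [hEdef]
    apply Finset.sum_pos _ ⟨⟨0, hn⟩, Finset.mem_univ _⟩
    intro i _
    exact Finset.sum_pos (fun j _ => mul_pos (ha i j) (Real.exp_pos _))
      ⟨⟨0, hm⟩, Finset.mem_univ _⟩
  have hpairsum : ∀ i, ∑ j, (u i + v j) = (m:ℝ) * u i + t := by
    intro i
    rw [Finset.sum_add_distrib, sum_const_fin, htdef, mul_comm]
  -- lower bound on E via tangent lines
  have hEtan : ((m:ℝ)+n+1)*X + D ≤ E := by
    have h1 : ∀ i, ∑ j, (((m:ℝ)+n+1) * (u i + v j) + ((m:ℝ)+n+1)*(1 - Real.log K))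
        ≤ ∑ j, a i j * Real.exp (u i + v j) := by
      intro i
      refine Finset.sum_le_sum fun j _ => ?_
      calc ((m:ℝ)+n+1) * (u i + v j) + ((m:ℝ)+n+1)*(1 - Real.log K)
          ≤ α * Real.exp (u i + v j) := htan _
        _ ≤ a i j * Real.exp (u i + v j) :=
            mul_le_mul_of_nonneg_right (hαle i j) (le_of_lt (Real.exp_pos _))
    have h2 : ∑ i, ∑ j, (((m:ℝ)+n+1) * (u i + v j) + ((m:ℝ)+n+1)*(1 - Real.log K)) ≤ E := by
      rw [hEdef]; exact Finset.sum_le_sum fun i _ => h1 i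
    have h4 : ∀ i, ∑ j, (((m:ℝ)+n+1) * (u i + v j) + ((m:ℝ)+n+1)*(1 - Real.log K))
        = ((m:ℝ)+n+1) * ((m:ℝ) * u i + t) + (m:ℝ) * (((m:ℝ)+n+1)*(1 - Real.log K)) := by
      intro i
      rw [Finset.sum_add_distrib, ← Finset.mul_sum, hpairsum i, sum_const_fin]
    have h5 : ∑ i, ((m:ℝ) * u i + t) = (m:ℝ)*s + (n:ℝ)*t := by
      rw [Finset.sum_add_distrib, ← Finset.mul_sum, ← hsdef, sum_const_fin]
    have h3 : ∑ i, ∑ j, (((m:ℝ)+n+1) * (u i + v j) + ((m:ℝ)+n+1)*(1 - Real.log K))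
        = ((m:ℝ)+n+1)*X + D := by
      calc ∑ i, ∑ j, (((m:ℝ)+n+1) * (u i + v j) + ((m:ℝ)+n+1)*(1 - Real.log K))
          = ∑ i, (((m:ℝ)+n+1) * ((m:ℝ) * u i + t)
              + (m:ℝ) * (((m:ℝ)+n+1)*(1 - Real.log K))) :=
            Finset.sum_congr rfl fun i _ => h4 i
        _ = ((m:ℝ)+n+1) * (∑ i, ((m:ℝ) * u i + t))
              + (n:ℝ) * ((m:ℝ) * (((m:ℝ)+n+1)*(1 - Real.log K))) := by
            rw [Finset.sum_add_distrib, ← Finset.mul_sum, sum_const_fin]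
        _ = ((m:ℝ)+n+1)*X + D := by
            rw [h5, hXdef, hDdef]; ring
    linarith [h2, h3.symm.le]
  have h1 : ((m:ℝ)+n)*X + s^2 ≤ A - D := by
    have e : ((m:ℝ)+n+1)*X = ((m:ℝ)+n)*X + X := by ring
    rw [e] at hEtan
    linarith [hEtan, hF, hXdef.le, hXdef.ge]
  have h2 : -A ≤ X := by
    rw [hXdef]
    nlinarith [hF, hE0, sq_nonneg s]
  have hsbound : s^2 ≤ C₃ := by
    have e2 : ((m:ℝ)+n)*(-A) ≤ ((m:ℝ)+n)*X := mul_le_mul_of_nonneg_left h2 (le_of_lt hmn0)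
    rw [hC₃def]
    nlinarith [h1, e2]
  have hC₃0 : 0 ≤ C₃ := le_trans (sq_nonneg s) hsbound
  have hs : |s| ≤ Real.sqrt C₃ := by
    rw [← Real.sqrt_sq_eq_abs]
    exact Real.sqrt_le_sqrt hsbound
  have habs := abs_le.mp hs
  have hst : X ≤ (A - D)/((m:ℝ)+n) := by
    rw [le_div_iff₀ hmn0]
    have e : X*((m:ℝ)+n) = ((m:ℝ)+n)*X := mul_comm _ _
    linarith [h1, sq_nonneg s, e.le, e.ge]
  have hEup : E ≤ C₄ := by
    rw [hC₄def]
    have eX := hXdef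
    linarith [hF, hst, sq_nonneg s, eX.le, eX.ge]
  have hC₄0 : 0 < C₄ := lt_of_lt_of_le hE0 hEup
  have hpair : ∀ i j, u i + v j ≤ L := by
    intro i j
    have hterm : a i j * Real.exp (u i + v j) ≤ E := by
      rw [hEdef]
      calc a i j * Real.exp (u i + v j)
          ≤ ∑ j', a i j' * Real.exp (u i + v j') :=
            Finset.single_le_sum (f := fun j' => a i j' * Real.exp (u i + v j'))
              (fun j' _ => le_of_lt (mul_pos (ha i j') (Real.exp_pos _)))
              (Finset.mem_univ j)
        _ ≤ ∑ i', ∑ j', a i' j' * Real.exp (u i' + v j') :=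
            Finset.single_le_sum
              (f := fun i' => ∑ j', a i' j' * Real.exp (u i' + v j'))
              (fun i' _ => Finset.sum_nonneg fun j' _ =>
                le_of_lt (mul_pos (ha i' j') (Real.exp_pos _)))
              (Finset.mem_univ i)
    have h5 : α * Real.exp (u i + v j) ≤ C₄ := by
      calc α * Real.exp (u i + v j) ≤ a i j * Real.exp (u i + v j) :=
            mul_le_mul_of_nonneg_right (hαle i j) (le_of_lt (Real.exp_pos _))
        _ ≤ E := hterm
        _ ≤ C₄ := hEup
    have h6 : Real.exp (u i + v j) ≤ C₄/α := (le_div_iff₀ hα0).mpr (by linarith [h5])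
    rw [hLdef]
    exact (Real.le_log_iff_exp_le (by positivity)).mpr h6
  have htlow : Tlow ≤ t := by
    rw [hTdef, div_le_iff₀ hn0]
    have e3 : (m:ℝ)*s ≤ (m:ℝ)*Real.sqrt C₃ :=
      mul_le_mul_of_nonneg_left habs.2 (le_of_lt hm0)
    have e5 : t*(n:ℝ) = (n:ℝ)*t := mul_comm _ _
    linarith [h2, e3, hXdef.le, hXdef.ge, e5.le, e5.ge]
  have huup : ∀ i, u i ≤ Uplus := by
    intro i
    have h7 : (m:ℝ) * u i + t ≤ (m:ℝ) * L := by
      rw [← hpairsum i]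
      calc ∑ j, (u i + v j) ≤ ∑ _j : Fin m, L := Finset.sum_le_sum fun j _ => hpair i j
        _ = (m:ℝ) * L := sum_const_fin L
    rw [hUdef, le_div_iff₀ hm0]
    have e : u i * (m:ℝ) = (m:ℝ) * u i := mul_comm _ _
    linarith [h7, htlow, e.le, e.ge]
  have hvup : ∀ j, v j ≤ Vplus := by
    intro j
    have h8 : ∑ i, (u i + v j) = s + (n:ℝ) * v j := by
      rw [Finset.sum_add_distrib, ← hsdef, sum_const_fin]
    have h7 : (n:ℝ) * v j + s ≤ (n:ℝ) * L := by
      have h9 : ∑ i, (u i + v j) ≤ (n:ℝ) * L := by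
        calc ∑ i, (u i + v j) ≤ ∑ _i : Fin n, L := Finset.sum_le_sum fun i _ => hpair i j
          _ = (n:ℝ) * L := sum_const_fin L
      linarith [h8.symm.le, h8.symm.ge, h9]
    rw [hVdef, le_div_iff₀ hn0]
    have e : v j * (n:ℝ) = (n:ℝ) * v j := mul_comm _ _
    linarith [h7, habs.1, e.le, e.ge]
  have hulow : ∀ i, -(Real.sqrt C₃ + (n:ℝ)*max Uplus 0) ≤ u i := by
    intro i
    have h9 : u i + ∑ i' ∈ Finset.univ.erase i, u i' = s := by
      rw [hsdef]; exact Finset.add_sum_erase _ _ (Finset.mem_univ i)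
    have h10 : ∑ i' ∈ Finset.univ.erase i, u i' ≤ (n:ℝ) * max Uplus 0 := by
      calc ∑ i' ∈ Finset.univ.erase i, u i'
          ≤ ∑ _i' ∈ Finset.univ.erase i, max Uplus 0 :=
            Finset.sum_le_sum fun i' _ => le_trans (huup i') (le_max_left _ _)
        _ = (Finset.univ.erase i).card * max Uplus 0 := by
            rw [Finset.sum_const, nsmul_eq_mul]
        _ ≤ (n:ℝ) * max Uplus 0 := by
            apply mul_le_mul_of_nonneg_right _ (le_max_right _ 0)
            have hel := Finset.card_erase_le (s := (Finset.univ : Finset (Fin n))) (a := i)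
            have hcard : (Finset.univ : Finset (Fin n)).card = n := by
              rw [Finset.card_univ, Fintype.card_fin]
            exact_mod_cast le_trans hel (le_of_eq hcard)
    linarith [habs.1, h9, h10]
  have hvlow : ∀ j, -(|Tlow| + (m:ℝ)*max Vplus 0) ≤ v j := by
    intro j
    have h9 : v j + ∑ j' ∈ Finset.univ.erase j, v j' = t := by
      rw [htdef]; exact Finset.add_sum_erase _ _ (Finset.mem_univ j)
    have h10 : ∑ j' ∈ Finset.univ.erase j, v j' ≤ (m:ℝ) * max Vplus 0 := by
      calc ∑ j' ∈ Finset.univ.erase j, v j'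
          ≤ ∑ _j' ∈ Finset.univ.erase j, max Vplus 0 :=
            Finset.sum_le_sum fun j' _ => le_trans (hvup j') (le_max_left _ _)
        _ = (Finset.univ.erase j).card * max Vplus 0 := by
            rw [Finset.sum_const, nsmul_eq_mul]
        _ ≤ (m:ℝ) * max Vplus 0 := by
            apply mul_le_mul_of_nonneg_right _ (le_max_right _ 0)
            have hel := Finset.card_erase_le (s := (Finset.univ : Finset (Fin m))) (a := j)
            have hcard : (Finset.univ : Finset (Fin m)).card = m := by
              rw [Finset.card_univ, Fintype.card_fin]
            exact_mod_cast le_trans hel (le_of_eq hcard)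
    have h11 : -(|Tlow|) ≤ t := le_trans (neg_abs_le Tlow) htlow
    linarith [h9, h10, h11]
  have hsC : 0 ≤ Real.sqrt C₃ := Real.sqrt_nonneg _
  have hmaxU : (0:ℝ) ≤ max Uplus 0 := le_max_right _ _
  have hmaxV : (0:ℝ) ≤ max Vplus 0 := le_max_right _ _
  have hTabs : (0:ℝ) ≤ |Tlow| := abs_nonneg _
  constructor
  · intro i
    rw [abs_le]
    refine ⟨?_, ?_⟩
    · have := hulow i
      linarith [this, hmaxU, hmaxV, hTabs, hsC,
        mul_nonneg hn0.le hmaxU, mul_nonneg hm0.le hmaxV]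
    · have h15 := le_trans (huup i) (le_max_left Uplus 0)
      linarith [h15, hmaxU, hmaxV, hTabs, hsC,
        mul_nonneg hn0.le hmaxU, mul_nonneg hm0.le hmaxV]
  · intro j
    rw [abs_le]
    refine ⟨?_, ?_⟩
    · have := hvlow j
      linarith [this, hmaxU, hmaxV, hTabs, hsC,
        mul_nonneg hn0.le hmaxU, mul_nonneg hm0.le hmaxV]
    · have h15 := le_trans (hvup j) (le_max_left Vplus 0)
      linarith [h15, hmaxU, hmaxV, hTabs, hsC,
        mul_nonneg hn0.le hmaxU, mul_nonneg hm0.le hmaxV]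

lemma sinkhorn {n m : ℕ} (hn : 0 < n) (hm : 0 < m)
    (a : Fin n → Fin m → ℝ) (ha : ∀ i j, 0 < a i j) :
    ∃ (u : Fin n → ℝ) (v : Fin m → ℝ),
      (∀ i, ∑ j, a i j * Real.exp (u i + v j) = (m:ℝ)) ∧
      (∀ j, ∑ i, a i j * Real.exp (u i + v j) = (n:ℝ)) := by
  classical
  set F : (Fin n → ℝ) × (Fin m → ℝ) → ℝ := fun p =>
    (∑ i, ∑ j, a i j * Real.exp (p.1 i + p.2 j)) - m * (∑ i, p.1 i) - n * (∑ j, p.2 j)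
      + (∑ i, p.1 i)^2 with hFdef
  have hFcont : Continuous F := by
    apply Continuous.add
    · apply Continuous.sub
      · apply Continuous.sub
        · apply continuous_finset_sum
          intro i _
          apply continuous_finset_sum
          intro j _
          exact continuous_const.mul (Real.continuous_exp.comp
            (((continuous_apply i).comp continuous_fst).add
              ((continuous_apply j).comp continuous_snd)))
        · exact continuous_const.mul (continuous_finset_sum _ fun i _ =>
            (continuous_apply i).comp continuous_fst)
      · exact continuous_const.mul (continuous_finset_sum _ fun j _ =>
          (continuous_apply j).comp continuous_snd)
    · exact (continuous_finset_sum _ fun i _ =>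
        (continuous_apply i).comp continuous_fst).pow 2
  have hF00 : F (0, 0) = ∑ i, ∑ j, a i j := by
    simp [hFdef]
  obtain ⟨ρ, hρ0, hcoer⟩ := sinkhorn_coercive hn hm a ha
  -- existence of a global minimizer
  have hmin : ∃ p : (Fin n → ℝ) × (Fin m → ℝ), ∀ q, F p ≤ F q := by
    apply hFcont.exists_forall_le' (0, 0)
    rw [Filter.eventually_iff, Filter.mem_cocompact]
    refine ⟨Metric.closedBall 0 (ρ + 1), isCompact_closedBall _ _, ?_⟩
    intro p hp
    simp only [Set.mem_compl_iff, Metric.mem_closedBall, dist_zero_right, not_le] at hp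
    by_contra hcon
    rw [Set.mem_setOf_eq, not_le] at hcon
    have hFle : F p ≤ F (0,0) := le_of_lt hcon
    rw [hF00] at hFle
    obtain ⟨hu, hv⟩ := hcoer p.1 p.2 hFle
    have h1 : ‖p.1‖ ≤ ρ := (pi_norm_le_iff_of_nonneg hρ0).mpr fun i => by
      rw [Real.norm_eq_abs]; exact hu i
    have h2 : ‖p.2‖ ≤ ρ := (pi_norm_le_iff_of_nonneg hρ0).mpr fun j => by
      rw [Real.norm_eq_abs]; exact hv j
    have : ‖p‖ ≤ ρ := by
      rw [Prod.norm_def]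
      exact max_le h1 h2
    linarith
  obtain ⟨⟨u, v⟩, hp⟩ := hmin
  obtain ⟨s, hsdef⟩ : ∃ x : ℝ, x = ∑ i, u i := ⟨_, rfl⟩
  -- row stationarity
  have hrow : ∀ i₀, ∑ j, a i₀ j * Real.exp (u i₀ + v j) = (m:ℝ) - 2*s := by
    intro i₀
    obtain ⟨S, hSdef⟩ : ∃ x : ℝ, x = ∑ j, a i₀ j * Real.exp (u i₀ + v j) := ⟨_, rfl⟩
    obtain ⟨C, hCdef⟩ : ∃ x : ℝ, x =
      ∑ i ∈ Finset.univ.erase i₀, ∑ j, a i j * Real.exp (u i + v j) := ⟨_, rfl⟩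
    obtain ⟨tv, htvdef⟩ : ∃ x : ℝ, x = ∑ j, v j := ⟨_, rfl⟩
    set q : ℝ → (Fin n → ℝ) × (Fin m → ℝ) :=
      fun t => (Function.update u i₀ (u i₀ + t), v) with hqdef
    set φ : ℝ → ℝ := fun t =>
      S * Real.exp t + C - m * (s + t) - n * tv + (s + t)^2 with hφdef
    have hq0 : q 0 = (u, v) := by
      rw [hqdef]
      simp only [add_zero]
      rw [Function.update_eq_self]
    have hsum_update : ∀ t, ∑ i, Function.update u i₀ (u i₀ + t) i = s + t := by
      intro t
      rw [← Finset.add_sum_erase _ _ (Finset.mem_univ i₀), Function.update_self]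
      have : ∀ i ∈ Finset.univ.erase i₀, Function.update u i₀ (u i₀ + t) i = u i := by
        intro i hi
        exact Function.update_of_ne (Finset.ne_of_mem_erase hi) _ _
      rw [Finset.sum_congr rfl this, hsdef]
      rw [← Finset.add_sum_erase _ _ (Finset.mem_univ i₀)]
      ring
    have hφF : ∀ t, φ t = F (q t) := by
      intro t
      rw [hφdef, hFdef, hqdef]
      simp only
      rw [hsum_update t]
      have hrows : ∑ i, ∑ j, a i j * Real.exp (Function.update u i₀ (u i₀ + t) i + v j)
          = S * Real.exp t + C := by
        rw [← Finset.add_sum_erase _ _ (Finset.mem_univ i₀)]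
        have h1 : ∑ j, a i₀ j * Real.exp (Function.update u i₀ (u i₀ + t) i₀ + v j)
            = S * Real.exp t := by
          rw [Function.update_self, hSdef, Finset.sum_mul]
          refine Finset.sum_congr rfl fun j _ => ?_
          rw [mul_assoc, ← Real.exp_add]
          ring_nf
        have h2 : ∑ i ∈ Finset.univ.erase i₀,
            ∑ j, a i j * Real.exp (Function.update u i₀ (u i₀ + t) i + v j) = C := by
          rw [hCdef]
          refine Finset.sum_congr rfl fun i hi => Finset.sum_congr rfl fun j _ => ?_
          rw [Function.update_of_ne (Finset.ne_of_mem_erase hi)]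
        rw [h1, h2]
      rw [hrows, ← htvdef]
    -- φ has a local min at 0
    have hloc : IsLocalMin φ 0 := by
      apply Filter.Eventually.of_forall
      intro t
      rw [hφF t, hφF 0, hq0]
      exact hp (q t)
    -- derivative of φ at 0
    have hd : HasDerivAt φ (S - m + 2*s) 0 := by
      have h1 : HasDerivAt (fun t : ℝ => Real.exp t) 1 0 := by
        simpa using Real.hasDerivAt_exp 0
      have h2 : HasDerivAt (fun t : ℝ => S * Real.exp t) S 0 := by
        simpa using h1.const_mul S
      have h3 : HasDerivAt (fun t : ℝ => s + t) 1 0 := by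
        simpa using (hasDerivAt_id (0:ℝ)).const_add s
      have h4 : HasDerivAt (fun t : ℝ => (s + t)^2) (2*s) 0 := by
        have := h3.fun_pow 2
        simpa using this
      have h5 : HasDerivAt (fun t : ℝ => (m:ℝ) * (s + t)) (m:ℝ) 0 := by
        simpa using h3.const_mul (m:ℝ)
      have h6 := (((h2.add_const C).fun_sub h5).sub_const ((n:ℝ) * tv)).fun_add h4
      convert h6 using 1 <;> try ring
    have hzero := hloc.hasDerivAt_eq_zero hd
    rw [← hSdef]
    linarith [hzero]
  -- column stationarity
  have hcol : ∀ j₀, ∑ i, a i j₀ * Real.exp (u i + v j₀) = (n:ℝ) := by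
    intro j₀
    obtain ⟨S, hSdef⟩ : ∃ x : ℝ, x = ∑ i, a i j₀ * Real.exp (u i + v j₀) := ⟨_, rfl⟩
    obtain ⟨C, hCdef⟩ : ∃ x : ℝ, x =
      ∑ j ∈ Finset.univ.erase j₀, ∑ i, a i j * Real.exp (u i + v j) := ⟨_, rfl⟩
    obtain ⟨tv, htvdef⟩ : ∃ x : ℝ, x = ∑ j, v j := ⟨_, rfl⟩
    set q : ℝ → (Fin n → ℝ) × (Fin m → ℝ) :=
      fun t => (u, Function.update v j₀ (v j₀ + t)) with hqdef
    set φ : ℝ → ℝ := fun t =>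
      S * Real.exp t + C - m * s - n * (tv + t) + s^2 with hφdef
    have hq0 : q 0 = (u, v) := by
      rw [hqdef]
      simp only [add_zero]
      rw [Function.update_eq_self]
    have hsum_update : ∀ t, ∑ j, Function.update v j₀ (v j₀ + t) j = tv + t := by
      intro t
      rw [← Finset.add_sum_erase _ _ (Finset.mem_univ j₀), Function.update_self]
      have : ∀ j ∈ Finset.univ.erase j₀, Function.update v j₀ (v j₀ + t) j = v j := by
        intro j hj
        exact Function.update_of_ne (Finset.ne_of_mem_erase hj) _ _
      rw [Finset.sum_congr rfl this, htvdef]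
      rw [← Finset.add_sum_erase _ _ (Finset.mem_univ j₀)]
      ring
    have hφF : ∀ t, φ t = F (q t) := by
      intro t
      rw [hφdef, hFdef, hqdef]
      simp only
      rw [hsum_update t]
      have hcols : ∑ i, ∑ j, a i j * Real.exp (u i + Function.update v j₀ (v j₀ + t) j)
          = S * Real.exp t + C := by
        rw [Finset.sum_comm]
        rw [← Finset.add_sum_erase _ _ (Finset.mem_univ j₀)]
        have h1 : ∑ i, a i j₀ * Real.exp (u i + Function.update v j₀ (v j₀ + t) j₀)
            = S * Real.exp t := by
          rw [Function.update_self, hSdef, Finset.sum_mul]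
          refine Finset.sum_congr rfl fun i _ => ?_
          rw [mul_assoc, ← Real.exp_add]
          ring_nf
        have h2 : ∑ j ∈ Finset.univ.erase j₀,
            ∑ i, a i j * Real.exp (u i + Function.update v j₀ (v j₀ + t) j) = C := by
          rw [hCdef]
          refine Finset.sum_congr rfl fun j hj => Finset.sum_congr rfl fun i _ => ?_
          rw [Function.update_of_ne (Finset.ne_of_mem_erase hj)]
        rw [h1, h2]
      rw [hcols, ← hsdef]
    have hloc : IsLocalMin φ 0 := by
      apply Filter.Eventually.of_forall
      intro t
      rw [hφF t, hφF 0, hq0]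
      exact hp (q t)
    have hd : HasDerivAt φ (S - n) 0 := by
      have h1 : HasDerivAt (fun t : ℝ => Real.exp t) 1 0 := by
        simpa using Real.hasDerivAt_exp 0
      have h2 : HasDerivAt (fun t : ℝ => S * Real.exp t) S 0 := by
        simpa using h1.const_mul S
      have h3 : HasDerivAt (fun t : ℝ => tv + t) 1 0 := by
        simpa using (hasDerivAt_id (0:ℝ)).const_add tv
      have h5 : HasDerivAt (fun t : ℝ => (n:ℝ) * (tv + t)) (n:ℝ) 0 := by
        simpa using h3.const_mul (n:ℝ)
      have h6 := (((h2.add_const C).sub_const ((m:ℝ) * s)).fun_sub h5).add_const (s^2)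
      convert h6 using 1 <;> try ring
    have hzero := hloc.hasDerivAt_eq_zero hd
    rw [← hSdef]
    linarith [hzero]
  -- totals force s = 0
  have htot : (n:ℝ) * ((m:ℝ) - 2*s) = (n:ℝ) * (m:ℝ) := by
    have h1 : ∑ i, ∑ j, a i j * Real.exp (u i + v j) = ∑ i : Fin n, ((m:ℝ) - 2*s) :=
      Finset.sum_congr rfl fun i _ => hrow i
    have h2 : ∑ j, ∑ i, a i j * Real.exp (u i + v j) = ∑ j : Fin m, (n:ℝ) :=
      Finset.sum_congr rfl fun j _ => hcol j
    have h3 : ∑ i, ∑ j, a i j * Real.exp (u i + v j)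
        = ∑ j, ∑ i, a i j * Real.exp (u i + v j) := Finset.sum_comm
    rw [h1, h2] at h3
    rw [sum_const_fin, sum_const_fin] at h3
    rw [h3]
    ring
  have hn0 : (0:ℝ) < (n:ℝ) := by exact_mod_cast hn
  have hs0 : s = 0 := by
    have := mul_left_cancel₀ (ne_of_gt hn0) htot
    linarith
  refine ⟨u, v, fun i => ?_, hcol⟩
  rw [hrow i, hs0]
  ring

open Finset in
/-- (Improved Forster-type bound.) If `N` has the same entrywise phases as the phase
matrix `Θ` and all its entries have modulus at least 1, then the phase rank of `Θ` is at
least `√(nm)/‖N‖`, where `‖N‖` is the spectral norm of `N`. -/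
theorem sqrt_div_spectralNorm_entrywise_ge_one_le_phaseRank {n m : ℕ}
    (Θ : Matrix (Fin n) (Fin m) ℂ) (hphase : ∀ i j, ‖Θ i j‖ = 1)
    (N : Matrix (Fin n) (Fin m) ℂ)
    (hN : ∀ i j, N i j / ‖N i j‖ = Θ i j)
    (hN1 : ∀ i j, 1 ≤ ‖N i j‖) :
    Real.sqrt (n * m) / matSpectralNorm N ≤ (phaseRank Θ : ℝ) := by
  rcases Nat.eq_zero_or_pos n with hn | hn
  · subst hn
    simp
  rcases Nat.eq_zero_or_pos m with hm | hm
  · subst hm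
    simp
  -- the phase-rank is attained
  have hSne : {r | ∃ M : Matrix (Fin n) (Fin m) ℂ,
      (∀ i j, M i j ≠ 0) ∧ (∀ i j, M i j / ‖M i j‖ = Θ i j)
        ∧ M.rank = r}.Nonempty := by
    refine ⟨Θ.rank, Θ, fun i j => ?_, fun i j => ?_, rfl⟩
    · intro h0
      have := hphase i j
      rw [h0] at this
      simp at this
    · rw [hphase i j]
      simp
  obtain ⟨M, hM0, hMph, hMrank⟩ := Nat.sInf_mem hSne
  set r := phaseRank Θ with hr
  -- Sinkhorn scaling of |M|
  have ha : ∀ i j, 0 < ‖M i j‖ := fun i j => norm_pos_iff.mpr (hM0 i j)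
  obtain ⟨u, v, hrowA, hcolA⟩ := sinkhorn hn hm (fun i j => ‖M i j‖) ha
  set R : Matrix (Fin n) (Fin m) ℂ :=
    fun i j => (Real.exp (u i) : ℂ) * M i j * (Real.exp (v j) : ℂ) with hRdef
  have habsR : ∀ i j, ‖R i j‖
      = ‖M i j‖ * Real.exp (u i + v j) := by
    intro i j
    rw [hRdef]
    simp only [norm_mul, Complex.norm_real, Real.norm_eq_abs, abs_of_pos (Real.exp_pos _), Real.exp_add]
    ring
  have hrowR : ∀ i, ∑ j, ‖R i j‖ = (m:ℝ) := by
    intro i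
    rw [Finset.sum_congr rfl fun j _ => habsR i j]
    exact hrowA i
  have hcolR : ∀ j, ∑ i, ‖R i j‖ = (n:ℝ) := by
    intro j
    rw [Finset.sum_congr rfl fun i _ => habsR i j]
    exact hcolA j
  -- rank of R
  have hrankR : R.rank ≤ r := by
    have hfact : R = Matrix.diagonal (fun i => (Real.exp (u i) : ℂ)) * M
        * Matrix.diagonal (fun j => (Real.exp (v j) : ℂ)) := by
      ext i j
      rw [Matrix.mul_diagonal, Matrix.diagonal_mul, hRdef]
    rw [hfact]
    calc (Matrix.diagonal (fun i => (Real.exp (u i) : ℂ)) * M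
        * Matrix.diagonal (fun j => (Real.exp (v j) : ℂ))).rank
        ≤ (Matrix.diagonal (fun i => (Real.exp (u i) : ℂ)) * M).rank :=
          Matrix.rank_mul_le_left _ _
      _ ≤ M.rank := Matrix.rank_mul_le_right _ _
      _ = r := hMrank
  -- phase alignment of N and R
  have hNR : ∀ i j, (starRingEnd ℂ) (N i j) * R i j = ((‖N i j‖ * ‖R i j‖ : ℝ) : ℂ) := by
    intro i j
    have hNa : (‖N i j‖ : ℂ) ≠ 0 := by
      have := hN1 i j
      simp only [ne_eq, Complex.ofReal_eq_zero]
      intro h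
      rw [h] at this
      linarith
    have hMa : (‖M i j‖ : ℂ) ≠ 0 := by
      have := ha i j
      simp only [ne_eq, Complex.ofReal_eq_zero]
      intro h
      rw [h] at this
      linarith
    have hNe : N i j = (‖N i j‖ : ℂ) * Θ i j := by
      rw [← hN i j]
      field_simp
    have hMe : M i j = (‖M i j‖ : ℂ) * Θ i j := by
      rw [← hMph i j]
      field_simp
    have hRe : R i j = (‖R i j‖ : ℂ) * Θ i j := by
      have h1 : R i j = (Real.exp (u i) : ℂ) * M i j * (Real.exp (v j) : ℂ) := rfl
      conv_lhs => rw [h1, hMe]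
      rw [habsR i j, Real.exp_add]
      push_cast
      ring
    have hΘ1 : (starRingEnd ℂ) (Θ i j) * Θ i j = 1 := by
      rw [← Complex.normSq_eq_conj_mul_self, Complex.normSq_eq_norm_sq, hphase i j]
      norm_num
    conv_lhs => rw [hNe, hRe]
    rw [map_mul, Complex.conj_ofReal]
    push_cast
    linear_combination ((‖N i j‖ : ℂ) * (‖R i j‖ : ℂ)) * hΘ1
  have hN1' : ∀ i j, 1 ≤ ‖N i j‖ := by
    intro i j
    exact hN1 i j
  have hkey := key_ineq hn hm R N r hrankR hrowR hcolR hNR hN1'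
  -- conclude
  have hnm : (0:ℝ) < (n:ℝ) * m := by
    have h1 : (0:ℝ) < (n:ℝ) := by exact_mod_cast hn
    have h2 : (0:ℝ) < (m:ℝ) := by exact_mod_cast hm
    positivity
  have hsq : 0 < Real.sqrt ((n:ℝ)*m) := Real.sqrt_pos.mpr hnm
  have hNop : 0 < matSpectralNorm N := by
    by_contra hc
    push_neg at hc
    have : matSpectralNorm N = 0 := le_antisymm hc (matSpectralNorm_nonneg N)
    rw [this, mul_zero] at hkey
    linarith
  rw [div_le_iff₀ hNop]
  exact hkey
end

section
/- Let Θ be an n×m phase matrix with n ≤ m, and let k be the smallest positive integer such that m < 2^{k−1}/k. Then rank_phase(Θ) ≤ n − ⌊(n−1)/(k−1)⌋. -/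
open Complex Finset

lemma trig_identity (a1 a2 : ℝ) :
    ((Real.sin (a2 - a1) : ℂ)) + (Real.sin (a2 - Real.pi) : ℂ) * Complex.exp ((-a1 : ℝ) * I)
      + (Real.sin (Real.pi - a1) : ℂ) * Complex.exp ((-a2 : ℝ) * I) = 0 := by
  simp only [Complex.exp_mul_I, ← Complex.ofReal_cos, ← Complex.ofReal_sin,
    Real.cos_neg, Real.sin_neg, Real.sin_sub, Real.cos_sub, Real.sin_pi, Real.cos_pi]
  push_cast
  ring_nf

lemma neg_mem_cone {k : ℕ} (u : Fin k → ℂ) (habs : ∀ i, ‖u i‖ = 1)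
    (hgood : ∀ i, ∃ l, ((starRingEnd ℂ) (u i) * u l).im < 0) (l0 : Fin k) :
    ∃ q : Fin k → ℝ, (∀ x, 0 ≤ q x) ∧ u l0 + ∑ x, (q x : ℂ) * u x = 0 := by
  classical
  choose f hf using hgood
  set d : Fin k → ℝ := fun i => -Complex.arg ((starRingEnd ℂ) (u i) * u (f i)) with hd
  have hdpos : ∀ i, 0 < d i := fun i => by
    have := Complex.arg_neg_iff.mpr (hf i)
    simp only [hd]; linarith
  have hdlt : ∀ i, d i < Real.pi := fun i => by
    have := Complex.neg_pi_lt_arg ((starRingEnd ℂ) (u i) * u (f i))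
    simp only [hd]; linarith
  have habs' : ∀ i, ‖(starRingEnd ℂ) (u i) * u (f i)‖ = 1 := fun i => by
    simp [map_mul, habs]
  have hstep : ∀ i, u (f i) = u i * Complex.exp ((-(d i) : ℝ) * I) := by
    intro i
    have h1 : ((‖(starRingEnd ℂ) (u i) * u (f i)‖ : ℝ) : ℂ) *
        Complex.exp ((Complex.arg ((starRingEnd ℂ) (u i) * u (f i)) : ℝ) * I)
        = (starRingEnd ℂ) (u i) * u (f i) := Complex.norm_mul_exp_arg_mul_I _
    rw [habs' i] at h1
    have h2 : u i * ((starRingEnd ℂ) (u i) * u (f i)) = u (f i) := by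
      rw [← mul_assoc, Complex.mul_conj]
      simp [Complex.normSq_eq_norm_sq, habs]
    rw [← h2, ← h1]
    simp only [hd, Complex.ofReal_neg, neg_neg, Complex.ofReal_one, one_mul]
  set S : ℕ → ℝ := fun t => ∑ s ∈ Finset.range t, d (f^[s] l0) with hS
  have hu : ∀ t, u (f^[t] l0) = u l0 * Complex.exp ((-(S t) : ℝ) * I) := by
    intro t
    induction t with
    | zero => simp [hS]
    | succ t ih =>
      rw [Function.iterate_succ_apply', hstep, ih, mul_assoc, ← Complex.exp_add]
      congr 2
      push_cast [hS, Finset.sum_range_succ]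
      ring
  have hSmono : ∀ t1 t2, t1 < t2 → S t1 < S t2 := by
    intro t1 t2 h
    have heq : S t2 - S t1 = ∑ s ∈ Finset.Ico t1 t2, d (f^[s] l0) := by
      rw [hS]; rw [Finset.sum_Ico_eq_sub _ h.le]
    have hpos : 0 < ∑ s ∈ Finset.Ico t1 t2, d (f^[s] l0) :=
      Finset.sum_pos (fun s _ => hdpos _) (by simp [h])
    linarith
  have hS0 : S 0 = 0 := by simp [hS]
  have hSnonneg : ∀ t, 0 ≤ S t := by
    intro t
    cases t with
    | zero => simp [hS0]
    | succ t => have := hSmono 0 (t+1) (Nat.succ_pos t); linarith [hS0]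
  have hul0 : u l0 ≠ 0 := by
    intro h; have := habs l0; rw [h] at this; simp at this
  have keypair : ∀ s1 s2 : ℕ, s1 < s2 → f^[s1] l0 = f^[s2] l0 → ∃ T, Real.pi < S T := by
    intro t1 t2 hlt heq
    have hexp : Complex.exp ((-(S t1) : ℝ) * I) = Complex.exp ((-(S t2) : ℝ) * I) := by
      have h1 := hu t1; have h2 := hu t2
      rw [heq] at h1
      rw [h1] at h2
      exact (mul_left_cancel₀ hul0 h2.symm).symm
    rw [Complex.exp_eq_exp_iff_exists_int] at hexp
    obtain ⟨nn, hnn⟩ := hexp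
    have him := congrArg Complex.im hnn
    simp at him
    -- him should say -S t1 = -S t2 + nn * (2 * π)
    have hr : S t2 - S t1 = nn * (2 * Real.pi) := by linarith
    have hlt' : S t1 < S t2 := hSmono _ _ hlt
    have hpi : 0 < Real.pi := Real.pi_pos
    have hn1 : (1 : ℝ) ≤ (nn : ℝ) := by
      by_contra hcon
      push_neg at hcon
      have h0 : (nn : ℝ) ≤ 0 := by
        have : nn < 1 := by exact_mod_cast hcon
        have : nn ≤ 0 := by omega
        exact_mod_cast this
      nlinarith
    exact ⟨t2, by nlinarith [hSnonneg t1]⟩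
  have hbig : ∃ T, Real.pi < S T := by
    obtain ⟨t1, _, t2, _, hne, heq⟩ :=
      Finset.exists_ne_map_eq_of_card_lt_of_maps_to (s := Finset.range (k+1))
        (t := (Finset.univ : Finset (Fin k)))
        (by simp) (f := fun t => f^[t] l0) (fun a _ => Finset.mem_univ _)
    rcases hne.lt_or_gt with hlt | hlt
    · exact keypair t1 t2 hlt heq
    · exact keypair t2 t1 hlt heq.symm
  set c := Nat.find hbig with hc
  have hcgt : Real.pi < S c := Nat.find_spec hbig
  have hcpos : 0 < c := by
    rcases Nat.eq_zero_or_pos c with h | h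
    · rw [h, hS0] at hcgt; linarith [Real.pi_pos]
    · exact h
  have hcmin : S (c - 1) ≤ Real.pi := by
    by_contra hcon
    push_neg at hcon
    exact Nat.find_min hbig (Nat.sub_lt hcpos one_pos) hcon
  have hSc' : S ((c-1)+1) = S (c-1) + d (f^[c-1] l0) := by
    simp only [hS, Finset.sum_range_succ]
  have hSc : S c = S (c-1) + d (f^[c-1] l0) := by
    rwa [show (c-1)+1 = c by omega] at hSc'
  have hsd : 0 < Real.sin (d (f^[c-1] l0)) :=
    Real.sin_pos_of_pos_of_lt_pi (hdpos _) (hdlt _)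
  have hs1 : 0 ≤ Real.sin (S c - Real.pi) := by
    apply Real.sin_nonneg_of_nonneg_of_le_pi
    · linarith
    · have := hdlt (f^[c-1] l0); linarith
  have hs2 : 0 ≤ Real.sin (Real.pi - S (c-1)) := by
    apply Real.sin_nonneg_of_nonneg_of_le_pi
    · linarith
    · linarith [hSnonneg (c-1)]
  have hkey : (Real.sin (d (f^[c-1] l0)) : ℂ) * u l0
      + (Real.sin (S c - Real.pi) : ℂ) * u (f^[c-1] l0)
      + (Real.sin (Real.pi - S (c-1)) : ℂ) * u (f^[c] l0) = 0 := by
    have hub : u (f^[c-1] l0) = u l0 * Complex.exp ((-(S (c-1)) : ℝ) * I) := hu (c-1)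
    have huc : u (f^[c] l0) = u l0 * Complex.exp ((-(S c) : ℝ) * I) := hu c
    have hdd : d (f^[c-1] l0) = S c - S (c-1) := by linarith
    rw [hub, huc, hdd]
    have hti := trig_identity (S (c-1)) (S c)
    calc (Real.sin (S c - S (c-1)) : ℂ) * u l0
        + (Real.sin (S c - Real.pi) : ℂ) * (u l0 * Complex.exp ((-(S (c-1)) : ℝ) * I))
        + (Real.sin (Real.pi - S (c-1)) : ℂ) * (u l0 * Complex.exp ((-(S c) : ℝ) * I))
        = u l0 * ((Real.sin (S c - S (c-1)) : ℂ)
          + (Real.sin (S c - Real.pi) : ℂ) * Complex.exp ((-(S (c-1)) : ℝ) * I)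
          + (Real.sin (Real.pi - S (c-1)) : ℂ) * Complex.exp ((-(S c) : ℝ) * I)) := by ring
      _ = 0 := by rw [hti, mul_zero]
  have hA : 0 ≤ Real.sin (S c - Real.pi) / Real.sin (d (f^[c-1] l0)) := by positivity
  have hB : 0 ≤ Real.sin (Real.pi - S (c-1)) / Real.sin (d (f^[c-1] l0)) := by positivity
  refine ⟨fun x => (if x = f^[c-1] l0 then Real.sin (S c - Real.pi) / Real.sin (d (f^[c-1] l0)) else 0)
    + (if x = f^[c] l0 then Real.sin (Real.pi - S (c-1)) / Real.sin (d (f^[c-1] l0)) else 0),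
    ?_, ?_⟩
  · intro x
    apply add_nonneg
    · split_ifs with h
      exacts [hA, le_rfl]
    · split_ifs with h
      exacts [hB, le_rfl]
  · have exp1 : ∀ x : Fin k,
        ((((if x = f^[c-1] l0 then Real.sin (S c - Real.pi) / Real.sin (d (f^[c-1] l0)) else 0)
          + (if x = f^[c] l0 then Real.sin (Real.pi - S (c-1)) / Real.sin (d (f^[c-1] l0)) else 0) : ℝ)) : ℂ) * u x
        = (if x = f^[c-1] l0 then ((Real.sin (S c - Real.pi) / Real.sin (d (f^[c-1] l0)) : ℝ) : ℂ) * u x else 0)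
          + (if x = f^[c] l0 then ((Real.sin (Real.pi - S (c-1)) / Real.sin (d (f^[c-1] l0)) : ℝ) : ℂ) * u x else 0) := by
      intro x
      split_ifs <;> push_cast <;> ring
    rw [Finset.sum_congr rfl (fun x _ => exp1 x), Finset.sum_add_distrib,
      Finset.sum_ite_eq', Finset.sum_ite_eq']
    simp only [Finset.mem_univ, if_true]
    have hsd' : (Real.sin (d (f^[c-1] l0)) : ℂ) ≠ 0 := by
      exact_mod_cast ne_of_gt hsd
    rw [Complex.ofReal_div, Complex.ofReal_div]
    set sdC : ℂ := (Real.sin (d (f^[c-1] l0)) : ℂ) with hsdC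
    set XC : ℂ := (Real.sin (S c - Real.pi) : ℂ) with hXC
    set YC : ℂ := (Real.sin (Real.pi - S (c-1)) : ℂ) with hYC
    apply mul_left_cancel₀ hsd'
    rw [mul_zero]
    field_simp
    linear_combination hkey

lemma exists_pos_combo {k : ℕ} (u : Fin k → ℂ) (habs : ∀ i, ‖u i‖ = 1)
    (hgood : ∀ i, ∃ l, ((starRingEnd ℂ) (u i) * u l).im < 0) :
    ∃ r : Fin k → ℝ, (∀ i, 0 < r i) ∧ ∑ i, (r i : ℂ) * u i = 0 := by
  classical
  choose q hq0 hqsum using neg_mem_cone u habs hgood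
  refine ⟨fun i => 1 + ∑ l, q l i, ?_, ?_⟩
  · intro i
    have h0 : 0 ≤ ∑ l, q l i := Finset.sum_nonneg fun l _ => hq0 l i
    show 0 < 1 + ∑ l, q l i
    linarith
  · have expand : ∀ i : Fin k, ((1 + ∑ l, q l i : ℝ) : ℂ) * u i
        = u i + ∑ l, (q l i : ℂ) * u i := by
      intro i
      push_cast
      rw [add_mul, one_mul, Finset.sum_mul]
    rw [Finset.sum_congr rfl fun i _ => expand i, Finset.sum_add_distrib]
    rw [Finset.sum_comm]
    have hneg : ∀ l : Fin k, ∑ i, (q l i : ℂ) * u i = -u l := by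
      intro l
      linear_combination hqsum l
    simp [hneg]



lemma fract_le_half (y : ℝ) (h : 0 ≤ Real.sin (2 * Real.pi * y)) : Int.fract y ≤ 1/2 := by
  have hper : Real.sin (2 * Real.pi * y) = Real.sin (2 * Real.pi * Int.fract y) := by
    have : 2 * Real.pi * y = 2 * Real.pi * Int.fract y + (⌊y⌋ : ℤ) * (2 * Real.pi) := by
      rw [Int.fract]; push_cast; ring
    rw [this, Real.sin_add_int_mul_two_pi]
  by_contra hcon
  push_neg at hcon
  have hlt : Int.fract y < 1 := Int.fract_lt_one y
  have hx : Real.sin (2 * Real.pi * Int.fract y) < 0 := by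
    have heq : 2 * Real.pi * Int.fract y = (2 * Real.pi * Int.fract y - 2 * Real.pi) + (1 : ℤ) * (2 * Real.pi) := by
      push_cast; ring
    rw [heq, Real.sin_add_int_mul_two_pi]
    apply Real.sin_neg_of_neg_of_neg_pi_lt
    · nlinarith [Real.pi_pos]
    · nlinarith [Real.pi_pos]
  rw [hper] at h
  linarith

lemma arc_floor_range (P : ℕ) (hP : 0 < P) (a : ℝ) (s : ℕ)
    (h : Int.fract (((s : ℝ) + a) / (2*P)) ≤ 1/2) :
    0 ≤ ⌊((s : ℝ) + a) - (2*P) * ⌊((s : ℝ) + a) / (2*P)⌋⌋ ∧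
      ⌊((s : ℝ) + a) - (2*P) * ⌊((s : ℝ) + a) / (2*P)⌋⌋ ≤ (P : ℤ) := by
  have hN : (0:ℝ) < 2*P := by positivity
  have hvf : ((s : ℝ) + a) - (2*P) * ⌊((s : ℝ) + a) / (2*P)⌋ = (2*P) * Int.fract (((s : ℝ) + a) / (2*P)) := by
    rw [Int.fract]
    field_simp
  constructor
  · apply Int.floor_nonneg.mpr
    rw [hvf]
    have := Int.fract_nonneg (((s : ℝ) + a) / (2*P))
    nlinarith
  · rw [hvf]
    have h2 : (2*(P:ℝ)) * Int.fract (((s : ℝ) + a) / (2*P)) ≤ P := by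
      nlinarith
    calc ⌊(2*(P:ℝ)) * Int.fract (((s : ℝ) + a) / (2*P))⌋ ≤ ⌊(P:ℝ)⌋ := Int.floor_le_floor h2
      _ = (P : ℤ) := Int.floor_natCast P

lemma arc_inj (N : ℕ) (hN : 0 < N) (a : ℝ) (s s' : ℕ) (hs : s < N) (hs' : s' < N)
    (he : ⌊((s : ℝ) + a) - N * ⌊((s : ℝ) + a) / N⌋⌋ = ⌊((s' : ℝ) + a) - N * ⌊((s' : ℝ) + a) / N⌋⌋) :
    s = s' := by
  set v := ((s : ℝ) + a) - N * ⌊((s : ℝ) + a) / N⌋ with hv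
  set v' := ((s' : ℝ) + a) - N * ⌊((s' : ℝ) + a) / N⌋ with hv'
  set z : ℤ := (s' : ℤ) - (s : ℤ) - N * (⌊((s' : ℝ) + a) / N⌋ - ⌊((s : ℝ) + a) / N⌋) with hz
  have hvz : v' = v + (z : ℝ) := by
    rw [hv, hv', hz]; push_cast; ring
  have hfl : ⌊v'⌋ = ⌊v⌋ + z := by rw [hvz, Int.floor_add_intCast]
  have hz0 : z = 0 := by omega
  rw [hz] at hz0
  have hdvd : (N : ℤ) ∣ ((s' : ℤ) - (s : ℤ)) :=
    ⟨(⌊((s' : ℝ) + a) / N⌋ - ⌊((s : ℝ) + a) / N⌋), by omega⟩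
  have h0 : (s' : ℤ) - (s : ℤ) = 0 := by
    apply Int.eq_zero_of_abs_lt_dvd hdvd
    rw [abs_lt]
    omega
  omega

lemma grid_good (m k P : ℕ) (hP : 0 < P) (w : Fin m → Fin k → ℝ)
    (hcard : m * k * (2*P) * (P+1)^(k-1) < (2*P)^k) :
    ∃ β : Fin k → ℝ, ∀ j i, ∃ l, Real.sin ((β l + w j l) - (β i + w j i)) < 0 := by
  classical
  set N := 2*P with hNdef
  have hN : 0 < N := by omega
  set βof : (Fin k → Fin N) → Fin k → ℝ := fun t x => 2*Real.pi*(t x)/N with hβof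
  by_contra hcon
  push_neg at hcon
  -- every grid point is bad for some (j,i)
  have hbad : ∀ t : Fin k → Fin N, ∃ j i, ∀ l,
      0 ≤ Real.sin ((βof t l + w j l) - (βof t i + w j i)) := by
    intro t
    obtain ⟨j, i, hji⟩ := hcon (βof t)
    exact ⟨j, i, hji⟩
  set Bad : Fin m → Fin k → Finset (Fin k → Fin N) := fun j i =>
    Finset.univ.filter (fun t => ∀ l, 0 ≤ Real.sin ((βof t l + w j l) - (βof t i + w j i)))
    with hBad
  -- each Bad j i is small
  have hbadcard : ∀ j i, (Bad j i).card ≤ N * (P+1)^(k-1) := by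
    intro j i
    -- offset for coordinate l given value v of t i
    set A : Fin k → Fin N → ℝ := fun l v =>
      (w j l - w j i - 2*Real.pi*v/N) * N / (2*Real.pi) with hA
    have hangle : ∀ (t : Fin k → Fin N) (l : Fin k),
        (βof t l + w j l) - (βof t i + w j i) = 2*Real.pi*(((t l : ℝ) + A l (t i))/N) := by
      intro t l
      rw [hβof, hA]
      have hπ : Real.pi ≠ 0 := Real.pi_ne_zero
      have hNne : (N:ℝ) ≠ 0 := by positivity
      field_simp
      ring
    have hfr : ∀ t ∈ Bad j i, ∀ l : Fin k,
        Int.fract (((t l : ℝ) + A l (t i)) / (2*P)) ≤ 1/2 := by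
      intro t ht l
      rw [hBad, Finset.mem_filter] at ht
      have := ht.2 l
      rw [hangle t l] at this
      apply fract_le_half
      have : ((2:ℝ)*P) = N := by rw [hNdef]; push_cast; ring
      rw [this]
      exact ht.2 l |>.trans_eq (by rw [hangle t l])
    -- injection into Fin N × ({l // l ≠ i} → Fin (P+1))
    set F : (Fin k → Fin N) → Fin N × ({l : Fin k // l ≠ i} → Fin (P+1)) := fun t =>
      (t i, fun l => ⟨min (Int.toNat ⌊((t l.1 : ℝ) + A l.1 (t i)) - (2*P) * ⌊((t l.1 : ℝ) + A l.1 (t i)) / (2*P)⌋⌋) P,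
        by omega⟩) with hF
    have hinj : Set.InjOn F (Bad j i) := by
      intro t ht t' ht' heq
      have hti : t i = t' i := congrArg Prod.fst heq
      funext l
      by_cases hl : l = i
      · rw [hl]; exact hti
      · have h2 := congrFun (congrArg Prod.snd heq) ⟨l, hl⟩
        simp only [hF] at h2
        have hb1 := hfr t ht l
        have hb2 := hfr t' ht' l
        rw [hti] at hb1
        obtain ⟨hlo1, hhi1⟩ := arc_floor_range P hP (A l (t' i)) (t l) hb1
        obtain ⟨hlo2, hhi2⟩ := arc_floor_range P hP (A l (t' i)) (t' l) hb2
        have hfl : ⌊((t l : ℝ) + A l (t' i)) - (2*P) * ⌊((t l : ℝ) + A l (t' i)) / (2*P)⌋⌋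
            = ⌊((t' l : ℝ) + A l (t' i)) - (2*P) * ⌊((t' l : ℝ) + A l (t' i)) / (2*P)⌋⌋ := by
          have := Fin.mk.injEq .. ▸ h2
          simp only [Fin.mk.injEq, hti] at h2 ⊢
          omega
        have := arc_inj N hN (A l (t' i)) (t l) (t' l) (t l).2 (t' l).2 (by
          have hcast : ((N:ℕ):ℝ) = 2*(P:ℝ) := by rw [hNdef]; push_cast; ring
          rw [hcast]
          exact hfl)
        exact Fin.val_injective this
    have hmaps : ∀ t ∈ Bad j i, F t ∈ (Finset.univ : Finset (Fin N × ({l : Fin k // l ≠ i} → Fin (P+1)))) :=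
      fun t _ => Finset.mem_univ _
    have hcard1 := Finset.card_le_card_of_injOn F hmaps hinj
    have hcard2 : (Finset.univ : Finset (Fin N × ({l : Fin k // l ≠ i} → Fin (P+1)))).card
        = N * (P+1)^(k-1) := by
      rw [Finset.card_univ]
      rw [Fintype.card_prod, Fintype.card_fin, Fintype.card_fun, Fintype.card_fin]
      congr 1
      congr 1
      rw [Fintype.card_subtype_compl]
      simp
    omega
  -- union bound
  have hcover : (Finset.univ : Finset (Fin k → Fin N)) ⊆
      (Finset.univ : Finset (Fin m × Fin k)).biUnion (fun p => Bad p.1 p.2) := by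
    intro t _
    obtain ⟨j, i, hji⟩ := hbad t
    apply Finset.mem_biUnion.mpr
    exact ⟨(j, i), Finset.mem_univ _, by rw [hBad]; simp only [Finset.mem_filter]; exact ⟨Finset.mem_univ _, hji⟩⟩
  have hcount := Finset.card_le_card hcover
  have hcount2 := Finset.card_biUnion_le (s := (Finset.univ : Finset (Fin m × Fin k))) (t := fun p => Bad p.1 p.2)
  have hsum : ∑ p : Fin m × Fin k, (Bad p.1 p.2).card ≤ (m * k) * (N * (P+1)^(k-1)) := by
    calc ∑ p : Fin m × Fin k, (Bad p.1 p.2).card ≤ ∑ _p : Fin m × Fin k, N * (P+1)^(k-1) :=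
          Finset.sum_le_sum (fun p _ => hbadcard p.1 p.2)
      _ = (m * k) * (N * (P+1)^(k-1)) := by
          rw [Finset.sum_const, Finset.card_univ, Fintype.card_prod, Fintype.card_fin, Fintype.card_fin]
          simp [mul_comm]
  have huniv : (Finset.univ : Finset (Fin k → Fin N)).card = N^k := by
    rw [Finset.card_univ, Fintype.card_fun, Fintype.card_fin, Fintype.card_fin]
  have : (N:ℕ)^k ≤ m * k * (N * (P+1)^(k-1)) := by
    rw [← huniv]
    calc (Finset.univ : Finset (Fin k → Fin N)).card
        ≤ ((Finset.univ : Finset (Fin m × Fin k)).biUnion (fun p => Bad p.1 p.2)).card := hcount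
      _ ≤ ∑ p : Fin m × Fin k, (Bad p.1 p.2).card := hcount2
      _ ≤ m * k * (N * (P+1)^(k-1)) := hsum
  have : m * k * (2*P) * (P+1)^(k-1) < m * k * (2*P) * (P+1)^(k-1) := by
    calc m * k * (2*P) * (P+1)^(k-1) < (2*P)^k := hcard
      _ = N^k := by rw [hNdef]
      _ ≤ m * k * (N * (P+1)^(k-1)) := this
      _ = m * k * (2*P) * (P+1)^(k-1) := by rw [hNdef]; ring
  omega

lemma pow_succ_bound (P n : ℕ) : (P+1)^(n+1) ≤ P^(n+1) + (n+1)*(P+1)^n := by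
  induction n with
  | zero => simp
  | succ n ih =>
    have hple : P^(n+1) ≤ (P+1)^(n+1) := Nat.pow_le_pow_left (by omega) _
    calc (P+1)^(n+2) = (P+1) * (P+1)^(n+1) := by ring
      _ ≤ (P+1) * (P^(n+1) + (n+1)*(P+1)^n) := Nat.mul_le_mul_left _ ih
      _ = P^(n+2) + P^(n+1) + (n+1)*(P+1)^(n+1) := by ring
      _ ≤ P^(n+2) + (P+1)^(n+1) + (n+1)*(P+1)^(n+1) := by omega
      _ = P^(n+2) + (n+2)*(P+1)^(n+1) := by ring

lemma exists_P_aux (Q e P : ℕ) (hP : 1 ≤ P) (hcore : Q*(e+1)*2^e < P) :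
    Q * (P+1)^(e+1) < (Q+1) * P^(e+1) := by
  have h2 : Q*(e+1)*2^e * P^e < P * P^e :=
    mul_lt_mul_of_pos_right hcore (pow_pos (by omega) e)
  calc Q * (P+1)^(e+1) ≤ Q * (P^(e+1) + (e+1)*(P+1)^e) :=
        Nat.mul_le_mul_left _ (pow_succ_bound P e)
    _ = Q * P^(e+1) + Q * (e+1) * (P+1)^e := by ring
    _ ≤ Q * P^(e+1) + Q * (e+1) * (2^e * P^e) := by
        gcongr
        calc (P+1)^e ≤ (2*P)^e := Nat.pow_le_pow_left (by omega) _
          _ = 2^e * P^e := by rw [mul_pow]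
    _ = Q * P^(e+1) + Q*(e+1)*2^e * P^e := by ring
    _ < Q * P^(e+1) + P * P^e := by omega
    _ = (Q+1) * P^(e+1) := by ring

lemma exists_P (m k : ℕ) (hk : 1 ≤ k) (hmk : m * k < 2^(k-1)) :
    ∃ P, 0 < P ∧ m * k * (2*P) * (P+1)^(k-1) < (2*P)^k := by
  rcases Nat.lt_or_ge k 2 with hk2 | hk2
  · have hk1 : k = 1 := by omega
    subst hk1
    simp at hmk
    refine ⟨1, one_pos, ?_⟩
    simp [hmk]
  · refine ⟨k * 2^(2*k), by positivity, ?_⟩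
    set P := k * 2^(2*k) with hPdef
    have hPpos : 1 ≤ P := by have : 0 < P := by positivity
                             omega
    have hQ1 : (2^(k-1) - 1) + 1 = 2^(k-1) := by
      have : (1:ℕ) ≤ 2^(k-1) := Nat.one_le_two_pow
      omega
    have hcore : (2^(k-1)-1)*((k-2)+1)*2^(k-2) < P := by
      have hexp : (2:ℕ)^((k-1)+(k-2)) < 2^(2*k) := Nat.pow_lt_pow_right (by omega) (by omega)
      calc (2^(k-1)-1)*((k-2)+1)*2^(k-2) ≤ 2^(k-1) * k * 2^(k-2) := by
            gcongr <;> omega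
        _ = k * 2^((k-1)+(k-2)) := by rw [pow_add]; ring
        _ < k * 2^(2*k) := mul_lt_mul_of_pos_left hexp (by omega)
    have hkey := exists_P_aux (2^(k-1)-1) (k-2) P hPpos hcore
    rw [show (k-2)+1 = k-1 by omega, hQ1] at hkey
    have h2 : (2:ℕ)^(k-1) * 2 = 2^k := by
      rw [← pow_succ]
      congr 1
      omega
    have h3 : P^(k-1) * P = P^k := by
      rw [← pow_succ]
      congr 1
      omega
    calc m * k * (2*P) * (P+1)^(k-1) ≤ (2^(k-1)-1) * (2*P) * (P+1)^(k-1) := by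
          gcongr
          omega
      _ = (2*P) * ((2^(k-1)-1) * (P+1)^(k-1)) := by ring
      _ < (2*P) * (2^(k-1) * P^(k-1)) := mul_lt_mul_of_pos_left hkey (by omega)
      _ = (2^(k-1) * 2) * (P^(k-1) * P) := by ring
      _ = 2^k * P^k := by rw [h2, h3]
      _ = (2*P)^k := (mul_pow 2 P k).symm

lemma group_lemma (k m : ℕ) (hk : 1 ≤ k) (hmk : m * k < 2^(k-1))
    (Θ' : Fin k → Fin m → ℂ) (h1 : ∀ i j, ‖Θ' i j‖ = 1) :
    ∃ (c : Fin k → ℂ) (r : Fin k → Fin m → ℝ), (∀ i, c i ≠ 0) ∧ (∀ i j, 0 < r i j) ∧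
      (∀ j, ∑ i, c i * (((r i j : ℝ) : ℂ) * Θ' i j) = 0) := by
  classical
  obtain ⟨P, hP, hcard⟩ := exists_P m k hk hmk
  set w : Fin m → Fin k → ℝ := fun j i => Complex.arg (Θ' i j) with hw
  obtain ⟨β, hβ⟩ := grid_good m k P hP w hcard
  set c : Fin k → ℂ := fun i => Complex.exp ((β i : ℝ) * I) with hc
  have hΘexp : ∀ i j, Θ' i j = Complex.exp ((w j i : ℝ) * I) := by
    intro i j
    rw [hw]
    conv_lhs => rw [← Complex.norm_mul_exp_arg_mul_I (Θ' i j)]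
    rw [h1 i j]
    simp
  have hcu : ∀ i j, c i * Θ' i j = Complex.exp (((β i + w j i : ℝ) : ℂ) * I) := by
    intro i j
    rw [hc, hΘexp i j, ← Complex.exp_add]
    congr 1
    push_cast
    ring
  have habs : ∀ j i, ‖c i * Θ' i j‖ = 1 := by
    intro j i
    rw [hcu]
    exact Complex.norm_exp_ofReal_mul_I _
  have hgood : ∀ j i, ∃ l, ((starRingEnd ℂ) (c i * Θ' i j) * (c l * Θ' l j)).im < 0 := by
    intro j i
    obtain ⟨l, hl⟩ := hβ j i
    refine ⟨l, ?_⟩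
    rw [hcu i j, hcu l j]
    have hconj : (starRingEnd ℂ) (Complex.exp (((β i + w j i : ℝ) : ℂ) * I))
        = Complex.exp ((-(β i + w j i) : ℝ) * I) := by
      rw [← Complex.exp_conj]
      congr 1
      simp [Complex.conj_ofReal]
      push_cast
      ring
    rw [hconj, ← Complex.exp_add]
    have : ((-(β i + w j i) : ℝ) : ℂ) * I + ((β l + w j l : ℝ) : ℂ) * I
        = (((β l + w j l) - (β i + w j i) : ℝ) : ℂ) * I := by
      push_cast
      ring
    rw [this, Complex.exp_ofReal_mul_I_im]
    exact hl
  have hex : ∀ j : Fin m, ∃ r : Fin k → ℝ, (∀ i, 0 < r i) ∧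
      ∑ i, (r i : ℂ) * (c i * Θ' i j) = 0 := by
    intro j
    exact exists_pos_combo (fun i => c i * Θ' i j) (habs j) (hgood j)
  choose rr hrpos hrsum using hex
  refine ⟨c, fun i j => rr j i, fun i => Complex.exp_ne_zero _, fun i j => hrpos j i, ?_⟩
  intro j
  have := hrsum j
  calc ∑ i, c i * (((rr j i : ℝ) : ℂ) * Θ' i j)
      = ∑ i, ((rr j i : ℝ) : ℂ) * (c i * Θ' i j) := by
        apply Finset.sum_congr rfl
        intro i _
        ring
    _ = 0 := this

/-- Let `Θ` be an `n × m` phase matrix with `n ≤ m` and let `k` be the smallest positive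
integer with `m < 2^{k-1}/k`. Then `rank_phase(Θ) ≤ n - ⌊(n-1)/(k-1)⌋`. -/
theorem phaseRank_upper_bound {n m k : ℕ} (hnm : n ≤ m)
    (hk : 1 ≤ k) (hkm : (m : ℝ) < 2 ^ (k - 1) / k)
    (hkmin : ∀ k' : ℕ, 1 ≤ k' → (m : ℝ) < 2 ^ (k' - 1) / k' → k ≤ k')
    (Θ : Matrix (Fin n) (Fin m) ℂ) (hphase : ∀ i j, ‖Θ i j‖ = 1) :
    phaseRank Θ ≤ n - (n - 1) / (k - 1) := by
  classical
  set t := (n - 1) / (k - 1) with ht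
  rcases Nat.eq_zero_or_pos t with ht0 | htpos
  · -- trivial case: bound is n
    have hmem : Θ.rank ∈ {r | ∃ M : Matrix (Fin n) (Fin m) ℂ,
        (∀ i j, M i j ≠ 0) ∧ (∀ i j, M i j / ‖M i j‖ = Θ i j) ∧ M.rank = r} := by
      refine ⟨Θ, fun i j => ?_, fun i j => ?_, rfl⟩
      · intro h
        have := hphase i j
        rw [h] at this
        simp at this
      · rw [hphase i j]
        simp
    have h1 : phaseRank Θ ≤ Θ.rank := Nat.sInf_le hmem
    have h2 : Θ.rank ≤ n := by
      have := Matrix.rank_le_card_height Θ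
      simpa using this
    omega
  · -- main case
    have hk2 : 2 ≤ k := by
      by_contra hcon
      have hk1 : k = 1 := by omega
      rw [hk1] at ht
      simp at ht
      omega
    have hkpos : 0 < k - 1 := by omega
    have hmk : m * k < 2^(k-1) := by
      have hkR : (0:ℝ) < k := by positivity
      have : (m:ℝ) * k < 2^(k-1) := by
        rw [div_eq_mul_inv] at hkm
        calc (m:ℝ) * k < (2^(k-1) * (k:ℝ)⁻¹) * k := by
              apply mul_lt_mul_of_pos_right hkm hkR
          _ = 2^(k-1) := by field_simp
      have hcast : ((m * k : ℕ) : ℝ) < ((2^(k-1) : ℕ) : ℝ) := by push_cast; linarith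
      exact_mod_cast hcast
    have hnk : k ≤ n := by
      have : k - 1 ≤ n - 1 := by
        by_contra hcon
        push_neg at hcon
        have : (n-1)/(k-1) = 0 := Nat.div_eq_of_lt hcon
        omega
      omega
    have hn1 : 1 ≤ n := by omega
    have htkn : t * (k-1) ≤ n - 1 := by
      rw [ht]
      exact Nat.div_mul_le_self _ _
    -- row indices of group g
    have hrow : ∀ (g : Fin t) (i : Fin k), g.1 * (k-1) + i.1 < n := by
      intro g i
      have h1 : (g.1 + 1) * (k-1) ≤ t * (k-1) := Nat.mul_le_mul_right _ (by omega)
      have h2 : g.1 * (k-1) + i.1 ≤ g.1 * (k-1) + (k-1) := by omega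
      have h3 : g.1 * (k-1) + (k-1) = (g.1 + 1) * (k-1) := by ring
      omega
    have hrow2 : ∀ (g : Fin t), (g.1 + 1) * (k-1) < n := by
      intro g
      have h1 : (g.1 + 1) * (k-1) ≤ t * (k-1) := Nat.mul_le_mul_right _ (by omega)
      omega
    set rowIdx : Fin t → Fin k → Fin n := fun g i => ⟨g.1 * (k-1) + i.1, hrow g i⟩ with hrowIdx
    -- apply group lemma to each group
    have hgrp := fun g : Fin t => group_lemma k m (by omega) hmk
      (fun i j => Θ (rowIdx g i) j) (fun i j => hphase _ _)
    choose cc rr hcne hrpos hsum using hgrp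
    -- scaling factors
    set σ : ℕ → Fin m → ℝ := fun g => Nat.rec (fun _ => 1)
      (fun g' ih => fun j => if h : g' + 1 < t then
        ih j * rr ⟨g', by omega⟩ ⟨k-1, by omega⟩ j / rr ⟨g'+1, h⟩ ⟨0, by omega⟩ j else 1) g
      with hσ
    have hσ0 : ∀ j, σ 0 j = 1 := fun _ => rfl
    have hσs : ∀ g j, σ (g+1) j = if h : g + 1 < t then
        σ g j * rr ⟨g, by omega⟩ ⟨k-1, by omega⟩ j / rr ⟨g+1, h⟩ ⟨0, by omega⟩ j else 1 :=
      fun _ _ => rfl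
    have hσpos : ∀ g j, 0 < σ g j := by
      intro g
      induction g with
      | zero => intro j; rw [hσ0]; norm_num
      | succ g ih =>
        intro j
        rw [hσs]
        split_ifs with h
        · have h1 := ih j
          have h2 := hrpos ⟨g, by omega⟩ ⟨k-1, by omega⟩ j
          have h3 := hrpos ⟨g+1, h⟩ ⟨0, by omega⟩ j
          positivity
        · norm_num
    -- magnitudes
    set mag : Fin n → Fin m → ℝ := fun ρ j =>
      if h : (ρ:ℕ) < t*(k-1) then
        σ ((ρ:ℕ)/(k-1)) j * rr ⟨(ρ:ℕ)/(k-1), by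
            rw [Nat.div_lt_iff_lt_mul (by omega : 0 < k-1)]; exact h⟩
          ⟨(ρ:ℕ) % (k-1), by have := Nat.mod_lt (ρ:ℕ) (show 0 < k-1 by omega); omega⟩ j
      else if h2 : (ρ:ℕ) = t*(k-1) then
        σ (t-1) j * rr ⟨t-1, by omega⟩ ⟨k-1, by omega⟩ j
      else 1
      with hmag
    have hmagpos : ∀ ρ j, 0 < mag ρ j := by
      intro ρ j
      rw [hmag]
      simp only
      split_ifs with h h2
      · exact mul_pos (hσpos _ _) (hrpos _ _ _)
      · exact mul_pos (hσpos _ _) (hrpos _ _ _)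
      · norm_num
    -- group magnitude formula
    have hmagGroup : ∀ (g : Fin t) (i : Fin k) (j : Fin m),
        mag (rowIdx g i) j = σ g.1 j * rr g i j := by
      intro g i j
      have hival : i.1 ≤ k - 1 := by omega
      rcases Nat.lt_or_ge i.1 (k-1) with hi | hi
      · -- interior row of the group
        have hval : ((rowIdx g i : Fin n) : ℕ) = g.1 * (k-1) + i.1 := rfl
        have hlt : ((rowIdx g i : Fin n) : ℕ) < t * (k-1) := by
          rw [hval]
          have h1 : (g.1 + 1) * (k-1) ≤ t * (k-1) := Nat.mul_le_mul_right _ (by omega)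
          have h3 : g.1 * (k-1) + (k-1) = (g.1 + 1) * (k-1) := by ring
          omega
        rw [hmag]
        simp only
        rw [dif_pos hlt]
        have hdm : g.1 * (k-1) + i.1 = (k-1) * g.1 + i.1 := by ring
        have hdiv : ((rowIdx g i : Fin n) : ℕ) / (k-1) = g.1 := by
          rw [hval, hdm, Nat.mul_add_div (by omega), Nat.div_eq_of_lt hi]
          omega
        have hmod : ((rowIdx g i : Fin n) : ℕ) % (k-1) = i.1 := by
          rw [hval, hdm, Nat.mul_add_mod, Nat.mod_eq_of_lt hi]
        congr 1
        · rw [hdiv]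
        · congr 1 <;> [exact Fin.ext hdiv; exact Fin.ext hmod]
      · -- last row of the group
        have hieq : i.1 = k - 1 := by omega
        have hval : ((rowIdx g i : Fin n) : ℕ) = (g.1 + 1) * (k-1) := by
          show g.1 * (k-1) + i.1 = (g.1+1) * (k-1)
          rw [hieq]; ring
        rcases Nat.lt_or_ge (g.1 + 1) t with hg | hg
        · -- shared with next group: use σ recursion
          have hlt : ((rowIdx g i : Fin n) : ℕ) < t * (k-1) := by
            rw [hval]
            exact mul_lt_mul_of_pos_right hg (by omega)
          rw [hmag]
          simp only
          rw [dif_pos hlt]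
          have hdm : (g.1 + 1) * (k-1) = (k-1) * (g.1 + 1) + 0 := by ring
          have hdiv : ((rowIdx g i : Fin n) : ℕ) / (k-1) = g.1 + 1 := by
            rw [hval, hdm, Nat.mul_add_div (by omega)]
            simp
          have hmod : ((rowIdx g i : Fin n) : ℕ) % (k-1) = 0 := by
            rw [hval, hdm, Nat.mul_add_mod]
            simp
          have hstep : σ (g.1 + 1) j = σ g.1 j * rr ⟨g.1, by omega⟩ ⟨k-1, by omega⟩ j
              / rr ⟨g.1+1, hg⟩ ⟨0, by omega⟩ j := by
            rw [hσs, dif_pos hg]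
          have hrrdiv : rr ⟨((rowIdx g i : Fin n) : ℕ)/(k-1), by
              rw [Nat.div_lt_iff_lt_mul (by omega : 0 < k-1)]; exact hlt⟩
              ⟨((rowIdx g i : Fin n) : ℕ) % (k-1), by
                have := Nat.mod_lt ((rowIdx g i : Fin n) : ℕ) (show 0 < k-1 by omega); omega⟩ j
              = rr ⟨g.1+1, hg⟩ ⟨0, by omega⟩ j := by
            congr 1 <;> [exact Fin.ext hdiv; exact Fin.ext hmod]
          rw [hrrdiv]
          have hσdiv : σ (((rowIdx g i : Fin n) : ℕ)/(k-1)) j = σ (g.1+1) j := by rw [hdiv]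
          rw [hσdiv, hstep]
          have hne : rr ⟨g.1+1, hg⟩ ⟨0, by omega⟩ j ≠ 0 := ne_of_gt (hrpos _ _ _)
          have hgeq : (⟨g.1, by omega⟩ : Fin t) = g := Fin.ext rfl
          have hieq' : (⟨k-1, by omega⟩ : Fin k) = i := Fin.ext hieq.symm
          rw [div_mul_cancel₀ _ hne, hgeq, hieq']
        · -- last group's last row
          have hgt : g.1 + 1 = t := by omega
          have hveq : ((rowIdx g i : Fin n) : ℕ) = t * (k-1) := by rw [hval, hgt]
          rw [hmag]
          simp only
          rw [dif_neg (show ¬(((rowIdx g i : Fin n) : ℕ) < t * (k-1)) by omega),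
            dif_pos hveq]
          have hg1 : t - 1 = g.1 := by omega
          have hgeq : (⟨t-1, by omega⟩ : Fin t) = g := Fin.ext (by simp [hg1])
          have hieq' : (⟨k-1, by omega⟩ : Fin k) = i := Fin.ext hieq.symm
          rw [hgeq, hieq', hg1]
    -- the realizing matrix
    set M : Matrix (Fin n) (Fin m) ℂ := Matrix.of (fun ρ j => ((mag ρ j : ℝ) : ℂ) * Θ ρ j)
      with hM
    have hMapp : ∀ ρ j, M ρ j = ((mag ρ j : ℝ) : ℂ) * Θ ρ j := fun ρ j => rfl
    have hMne : ∀ ρ j, M ρ j ≠ 0 := by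
      intro ρ j
      rw [hMapp]
      apply mul_ne_zero
      · exact_mod_cast ne_of_gt (hmagpos ρ j)
      · intro h
        have := hphase ρ j
        rw [h] at this
        simp at this
    have hMph : ∀ ρ j, M ρ j / ‖M ρ j‖ = Θ ρ j := by
      intro ρ j
      have habsM : ‖M ρ j‖ = mag ρ j := by
        rw [hMapp, norm_mul, hphase ρ j, mul_one, Complex.norm_real, Real.norm_eq_abs,
          abs_of_pos (hmagpos ρ j)]
      rw [habsM, hMapp, mul_comm, mul_div_assoc, div_self
        (show ((mag ρ j : ℝ) : ℂ) ≠ 0 by exact_mod_cast ne_of_gt (hmagpos ρ j)), mul_one]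
    -- group dependencies
    have hdep : ∀ (g : Fin t) (j : Fin m), ∑ i : Fin k, cc g i * M (rowIdx g i) j = 0 := by
      intro g j
      have hterm : ∀ i : Fin k, cc g i * M (rowIdx g i) j
          = ((σ g.1 j : ℝ) : ℂ) * (cc g i * (((rr g i j : ℝ) : ℂ) * Θ (rowIdx g i) j)) := by
        intro i
        rw [hMapp, hmagGroup g i j]
        push_cast
        ring
      rw [Finset.sum_congr rfl (fun i _ => hterm i), ← Finset.mul_sum, hsum g j, mul_zero]
    -- eliminated rows
    set elim : Fin t → Fin n := fun g => ⟨(g.1+1)*(k-1), hrow2 g⟩ with helim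
    have helimlast : ∀ g : Fin t, rowIdx g ⟨k-1, by omega⟩ = elim g := by
      intro g
      apply Fin.ext
      show g.1 * (k-1) + (k-1) = (g.1+1)*(k-1)
      ring
    set E : Finset (Fin n) := Finset.image elim Finset.univ with hE
    have hEcard : E.card = t := by
      rw [hE, Finset.card_image_of_injective _ ?_, Finset.card_univ, Fintype.card_fin]
      intro g g' hgg
      have : (g.1+1)*(k-1) = (g'.1+1)*(k-1) := congrArg Fin.val hgg
      have := Nat.eq_of_mul_eq_mul_right (show 0 < k-1 by omega) this
      exact Fin.ext (by omega)
    set Srows : Finset (Fin n) := Finset.univ \ E with hSrows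
    have hScard : Srows.card = n - t := by
      rw [hSrows, Finset.card_sdiff_of_subset (Finset.subset_univ E), Finset.card_univ,
        Fintype.card_fin, hEcard]
    set v : ↥Srows → (Fin m → ℂ) := fun s => M s.1 with hv
    -- every row lies in the span of the surviving rows
    have hspan : ∀ (val : ℕ) (ρ : Fin n), ρ.1 = val →
        (M ρ : Fin m → ℂ) ∈ Submodule.span ℂ (Set.range v) := by
      intro val
      induction val using Nat.strong_induction_on with
      | _ val ih =>
        intro ρ hρ
        by_cases hSmem : ρ ∈ Srows
        · exact Submodule.subset_span ⟨⟨ρ, hSmem⟩, rfl⟩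
        · have hEmem : ρ ∈ E := by
            rw [hSrows] at hSmem
            simp only [Finset.mem_sdiff, Finset.mem_univ, true_and, not_not] at hSmem
            exact hSmem
          obtain ⟨g, -, hg⟩ := Finset.mem_image.mp hEmem
          set last : Fin k := ⟨k-1, by omega⟩ with hlast
          have hrowlast : rowIdx g last = ρ := by rw [helimlast, hg]
          have hMcomb : M ρ = ∑ i ∈ Finset.univ.erase last,
              (-(cc g last)⁻¹ * cc g i) • M (rowIdx g i) := by
            funext j
            rw [Finset.sum_apply]
            have h := hdep g j
            rw [← Finset.add_sum_erase _ _ (Finset.mem_univ last), hrowlast] at h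
            have hclast : cc g last ≠ 0 := hcne g last
            have hsolve : cc g last * M ρ j = -∑ i ∈ Finset.univ.erase last,
                cc g i * M (rowIdx g i) j := by
              linear_combination h
            have h2 : M ρ j = -(cc g last)⁻¹ * ∑ i ∈ Finset.univ.erase last,
                cc g i * M (rowIdx g i) j := by
              calc M ρ j = (cc g last)⁻¹ * (cc g last * M ρ j) := by
                    rw [← mul_assoc, inv_mul_cancel₀ hclast, one_mul]
                _ = (cc g last)⁻¹ * (-∑ i ∈ Finset.univ.erase last,
                      cc g i * M (rowIdx g i) j) := by rw [hsolve]
                _ = -(cc g last)⁻¹ * ∑ i ∈ Finset.univ.erase last,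
                      cc g i * M (rowIdx g i) j := by ring
            rw [h2, Finset.mul_sum]
            apply Finset.sum_congr rfl
            intro i _
            simp only [Pi.smul_apply, smul_eq_mul]
            ring
          rw [hMcomb]
          apply Submodule.sum_mem
          intro i hi
          apply Submodule.smul_mem
          have hine : i ≠ last := (Finset.mem_erase.mp hi).1
          have hilt : i.1 < k - 1 := by
            have hik : i.1 < k := i.isLt
            have hlastval : (last : Fin k).1 = k - 1 := rfl
            rcases Nat.lt_or_ge i.1 (k-1) with h | h
            · exact h
            · exact absurd (Fin.ext (show i.1 = (last : Fin k).1 by omega)) hine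
          have hvlt : (rowIdx g i).1 < val := by
            have h1 : (rowIdx g i).1 = g.1*(k-1) + i.1 := rfl
            have h2 : ρ.1 = (g.1+1)*(k-1) := by rw [← hg]
            have h3 : g.1*(k-1) + (k-1) = (g.1+1)*(k-1) := by ring
            omega
          exact ih _ hvlt (rowIdx g i) rfl
    -- factorization and rank bound
    have hcoef : ∀ ρ : Fin n, ∃ cf : ↥Srows → ℂ, ∑ s, cf s • v s = M ρ := by
      intro ρ
      exact (Submodule.mem_span_range_iff_exists_fun (R := ℂ)).mp (hspan ρ.1 ρ rfl)
    choose CF hCF using hcoef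
    set Cmat : Matrix (Fin n) ↥Srows ℂ := Matrix.of (fun ρ s => CF ρ s) with hCmat
    set Dmat : Matrix ↥Srows (Fin m) ℂ := Matrix.of (fun s j => M s.1 j) with hDmat
    have hfact : M = Cmat * Dmat := by
      ext ρ j
      rw [Matrix.mul_apply]
      have := congrFun (hCF ρ) j
      rw [Finset.sum_apply] at this
      simp only [Pi.smul_apply, smul_eq_mul] at this
      exact this.symm
    have hrank : M.rank ≤ n - t := by
      calc M.rank = (Cmat * Dmat).rank := by rw [hfact]
        _ ≤ Dmat.rank := Matrix.rank_mul_le_right Cmat Dmat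
        _ ≤ Fintype.card ↥Srows := Matrix.rank_le_card_height Dmat
        _ = Srows.card := Fintype.card_coe Srows
        _ = n - t := hScard
    have hle : phaseRank Θ ≤ M.rank := Nat.sInf_le ⟨M, hMne, hMph, rfl⟩
    omega
end
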